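/- arXiv:2002.08545 — 4 statements merged into one kernel-verified Lean document; each statement's English description precedes it below -/
import Mathlib

section
/- Let A_1, ..., A_n be i.i.d. Bernoulli(p*) random variables with p* ∈ (0,1). For t = 0, 1, ..., n-1 define the shrinking sum M̃_t = Σ_{j=1}^{n-t} A_j, and for a constant integer v ≥ 1 define the stopping time τ̃ = min{ t ∈ {0,...,n-1} : (n - t) - M̃_t < v or t = n - 1 } (a stopping time with respect to the filtration σ(M̃_t, A_{n-t+1}, ..., A_n)). Then M̃_{τ̃} is stochastically dominated by NB(v, p*): for every integer k ≥ 0, ℙ(M̃_{τ̃} ≥ k) ≤ ℙ(N ≥ k) where N ~ NB(v, p*). -/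
open MeasureTheory ProbabilityTheory Set

namespace NBaux

/-- lower binomial cdf -/
noncomputable def Lc (p : ℝ) (m k : ℕ) : ℝ :=
  ∑ j ∈ Finset.range k, (m.choose j : ℝ) * p ^ j * (1 - p) ^ (m - j)

variable {p : ℝ}

lemma Lc_nonneg (hp : p ∈ Set.Ioo (0:ℝ) 1) (m k : ℕ) : 0 ≤ Lc p m k := by
  apply Finset.sum_nonneg
  intro j _
  have h1 : (0:ℝ) ≤ p := hp.1.le
  have h2 : (0:ℝ) ≤ 1 - p := by linarith [hp.2]
  positivity

lemma Lc_mono_k (hp : p ∈ Set.Ioo (0:ℝ) 1) (m : ℕ) {k k' : ℕ} (h : k ≤ k') :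
    Lc p m k ≤ Lc p m k' := by
  apply Finset.sum_le_sum_of_subset_of_nonneg (Finset.range_subset_range.2 h)
  intro j _ _
  have h1 : (0:ℝ) ≤ p := hp.1.le
  have h2 : (0:ℝ) ≤ 1 - p := by linarith [hp.2]
  positivity

lemma Lc_total (m : ℕ) : Lc p m (m + 1) = 1 := by
  have h : Lc p m (m+1) = (p + (1 - p)) ^ m := by
    rw [add_pow]
    apply Finset.sum_congr rfl
    intro j _
    ring
  rw [h, show p + (1 - p) = (1:ℝ) by ring, one_pow]

lemma Lc_eq_one_of_ge {m k : ℕ} (h : m + 1 ≤ k) : Lc p m k = 1 := by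
  rw [← Lc_total (p := p) m]
  unfold Lc
  symm
  apply Finset.sum_subset (Finset.range_subset_range.2 h)
  intro j _ hj
  simp only [Finset.mem_range, not_lt] at hj
  rw [Nat.choose_eq_zero_of_lt (by omega)]
  simp

lemma Lc_le_one (hp : p ∈ Set.Ioo (0:ℝ) 1) (m k : ℕ) : Lc p m k ≤ 1 := by
  rcases le_or_gt k (m+1) with h | h
  · exact (Lc_mono_k hp m h).trans_eq (Lc_total m)
  · exact (Lc_eq_one_of_ge h.le).le

private lemma pow_fix (M j : ℕ) (hj : j + 1 ≤ M) : (M - (j+1)) + 1 = M - j := by omega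

lemma Lc_rec (M : ℕ) : ∀ k, Lc p (M + 1) (k + 1) = (1 - p) * Lc p M (k + 1) + p * Lc p M k := by
  intro k
  induction k with
  | zero =>
      simp [Lc, Finset.sum_range_succ, pow_succ']
  | succ k ih =>
      have hL1 : Lc p (M+1) (k+1+1) = Lc p (M+1) (k+1)
          + ((M+1).choose (k+1) : ℝ) * p ^ (k+1) * (1-p) ^ (M+1 - (k+1)) :=
        Finset.sum_range_succ _ _
      have hL2 : Lc p M (k+1+1) = Lc p M (k+1)
          + (M.choose (k+1) : ℝ) * p ^ (k+1) * (1-p) ^ (M - (k+1)) :=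
        Finset.sum_range_succ _ _
      have hL3 : Lc p M (k+1) = Lc p M k
          + (M.choose k : ℝ) * p ^ k * (1-p) ^ (M - k) :=
        Finset.sum_range_succ _ _
      have hch : ((M+1).choose (k+1) : ℝ) = (M.choose k : ℝ) + (M.choose (k+1) : ℝ) := by
        rw [← Nat.cast_add, Nat.choose_succ_succ]
      have hpow : ((M.choose (k+1)) : ℝ) * (1-p) ^ (M - (k+1)) * (1-p)
          = (M.choose (k+1) : ℝ) * (1-p) ^ (M - k) := by
        rcases le_or_gt (k+1) M with h | h
        · rw [mul_assoc, ← pow_succ, pow_fix M k h]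
        · rw [Nat.choose_eq_zero_of_lt h]
          simp
      have hMk : M + 1 - (k + 1) = M - k := by omega
      rw [hL1, hL2, hL3, ih, hch, hMk]
      linear_combination (-(p ^ (k+1))) * hpow + (1-p) * hL3

lemma Lc_anti_succ (hp : p ∈ Set.Ioo (0:ℝ) 1) (m k : ℕ) : Lc p (m+1) k ≤ Lc p m k := by
  cases k with
  | zero => simp [Lc]
  | succ k =>
      rw [Lc_rec]
      have h1 : Lc p m k ≤ Lc p m (k+1) := Lc_mono_k hp m (by omega)
      have h2 : (0:ℝ) ≤ p := hp.1.le
      nlinarith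
lemma Lc_anti (hp : p ∈ Set.Ioo (0:ℝ) 1) (k : ℕ) {m m' : ℕ} (h : m ≤ m') :
    Lc p m' k ≤ Lc p m k := by
  induction m', h using Nat.le_induction with
  | base => exact le_refl _
  | succ m' hm ih => exact (Lc_anti_succ hp m' k).trans ih

lemma Lc_negBinom (hv : 1 ≤ v) :
    ∀ k, Lc p (k + v - 1) k
      = ∑ j ∈ Finset.range k, ((v + j - 1).choose j : ℝ) * p ^ j * (1 - p) ^ v := by
  intro k
  induction k with
  | zero => simp [Lc]
  | succ k ih =>
      have h1 : k + 1 + v - 1 = (k + v - 1) + 1 := by omega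
      rw [h1, Lc_rec, Finset.sum_range_succ, ← ih]
      have h3 : Lc p (k+v-1) (k+1) = Lc p (k+v-1) k
          + ((k+v-1).choose k : ℝ) * p ^ k * (1-p) ^ (k+v-1-k) := Finset.sum_range_succ _ _
      have h4 : k + v - 1 - k = v - 1 := by omega
      have h5 : v + k - 1 = k + v - 1 := by omega
      have h6 : (1-p) * (1-p) ^ (v-1) = (1-p) ^ v := by
        rw [← pow_succ']
        congr 1
        omega
      rw [h3, h4, h5]
      linear_combination (((k + v - 1).choose k : ℝ) * p ^ k) * h6

variable {v : ℕ}

lemma nb_term_eq (hv : 1 ≤ v) (j : ℕ) :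
    ((v + j - 1).choose j : ℝ) * p ^ j * (1 - p) ^ v
      = (((j + (v - 1)).choose (v - 1) : ℕ) : ℝ) * p ^ j * (1 - p) ^ v := by
  congr 3
  rw [show v + j - 1 = j + (v - 1) by omega]
  rw [← Nat.choose_symm (by omega : j ≤ j + (v - 1))]
  congr 1
  omega

lemma summable_nb (hv : 1 ≤ v) (hp : p ∈ Set.Ioo (0:ℝ) 1) :
    Summable (fun j : ℕ => ((v + j - 1).choose j : ℝ) * p ^ j * (1 - p) ^ v) := by
  have hr : ‖p‖ < 1 := by rw [Real.norm_eq_abs, abs_of_pos hp.1]; exact hp.2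
  have := (summable_choose_mul_geometric_of_norm_lt_one (v - 1) (r := p) hr).mul_right
    ((1 - p) ^ v)
  apply this.congr
  intro j
  rw [nb_term_eq hv j]

lemma tsum_nb (hv : 1 ≤ v) (hp : p ∈ Set.Ioo (0:ℝ) 1) :
    ∑' j : ℕ, ((v + j - 1).choose j : ℝ) * p ^ j * (1 - p) ^ v = 1 := by
  have hr : ‖p‖ < 1 := by rw [Real.norm_eq_abs, abs_of_pos hp.1]; exact hp.2
  have h1 : ∀ j : ℕ, ((v + j - 1).choose j : ℝ) * p ^ j * (1 - p) ^ v
      = (((j + (v - 1)).choose (v - 1) : ℕ) : ℝ) * p ^ j * (1 - p) ^ v := nb_term_eq hv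
  rw [tsum_congr h1, tsum_mul_right, tsum_choose_mul_geometric_of_norm_lt_one (v - 1) hr]
  have h2 : (1 - p) ^ (v - 1 + 1) = (1 - p) ^ v := by congr 1; omega
  rw [h2]
  have h3 : (1 - p) ^ v ≠ 0 := by
    apply pow_ne_zero; intro h; nlinarith [hp.2]
  field_simp

lemma tsum_nb_tail (hv : 1 ≤ v) (hp : p ∈ Set.Ioo (0:ℝ) 1) (k : ℕ) :
    ∑' i : ℕ, ((v + (k + i) - 1).choose (k + i) : ℝ) * p ^ (k + i) * (1 - p) ^ v
      = 1 - ∑ j ∈ Finset.range k, ((v + j - 1).choose j : ℝ) * p ^ j * (1 - p) ^ v := by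
  have hs := summable_nb hv hp
  have h1 := hs.sum_add_tsum_nat_add k
  have h2 : ∑' i : ℕ, ((v + (k + i) - 1).choose (k + i) : ℝ) * p ^ (k + i) * (1 - p) ^ v
      = ∑' i : ℕ, ((v + (i + k) - 1).choose (i + k) : ℝ) * p ^ (i + k) * (1 - p) ^ v := by
    apply tsum_congr; intro i; rw [add_comm k i]
  rw [h2]
  rw [tsum_nb hv hp] at h1
  linarith

lemma measure_binom {Ω : Type*} [MeasurableSpace Ω] (μ : Measure Ω) [IsProbabilityMeasure μ]
    {n : ℕ} {p : ℝ} (hp : p ∈ Set.Ioo (0:ℝ) 1) {A : Fin n → Ω → ℕ}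
    (hAm : ∀ j, Measurable (A j)) (hA01 : ∀ j ω, A j ω = 0 ∨ A j ω = 1)
    (hindep : iIndepFun A μ)
    (hber : ∀ j, μ {ω | A j ω = 1} = ENNReal.ofReal p) :
    ∀ m, m ≤ n → ∀ k,
      μ {ω | (∑ j ∈ Finset.univ.filter (fun j : Fin n => j.val < m), A j ω) < k}
        = ENNReal.ofReal (Lc p m k) := by
  intro m
  induction m with
  | zero =>
      intro _ k
      have hfil : Finset.univ.filter (fun j : Fin n => j.val < 0) = ∅ := by
        apply Finset.filter_false_of_mem; intro j _; omega
      cases k with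
      | zero =>
          simp only [hfil, Finset.sum_empty]
          have : {ω : Ω | (0:ℕ) < 0} = ∅ := by ext ω; simp
          rw [this, measure_empty]
          simp [Lc]
      | succ k =>
          simp only [hfil, Finset.sum_empty]
          have : {ω : Ω | (0:ℕ) < k + 1} = Set.univ := by ext ω; simp
          rw [this, measure_univ, Lc_eq_one_of_ge (by omega), ENNReal.ofReal_one]
  | succ m ih =>
      intro hm k
      have hmn : m < n := hm
      set jm : Fin n := ⟨m, hmn⟩ with hjm
      have hnotmem : jm ∉ Finset.univ.filter (fun j : Fin n => j.val < m) := by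
        simp [hjm]
      have hfil : Finset.univ.filter (fun j : Fin n => j.val < m + 1)
          = insert jm (Finset.univ.filter (fun j : Fin n => j.val < m)) := by
        ext j
        simp only [Finset.mem_filter, Finset.mem_univ, true_and, Finset.mem_insert,
          Fin.ext_iff, hjm]
        omega
      set S : Ω → ℕ := fun ω => ∑ j ∈ Finset.univ.filter (fun j : Fin n => j.val < m), A j ω
        with hSdef
      have hSm : Measurable S := by
        apply Finset.measurable_sum
        intro j _
        exact hAm j
      have hsum : ∀ ω, (∑ j ∈ Finset.univ.filter (fun j : Fin n => j.val < m + 1), A j ω)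
          = A jm ω + S ω := by
        intro ω
        rw [hfil, Finset.sum_insert hnotmem]
      have hset : {ω | (∑ j ∈ Finset.univ.filter (fun j : Fin n => j.val < m + 1), A j ω) < k}
          = (S ⁻¹' (Set.Iio k) ∩ A jm ⁻¹' {0}) ∪ (S ⁻¹' (Set.Iio (k - 1)) ∩ A jm ⁻¹' {1}) := by
        ext ω
        simp only [Set.mem_setOf_eq, Set.mem_union, Set.mem_inter_iff, Set.mem_preimage,
          Set.mem_Iio, Set.mem_singleton_iff, hsum ω]
        rcases hA01 jm ω with h | h <;> rw [h] <;> omega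
      have hA1set : MeasurableSet (A jm ⁻¹' {1}) := hAm jm (measurableSet_singleton 1)
      have hA0set : MeasurableSet (A jm ⁻¹' {0}) := hAm jm (measurableSet_singleton 0)
      have hIk : MeasurableSet (Set.Iio k : Set ℕ) := measurableSet_Iio
      have hIk1 : MeasurableSet (Set.Iio (k - 1) : Set ℕ) := measurableSet_Iio
      have hindepF : IndepFun S (A jm) μ := by
        have h := hindep.indepFun_finsetSum_of_notMem hAm hnotmem
        have : (∑ j ∈ Finset.univ.filter (fun j : Fin n => j.val < m), A j) = S := by
          funext ω
          rw [hSdef]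
          simp [Finset.sum_apply]
        rwa [this] at h
      have hdisj : Disjoint (S ⁻¹' (Set.Iio k) ∩ A jm ⁻¹' {0})
          (S ⁻¹' (Set.Iio (k - 1)) ∩ A jm ⁻¹' {1}) := by
        rw [Set.disjoint_left]
        rintro ω ⟨_, h0⟩ ⟨_, h1⟩
        simp only [Set.mem_preimage, Set.mem_singleton_iff] at h0 h1
        omega
      have hmeas2 : MeasurableSet (S ⁻¹' (Set.Iio (k - 1)) ∩ A jm ⁻¹' {1}) :=
        (hSm hIk1).inter hA1set
      have hber1 : μ (A jm ⁻¹' {1}) = ENNReal.ofReal p := by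
        have : A jm ⁻¹' {1} = {ω | A jm ω = 1} := by ext ω; simp
        rw [this]; exact hber jm
      have hber0 : μ (A jm ⁻¹' {0}) = ENNReal.ofReal (1 - p) := by
        have hc : A jm ⁻¹' {0} = (A jm ⁻¹' {1})ᶜ := by
          ext ω
          rcases hA01 jm ω with h | h <;> simp [h]
        rw [hc, prob_compl_eq_one_sub hA1set, hber1,
          ENNReal.ofReal_sub 1 hp.1.le, ENNReal.ofReal_one]
      rw [hset, measure_union hdisj hmeas2,
        hindepF.measure_inter_preimage_eq_mul _ _ hIk (measurableSet_singleton 0),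
        hindepF.measure_inter_preimage_eq_mul _ _ hIk1 (measurableSet_singleton 1)]
      have ihS : ∀ k' : ℕ, μ (S ⁻¹' (Set.Iio k')) = ENNReal.ofReal (Lc p m k') := by
        intro k'
        exact ih hmn.le k'
      have hq0 : (0:ℝ) ≤ 1 - p := by have := hp.2; linarith
      rw [ihS k, ihS (k - 1), hber0, hber1,
        ← ENNReal.ofReal_mul (Lc_nonneg hp m k), ← ENNReal.ofReal_mul (Lc_nonneg hp m (k - 1)),
        ← ENNReal.ofReal_add (mul_nonneg (Lc_nonneg hp m k) hq0)
          (mul_nonneg (Lc_nonneg hp m (k - 1)) hp.1.le)]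
      congr 1
      cases k with
      | zero => simp [Lc]
      | succ k =>
          rw [Lc_rec m k, show k + 1 - 1 = k from rfl]
          ring

end NBaux

/-- For i.i.d. Bernoulli(p*) variables `A_1,…,A_n`, shrinking sums
`M̃_t = Σ_{j=1}^{n-t} A_j`, and the stopping time
`τ̃ = min{t ∈ {0,…,n-1} : (n-t) - M̃_t < v or t = n-1}` (where `v ≥ 1`), the stopped
sum `M̃_{τ̃}` is stochastically dominated by `NB(v, p*)`: for every `k`,
`ℙ(M̃_{τ̃} ≥ k) ≤ Σ_{i ≥ k} C(v+i-1, i)·p*^i·(1-p*)^v`. -/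
theorem shrinking_stopped_bernoulli_sum_negBinomial_dominated
    {Ω : Type*} [MeasurableSpace Ω] (μ : Measure Ω) [IsProbabilityMeasure μ]
    (n v : ℕ) (hn : 1 ≤ n) (hv : 1 ≤ v)
    (pstar : ℝ) (hp : pstar ∈ Set.Ioo (0:ℝ) 1)
    (A : Fin n → Ω → ℕ) (hAm : ∀ j, Measurable (A j))
    (hA01 : ∀ j ω, A j ω = 0 ∨ A j ω = 1)
    (hindep : iIndepFun A μ)
    (hber : ∀ j, μ {ω | A j ω = 1} = ENNReal.ofReal pstar)
    (M : ℕ → Ω → ℕ)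
    (hM : ∀ t ω, M t ω = ∑ j ∈ Finset.univ.filter (fun j : Fin n => j.val < n - t), A j ω)
    (τ : Ω → ℕ)
    (hτ : ∀ ω, τ ω = sInf {t : ℕ | t ≤ n - 1 ∧ ((n - t) - M t ω < v ∨ t = n - 1)}) :
    ∀ k : ℕ, μ {ω | k ≤ M (τ ω) ω}
      ≤ ENNReal.ofReal (∑' i : ℕ,
          ((v + (k + i) - 1).choose (k + i) : ℝ) * pstar ^ (k + i) * (1 - pstar) ^ v) := by
  intro k
  rw [NBaux.tsum_nb_tail hv hp k]
  by_cases hk0 : k = 0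
  · subst hk0
    simp only [Finset.range_zero, Finset.sum_empty, sub_zero, ENNReal.ofReal_one]
    exact prob_le_one
  have hk1 : 1 ≤ k := Nat.one_le_iff_ne_zero.2 hk0
  -- basic facts about the partial sums
  have hzero : ∀ ω : Ω, (∑ j ∈ Finset.univ.filter (fun j : Fin n => j.val < 0), A j ω) = 0 := by
    intro ω
    rw [Finset.filter_false_of_mem (fun j _ => by omega)]
    simp
  have hstep : ∀ (m : ℕ) (ω : Ω),
      (∑ j ∈ Finset.univ.filter (fun j : Fin n => j.val < m), A j ω)
        ≤ (∑ j ∈ Finset.univ.filter (fun j : Fin n => j.val < m + 1), A j ω)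
      ∧ (∑ j ∈ Finset.univ.filter (fun j : Fin n => j.val < m + 1), A j ω)
        ≤ (∑ j ∈ Finset.univ.filter (fun j : Fin n => j.val < m), A j ω) + 1 := by
    intro m ω
    rcases lt_or_ge m n with hmn | hmn
    · have hil : (⟨m, hmn⟩ : Fin n) ∉ Finset.univ.filter (fun j : Fin n => j.val < m) := by
        simp
      have hfil : Finset.univ.filter (fun j : Fin n => j.val < m + 1)
          = insert (⟨m, hmn⟩ : Fin n) (Finset.univ.filter (fun j : Fin n => j.val < m)) := by
        ext j
        simp only [Finset.mem_filter, Finset.mem_univ, true_and, Finset.mem_insert, Fin.ext_iff]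
        omega
      rw [hfil, Finset.sum_insert hil]
      rcases hA01 ⟨m, hmn⟩ ω with h | h <;> rw [h] <;> omega
    · have hfil : Finset.univ.filter (fun j : Fin n => j.val < m + 1)
          = Finset.univ.filter (fun j : Fin n => j.val < m) := by
        ext j
        simp only [Finset.mem_filter, Finset.mem_univ, true_and]
        have := j.isLt
        omega
      rw [hfil]
      omega
  have hmono : ∀ (ω : Ω) (a b : ℕ), a ≤ b →
      (∑ j ∈ Finset.univ.filter (fun j : Fin n => j.val < a), A j ω)
        ≤ (∑ j ∈ Finset.univ.filter (fun j : Fin n => j.val < b), A j ω) := by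
    intro ω a b hab
    induction b, hab using Nat.le_induction with
    | base => exact le_refl _
    | succ b hb ihb => exact ihb.trans (hstep b ω).1
  have hdiff : ∀ (ω : Ω) (a b : ℕ), a ≤ b →
      (∑ j ∈ Finset.univ.filter (fun j : Fin n => j.val < b), A j ω)
        ≤ (∑ j ∈ Finset.univ.filter (fun j : Fin n => j.val < a), A j ω) + (b - a) := by
    intro ω a b hab
    induction b, hab using Nat.le_induction with
    | base => omega
    | succ b hb ihb =>
        have h1 := (hstep b ω).2
        omega
  have hle : ∀ (m : ℕ) (ω : Ω),
      (∑ j ∈ Finset.univ.filter (fun j : Fin n => j.val < m), A j ω) ≤ m := by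
    intro m ω
    have h1 := hdiff ω 0 m (Nat.zero_le _)
    have h2 := hzero ω
    omega
  rcases lt_or_ge n k with hnk | hkn
  · -- k > n : the event is empty
    have hempty : {ω | k ≤ M (τ ω) ω} = (∅ : Set Ω) := by
      ext ω
      simp only [Set.mem_setOf_eq, Set.mem_empty_iff_false, iff_false, not_le]
      rw [hM (τ ω) ω]
      have h1 := hle (n - τ ω) ω
      omega
    rw [hempty, measure_empty]
    exact zero_le
  -- main case : 1 ≤ k ≤ n
  set G : ℝ := ∑ j ∈ Finset.range k, ((v + j - 1).choose j : ℝ) * pstar ^ j * (1 - pstar) ^ v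
    with hG
  have hGnn : 0 ≤ G := by
    apply Finset.sum_nonneg
    intro j _
    have h1 : (0:ℝ) ≤ pstar := hp.1.le
    have h2 : (0:ℝ) ≤ 1 - pstar := by have := hp.2; linarith
    positivity
  rw [ENNReal.ofReal_sub 1 hGnn, ENNReal.ofReal_one]
  set m' : ℕ := min n (k + v - 1) with hm'
  have hm'n : m' ≤ n := min_le_left _ _
  have hm'kv : m' ≤ k + v - 1 := min_le_right _ _
  have hm'choice : m' = n ∨ m' = k + v - 1 := min_choice _ _
  have hsub : {ω | k ≤ M (τ ω) ω}
      ⊆ ({ω | (∑ j ∈ Finset.univ.filter (fun j : Fin n => j.val < m'), A j ω) < k})ᶜ := by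
    intro ω hω
    simp only [Set.mem_setOf_eq] at hω
    rw [hM (τ ω) ω] at hω
    have hmem : τ ω ∈ {t : ℕ | t ≤ n - 1 ∧ ((n - t) - M t ω < v ∨ t = n - 1)} := by
      rw [hτ ω]
      exact Nat.sInf_mem ⟨n - 1, le_refl _, Or.inr rfl⟩
    obtain ⟨ht1, ht2⟩ := hmem
    rw [hM (τ ω) ω] at ht2
    simp only [Set.mem_compl_iff, Set.mem_setOf_eq, not_lt]
    have hfail : (n - τ ω) - (∑ j ∈ Finset.univ.filter
        (fun j : Fin n => j.val < n - τ ω), A j ω) < v := by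
      rcases ht2 with h | h
      · exact h
      · have h1 := hle (n - τ ω) ω
        omega
    rcases le_or_gt (n - τ ω) m' with h | h
    · exact hω.trans (hmono ω _ _ h)
    · have hd := hdiff ω m' (n - τ ω) h.le
      have h2 := hle (n - τ ω) ω
      omega
  have hmeasS : MeasurableSet
      {ω | (∑ j ∈ Finset.univ.filter (fun j : Fin n => j.val < m'), A j ω) < k} := by
    have hSm : Measurable fun ω =>
        (∑ j ∈ Finset.univ.filter (fun j : Fin n => j.val < m'), A j ω) :=
      Finset.measurable_sum _ (fun j _ => hAm j)
    exact hSm measurableSet_Iio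
  calc μ {ω | k ≤ M (τ ω) ω}
      ≤ μ ({ω | (∑ j ∈ Finset.univ.filter (fun j : Fin n => j.val < m'), A j ω) < k})ᶜ :=
        measure_mono hsub
    _ = 1 - μ {ω | (∑ j ∈ Finset.univ.filter (fun j : Fin n => j.val < m'), A j ω) < k} :=
        prob_compl_eq_one_sub hmeasS
    _ = 1 - ENNReal.ofReal (NBaux.Lc pstar m' k) := by
        rw [NBaux.measure_binom μ hp hAm hA01 hindep hber m' hm'n k]
    _ ≤ 1 - ENNReal.ofReal G := by
        apply tsub_le_tsub_left
        apply ENNReal.ofReal_le_ofReal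
        rw [hG, ← NBaux.Lc_negBinom hv k]
        exact NBaux.Lc_anti hp k hm'kv
end

section
/- Let p* ∈ (0,1) and let (A_j, W_j)_{j=1}^n be {0,1}-valued random variables such that (a) Σ_{j=1}^n W_j = m almost surely for a fixed constant m ≤ n, and (b) for every j, conditionally on σ({A_k, W_k}_{k=j+1}^n) and the event {W_j = 1}, A_j is Bernoulli(p*). Define M_t^w = Σ_{j=1}^{n-t} W_j A_j for t = 0, ..., n-1 and, for an integer v ≥ 1, the stopping time τ^w = min{ t ∈ {0,...,n-1} : Σ_{j=1}^{n-t} W_j (1 - A_j) < v or t = n - 1 }. Then M_{τ^w}^w is stochastically dominated by NB(v, p*): ℙ(M_{τ^w}^w ≥ k) ≤ ℙ(N ≥ k) for all integers k ≥ 0, where N ~ NB(v, p*). -/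
open MeasureTheory ProbabilityTheory Set

namespace NBAux

variable {p : ℝ}

lemma summable_master (hp0 : 0 < p) (hp1 : p < 1) (v : ℕ) :
    Summable (fun s : ℕ => ((v + s).choose s : ℝ) * p ^ s) := by
  have hbig : Summable (fun s : ℕ => ((v+1:ℝ))^v * (((s:ℝ)+1) ^ v * p ^ s)) := by
    apply Summable.mul_left
    have h1 : Summable (fun s : ℕ => ((s:ℝ)) ^ v * p ^ s) := by
      simpa using summable_pow_mul_geometric_of_norm_lt_one v (r := p)
        (by rwa [Real.norm_eq_abs, abs_of_nonneg hp0.le])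
    have h2 : Summable (fun s : ℕ => (((s:ℕ)+1:ℝ)) ^ v * p ^ (s+1)) := by
      exact_mod_cast (summable_nat_add_iff 1).2 h1
    have h3 := h2.div_const p
    apply h3.congr
    intro s
    field_simp
    ring
  apply Summable.of_nonneg_of_le (fun s => by positivity) (fun s => ?_) hbig
  have hch : ((v + s).choose s : ℝ) ≤ ((v+1:ℝ))^v * ((s:ℝ)+1) ^ v := by
    have h1 : (v + s).choose s = (v + s).choose v := by
      rw [← Nat.choose_symm (Nat.le_add_right v s)]
      congr 1
      omega
    have h2 : (v + s).choose v ≤ (v + s) ^ v := Nat.choose_le_pow _ _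
    have h3 : ((v + s) : ℕ) ^ v ≤ ((v+1) * (s+1)) ^ v :=
      Nat.pow_le_pow_left (by nlinarith) v
    calc ((v + s).choose s : ℝ) ≤ (((v+1) * (s+1))^v : ℕ) := by
          exact_mod_cast h1 ▸ (h2.trans h3)
      _ = ((v+1:ℝ))^v * ((s:ℝ)+1) ^ v := by push_cast; rw [← mul_pow]
  calc ((v + s).choose s : ℝ) * p ^ s ≤ ((v+1:ℝ))^v * ((s:ℝ)+1) ^ v * p ^ s := by
        apply mul_le_mul_of_nonneg_right hch (by positivity)
    _ = _ := by ring


noncomputable def Sv (p : ℝ) (v : ℕ) : ℝ := ∑' i : ℕ, ((v + i).choose i : ℝ) * p ^ i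

lemma Sv_succ (hp0 : 0 < p) (hp1 : p < 1) (v : ℕ) :
    (1 - p) * Sv p (v+1) = Sv p v := by
  have hS1 := summable_master hp0 hp1 (v+1)
  have hSv := summable_master hp0 hp1 v
  -- summability pieces
  have hA : Summable (fun i : ℕ => ((v + 1 + i).choose i : ℝ) * p ^ (i+1)) := by
    have := hS1.mul_left p
    apply this.congr; intro i; ring
  have hB : Summable (fun i : ℕ => ((v + 1 + i).choose (i+1) : ℝ) * p ^ (i+1)) := by
    have := (summable_nat_add_iff 1).2 hSv
    apply this.congr
    intro i
    rw [show v + (i+1) = v+1+i by omega]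
  have key : Sv p (v+1) = 1 + (p * Sv p (v+1) + (Sv p v - 1)) := by
    have h0 : Sv p (v+1) = ((v+1+0).choose 0 : ℝ) * p ^ 0
        + ∑' i : ℕ, ((v + 1 + (i+1)).choose (i+1) : ℝ) * p ^ (i+1) := by
      exact (Summable.tsum_eq_zero_add hS1)
    have hsplit : ∑' i : ℕ, ((v + 1 + (i+1)).choose (i+1) : ℝ) * p ^ (i+1)
        = (∑' i : ℕ, ((v + 1 + i).choose i : ℝ) * p ^ (i+1))
          + ∑' i : ℕ, ((v + 1 + i).choose (i+1) : ℝ) * p ^ (i+1) := by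
      rw [← Summable.tsum_add hA hB]
      apply tsum_congr
      intro i
      have hps : (v + 1 + (i+1)).choose (i+1) = (v+1+i).choose i + (v+1+i).choose (i+1) := by
        have h := Nat.choose_succ_succ (v+1+i) i
        simp only [Nat.succ_eq_add_one] at h
        rw [show v+1+(i+1) = v+1+i+1 by omega, h]
      rw [hps]
      push_cast
      ring
    have e1 : ∑' i : ℕ, ((v + 1 + i).choose i : ℝ) * p ^ (i+1) = p * Sv p (v+1) := by
      rw [Sv, ← tsum_mul_left]
      apply tsum_congr; intro i; ring
    have e2 : ∑' i : ℕ, ((v + 1 + i).choose (i+1) : ℝ) * p ^ (i+1) = Sv p v - 1 := by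
      have h0' : Sv p v = ((v+0).choose 0 : ℝ) * p ^ 0
          + ∑' i : ℕ, ((v + (i+1)).choose (i+1) : ℝ) * p ^ (i+1) := Summable.tsum_eq_zero_add hSv
      have heq : ∑' i : ℕ, ((v + (i+1)).choose (i+1) : ℝ) * p ^ (i+1)
          = ∑' i : ℕ, ((v + 1 + i).choose (i+1) : ℝ) * p ^ (i+1) := by
        apply tsum_congr; intro i; rw [show v + (i+1) = v+1+i by omega]
      rw [heq] at h0'
      simp only [Nat.add_zero, Nat.choose_zero_right, Nat.cast_one, pow_zero, one_mul] at h0'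
      linarith
    rw [hsplit, e1, e2] at h0
    simp only [Nat.add_zero, Nat.choose_zero_right, Nat.cast_one, pow_zero, one_mul] at h0
    linarith
  linear_combination key

lemma Sv_eq (hp0 : 0 < p) (hp1 : p < 1) (v : ℕ) : Sv p v * (1-p)^(v+1) = 1 := by
  induction v with
  | zero =>
    have : Sv p 0 = ∑' i : ℕ, p ^ i := by
      apply tsum_congr; intro i; simp
    rw [this, tsum_geometric_of_lt_one hp0.le hp1, pow_one, inv_mul_cancel₀ (by linarith)]
  | succ v ih =>
    have := Sv_succ hp0 hp1 v
    calc Sv p (v+1) * (1-p)^(v+2) = ((1-p) * Sv p (v+1)) * (1-p)^(v+1) := by ring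
      _ = Sv p v * (1-p)^(v+1) := by rw [this]
      _ = 1 := ih

noncomputable def Gk (p : ℝ) (k v : ℕ) : ℝ :=
  ∑' i : ℕ, ((v + (k+1) + i).choose (k+1+i) : ℝ) * p ^ (k+1+i)

lemma summable_Gk (hp0 : 0 < p) (hp1 : p < 1) (k v : ℕ) :
    Summable (fun i : ℕ => ((v + (k+1) + i).choose (k+1+i) : ℝ) * p ^ (k+1+i)) := by
  have h := (summable_nat_add_iff (f := fun s : ℕ => ((v + s).choose s : ℝ) * p ^ s) (k+1)).2
    (summable_master hp0 hp1 v)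
  apply h.congr
  intro i
  congr 2
  · congr 1 <;> omega
  · omega

lemma Gk_succ (hp0 : 0 < p) (hp1 : p < 1) (k v : ℕ) :
    (1 - p) * Gk p k (v+1) = Gk p k v + ((v+k+1).choose k : ℝ) * p^(k+1) := by
  have hG1 := summable_Gk hp0 hp1 k (v+1)
  have hGv := summable_Gk hp0 hp1 k v
  have hA : Summable (fun i : ℕ => ((v + k + 1 + i).choose (k+i) : ℝ) * p ^ (k+1+i)) := by
    have h := (summable_nat_add_iff (f := fun s : ℕ => (((v+1) + s).choose s : ℝ) * p ^ s) k).2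
      (summable_master hp0 hp1 (v+1))
    have h2 := h.mul_left (p^1)
    apply h2.congr
    intro i
    rw [show i + k = k + i by omega, show v + 1 + (k+i) = v+k+1+i by omega,
      show k+1+i = 1 + (k+i) by omega, pow_add]
    ring
  have key : Gk p k (v+1) = Gk p k v + (((v+k+1).choose k : ℝ) * p^(k+1) + p * Gk p k (v+1)) := by
    have hsplit : Gk p k (v+1)
        = (∑' i : ℕ, ((v + k + 1 + i).choose (k+i) : ℝ) * p ^ (k+1+i)) + Gk p k v := by
      show (∑' i : ℕ, (((v+1) + (k+1) + i).choose (k+1+i) : ℝ) * p ^ (k+1+i)) = _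
      rw [show Gk p k v = ∑' i : ℕ, ((v + (k+1) + i).choose (k+1+i) : ℝ) * p ^ (k+1+i) from rfl,
        ← Summable.tsum_add hA hGv]
      apply tsum_congr
      intro i
      have h1 : v + 1 + (k+1) + i = (v+k+1+i)+1 := by omega
      have h2 : k+1+i = (k+i)+1 := by omega
      have h3 : v + (k+1) + i = v+k+1+i := by omega
      have hps := Nat.choose_succ_succ (v+k+1+i) (k+i)
      simp only [Nat.succ_eq_add_one] at hps
      rw [h1, h2, h3, hps]
      push_cast
      ring
    have hpeel : ∑' i : ℕ, ((v + k + 1 + i).choose (k+i) : ℝ) * p ^ (k+1+i)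
        = ((v+k+1).choose k : ℝ) * p^(k+1) + p * Gk p k (v+1) := by
      rw [Summable.tsum_eq_zero_add hA]
      simp only [Nat.add_zero]
      congr 1
      rw [Gk, ← tsum_mul_left]
      apply tsum_congr
      intro i
      rw [show v + k + 1 + (i+1) = v + 1 + (k+1) + i by omega,
        show k + (i+1) = k+1+i by omega]
      rw [show k+1+(i+1) = (k+1+i)+1 by omega]
      ring
    linarith [hsplit, hpeel]
  linear_combination key

lemma Gk_eq (hp0 : 0 < p) (hp1 : p < 1) (k v : ℕ) :
    Gk p k v * (1-p)^(v+1)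
      = p^(k+1) * ∑ z ∈ Finset.range (v+1), ((k+z).choose z : ℝ) * (1-p)^z := by
  induction v with
  | zero =>
    have h1 : Gk p k 0 = ∑' i : ℕ, p ^ (k+1+i) := by
      apply tsum_congr
      intro i
      rw [show (0 + (k+1) + i) = k+1+i by omega, Nat.choose_self]
      simp
    have h2 : ∑' i : ℕ, p ^ (k+1+i) = p^(k+1) * ∑' i : ℕ, p ^ i := by
      rw [← tsum_mul_left]
      apply tsum_congr; intro i; rw [pow_add]
    rw [h1, h2, tsum_geometric_of_lt_one hp0.le hp1]
    rw [Finset.sum_range_one, pow_one, mul_assoc, inv_mul_cancel₀ (by linarith)]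
    simp
  | succ v ih =>
    have hstep := Gk_succ hp0 hp1 k v
    have hcs : (v+k+1).choose k = (k+(v+1)).choose (v+1) := by
      have h := Nat.choose_symm (show k ≤ v+k+1 by omega)
      rw [show v+k+1-k = v+1 by omega] at h
      rw [← h]
      congr 1
      omega
    calc Gk p k (v+1) * (1-p)^(v+1+1)
        = ((1-p) * Gk p k (v+1)) * (1-p)^(v+1) := by ring
      _ = (Gk p k v + ((v+k+1).choose k : ℝ) * p^(k+1)) * (1-p)^(v+1) := by rw [hstep]
      _ = Gk p k v * (1-p)^(v+1) + ((v+k+1).choose k : ℝ) * p^(k+1) * (1-p)^(v+1) := by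
          ring
      _ = p^(k+1) * ∑ z ∈ Finset.range (v+1+1), ((k+z).choose z : ℝ) * (1-p)^z := by
          conv_rhs => rw [Finset.sum_range_succ]
          rw [ih, hcs]
          ring

/-! ### Combinatorial part -/

noncomputable def hfun (p : ℝ) : ℕ → ℕ → ℝ
  | _, 0 => 0
  | 0, _+1 => 1
  | k+1, v+1 => p * hfun p k (v+1) + (1-p) * hfun p (k+1) v

lemma hfun_nonneg (hp0 : 0 < p) (hp1 : p < 1) : ∀ k v, 0 ≤ hfun p k v := by
  intro k
  induction k with
  | zero => intro v; cases v <;> simp [hfun]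
  | succ k ih =>
    intro v
    induction v with
    | zero => simp [hfun]
    | succ v ihv =>
      rw [hfun]
      have h1 := ih (v+1)
      nlinarith

lemma pascal_sum (q : ℝ) (k v : ℕ) :
    ∑ z ∈ Finset.range (v+1), ((k+1+z).choose z : ℝ) * q^z
    = ∑ z ∈ Finset.range (v+1), ((k+z).choose z : ℝ) * q^z
      + q * ∑ z ∈ Finset.range v, ((k+1+z).choose z : ℝ) * q^z := by
  rw [Finset.sum_range_succ' (fun z => ((k+1+z).choose z : ℝ) * q^z) v,
    Finset.sum_range_succ' (fun z => ((k+z).choose z : ℝ) * q^z) v,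
    Finset.mul_sum]
  simp only [Nat.add_zero, Nat.choose_zero_right, Nat.cast_one, pow_zero, one_mul]
  have hmain : ∑ z ∈ Finset.range v, ((k+1+(z+1)).choose (z+1) : ℝ) * q^(z+1)
      = ∑ z ∈ Finset.range v, (((k+(z+1)).choose (z+1) : ℝ) * q^(z+1)
        + q * (((k+1+z).choose z : ℝ) * q^z)) := by
    apply Finset.sum_congr rfl
    intro z _
    have hps : (k+1+(z+1)).choose (z+1) = (k+1+z).choose z + (k+1+z).choose (z+1) := by
      have h := Nat.choose_succ_succ (k+1+z) z
      simp only [Nat.succ_eq_add_one] at h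
      rw [show k+1+(z+1) = k+1+z+1 by omega, h]
    rw [hps, show k+(z+1) = k+1+z by omega]
    push_cast
    ring
  rw [Finset.sum_add_distrib] at hmain
  linarith

lemma hfun_closed (hp0 : 0 < p) (hp1 : p < 1) : ∀ k v,
    hfun p (k+1) (v+1) = p^(k+1) * ∑ z ∈ Finset.range (v+1), ((k+z).choose z : ℝ) * (1-p)^z := by
  intro k
  induction k with
  | zero =>
    intro v
    induction v with
    | zero => simp [hfun]
    | succ v ihv =>
      rw [hfun, ihv]
      show p * hfun p 0 (v+1+1) + _ = _
      rw [hfun]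
      simp only [Nat.zero_add, Nat.choose_self, Nat.cast_one, one_mul, pow_one]
      conv_rhs => rw [geom_sum_succ]
      ring
  | succ k ih =>
    intro v
    induction v with
    | zero =>
      rw [hfun, ih 0, hfun]
      simp [Finset.sum_range_one]
      ring
    | succ v ihv =>
      rw [hfun, ih (v+1), ihv]
      have hps := pascal_sum (1-p) k (v+1)
      calc p * (p^(k+1) * ∑ z ∈ Finset.range (v+1+1), ((k+z).choose z : ℝ) * (1-p)^z)
          + (1-p) * (p^(k+1+1) * ∑ z ∈ Finset.range (v+1), ((k+1+z).choose z : ℝ) * (1-p)^z)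
          = p^(k+2) * (∑ z ∈ Finset.range (v+1+1), ((k+z).choose z : ℝ) * (1-p)^z
            + (1-p) * ∑ z ∈ Finset.range (v+1), ((k+1+z).choose z : ℝ) * (1-p)^z) := by
            ring
        _ = _ := by rw [← hps]

/-! ### Bad-pattern sums -/

def wtR (p : ℝ) (b : Bool) : ℝ := if b then p else 1 - p

lemma wtR_nonneg (hp0 : 0 < p) (hp1 : p < 1) (b : Bool) : 0 ≤ wtR p b := by
  cases b <;> simp [wtR] <;> linarith

def Pm (m k v : ℕ) (c : Fin m → Bool) : Prop :=
  ∃ r ≤ m, k ≤ (Finset.univ.filter fun l : Fin m => m - r ≤ l.val ∧ c l = true).card ∧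
    (Finset.univ.filter fun l : Fin m => m - r ≤ l.val ∧ c l = false).card < v

open Classical in
noncomputable def sumBad (p : ℝ) (m k v : ℕ) : ℝ :=
  ∑ c : Fin m → Bool, if Pm m k v c then ∏ l, wtR p (c l) else 0

lemma Pm_zero_k (m v : ℕ) (c : Fin m → Bool) : Pm m 0 (v+1) c := by
  refine ⟨0, Nat.zero_le m, Nat.zero_le _, ?_⟩
  have hemp : (Finset.univ.filter fun l : Fin m => m - 0 ≤ l.val ∧ c l = false) = ∅ := by
    apply Finset.filter_false_of_mem
    intro l _
    rintro ⟨h1, _⟩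
    have := l.isLt
    omega
  rw [hemp]
  simp

lemma Pm_v_zero (m k : ℕ) (c : Fin m → Bool) : ¬ Pm m k 0 c := by
  rintro ⟨r, _, _, h2⟩
  omega

lemma Pm_m_zero (k v : ℕ) (c : Fin 0 → Bool) : ¬ Pm 0 (k+1) v c := by
  rintro ⟨r, _, h1, _⟩
  have : (Finset.univ : Finset (Fin 0)) = ∅ := rfl
  simp [this] at h1

lemma count_split (m r : ℕ) (hr : r ≤ m) (c : Fin (m+1) → Bool) (bo : Bool) :
    (Finset.univ.filter fun l : Fin (m+1) => m + 1 - (r+1) ≤ l.val ∧ c l = bo).card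
    = (Finset.univ.filter fun l : Fin m => m - r ≤ l.val ∧ Fin.init c l = bo).card
      + (if c (Fin.last m) = bo then 1 else 0) := by
  classical
  rw [Finset.card_filter, Finset.card_filter, Fin.sum_univ_castSucc]
  congr 1
  · apply Finset.sum_congr rfl
    intro l _
    congr 1
    simp only [Fin.coe_castSucc, Fin.init]
    rw [show m + 1 - (r+1) = m - r by omega]
  · have hv : (Fin.last m).val = m := rfl
    rw [show m + 1 - (r+1) = m - r by omega]
    simp [hv, Nat.sub_le]

lemma Pm_succ (m k v : ℕ) (c : Fin (m+1) → Bool) :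
    Pm (m+1) (k+1) (v+1) c ↔
      (c (Fin.last m) = true ∧ Pm m k (v+1) (Fin.init c)) ∨
      (c (Fin.last m) = false ∧ Pm m (k+1) v (Fin.init c)) := by
  constructor
  · rintro ⟨r, hr, h1, h2⟩
    rcases Nat.eq_zero_or_pos r with rfl | hrpos
    · exfalso
      have : (Finset.univ.filter fun l : Fin (m+1) => m + 1 - 0 ≤ l.val ∧ c l = true) = ∅ := by
        apply Finset.filter_false_of_mem
        intro l _
        rintro ⟨h, _⟩
        omega
      rw [this] at h1
      simp at h1
    obtain ⟨r', rfl⟩ : ∃ r', r = r' + 1 := ⟨r - 1, by omega⟩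
    have hr' : r' ≤ m := by omega
    rw [count_split m r' hr' c true] at h1
    rw [count_split m r' hr' c false] at h2
    cases hlast2 : c (Fin.last m)
    all_goals rw [hlast2] at h1 h2
    all_goals simp only [Bool.false_eq_true, Bool.true_eq_false, if_true, if_false,
      reduceIte, add_zero] at h1 h2
    · right
      exact ⟨rfl, r', hr', by omega, by omega⟩
    · left
      exact ⟨rfl, r', hr', by omega, by omega⟩
  · rintro (⟨hlast, r', hr', h1, h2⟩ | ⟨hlast, r', hr', h1, h2⟩) <;>
    · refine ⟨r'+1, by omega, ?_, ?_⟩ <;>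
      · rw [count_split m r' hr' c _, hlast]
        simp only [Bool.false_eq_true, Bool.true_eq_false, if_true, if_false,
          reduceIte, add_zero]
        omega

def snb {m : ℕ} (c' : Fin m → Bool) (x : Bool) : Fin (m+1) → Bool :=
  Fin.snoc (α := fun _ => Bool) c' x

@[simp] lemma snb_castSucc {m : ℕ} (c' : Fin m → Bool) (x : Bool) (l : Fin m) :
    snb c' x (Fin.castSucc l) = c' l := by
  simp [snb]

@[simp] lemma snb_last {m : ℕ} (c' : Fin m → Bool) (x : Bool) :
    snb c' x (Fin.last m) = x := by
  simp [snb]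

@[simp] lemma snb_init {m : ℕ} (c' : Fin m → Bool) (x : Bool) :
    Fin.init (snb c' x) = c' := by
  simp [snb]

lemma sum_snoc {m : ℕ} (F : (Fin (m+1) → Bool) → ℝ) :
    ∑ c : Fin (m+1) → Bool, F c
      = ∑ c' : Fin m → Bool, (F (snb c' true) + F (snb c' false)) := by
  rw [← Equiv.sum_comp (Fin.snocEquiv fun _ => Bool) F, Fintype.sum_prod_type_right]
  apply Finset.sum_congr rfl
  intro c' _
  rw [Fintype.sum_bool]
  rfl

lemma sumAll (hp0 : 0 < p) (hp1 : p < 1) : ∀ m : ℕ,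
    ∑ c : Fin m → Bool, ∏ l, wtR p (c l) = 1 := by
  intro m
  induction m with
  | zero => simp
  | succ m ih =>
    rw [sum_snoc (fun c => ∏ l, wtR p (c l))]
    have : ∀ c' : Fin m → Bool,
        (∏ l : Fin (m+1), wtR p (snb c' true l))
          + (∏ l : Fin (m+1), wtR p (snb c' false l))
        = ∏ l : Fin m, wtR p (c' l) := by
      intro c'
      rw [Fin.prod_univ_castSucc, Fin.prod_univ_castSucc]
      simp only [snb_castSucc, snb_last]
      show (∏ l : Fin m, wtR p (c' l)) * p + (∏ l : Fin m, wtR p (c' l)) * (1-p) = _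
      ring
    rw [Finset.sum_congr rfl (fun c' _ => this c')]
    exact ih

lemma sumBad_succ (m k v : ℕ) :
    sumBad p (m+1) (k+1) (v+1) = p * sumBad p m k (v+1) + (1-p) * sumBad p m (k+1) v := by
  classical
  rw [sumBad, sum_snoc]
  rw [sumBad, sumBad, Finset.mul_sum, Finset.mul_sum, ← Finset.sum_add_distrib]
  apply Finset.sum_congr rfl
  intro c' _
  have ht : Pm (m+1) (k+1) (v+1) (snb c' true) ↔ Pm m k (v+1) c' := by
    rw [show ((snb c' true) : Fin (m+1) → Bool) = Fin.snoc c' true from rfl, Pm_succ]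
    simp [Fin.init_snoc, Fin.snoc_last]
  have hf : Pm (m+1) (k+1) (v+1) (snb c' false) ↔ Pm m (k+1) v c' := by
    rw [show ((snb c' false) : Fin (m+1) → Bool) = Fin.snoc c' false from rfl, Pm_succ]
    simp [Fin.init_snoc, Fin.snoc_last]
  have hprodT : (∏ l : Fin (m+1), wtR p (snb c' true l))
      = (∏ l : Fin m, wtR p (c' l)) * p := by
    rw [Fin.prod_univ_castSucc]
    simp only [snb_castSucc, snb_last]
    rfl
  have hprodF : (∏ l : Fin (m+1), wtR p (snb c' false l))
      = (∏ l : Fin m, wtR p (c' l)) * (1-p) := by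
    rw [Fin.prod_univ_castSucc]
    simp only [snb_castSucc, snb_last]
    rfl
  congr 1
  · by_cases h : Pm m k (v+1) c'
    · rw [if_pos (ht.2 h), if_pos h, hprodT]; ring
    · rw [if_neg (fun hh => h (ht.1 hh)), if_neg h]; ring
  · by_cases h : Pm m (k+1) v c'
    · rw [if_pos (hf.2 h), if_pos h, hprodF]; ring
    · rw [if_neg (fun hh => h (hf.1 hh)), if_neg h]; ring

lemma sumBad_zero_k (hp0 : 0 < p) (hp1 : p < 1) (m v : ℕ) : sumBad p m 0 (v+1) = 1 := by
  classical
  rw [sumBad, Finset.sum_congr rfl (fun c _ => if_pos (Pm_zero_k m v c)), sumAll hp0 hp1]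

lemma sumBad_v_zero (m k : ℕ) : sumBad p m k 0 = 0 := by
  classical
  rw [sumBad, Finset.sum_congr rfl (fun c _ => if_neg (Pm_v_zero m k c)), Finset.sum_const,
    smul_zero]

lemma sumBad_m_zero (k v : ℕ) : sumBad p 0 (k+1) v = 0 := by
  classical
  rw [sumBad, Finset.sum_congr rfl (fun c _ => if_neg (Pm_m_zero k v c)), Finset.sum_const,
    smul_zero]

lemma sumBad_le_hfun (hp0 : 0 < p) (hp1 : p < 1) : ∀ m k v, sumBad p m k v ≤ hfun p k v := by
  intro m
  induction m with
  | zero =>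
    intro k v
    match k, v with
    | 0, 0 => rw [sumBad_v_zero]; simp [hfun]
    | 0, v+1 => rw [sumBad_zero_k hp0 hp1]; simp [hfun]
    | k+1, v => rw [sumBad_m_zero]; exact hfun_nonneg hp0 hp1 _ _
  | succ m ih =>
    intro k v
    match k, v with
    | 0, 0 => rw [sumBad_v_zero]; simp [hfun]
    | 0, v+1 => rw [sumBad_zero_k hp0 hp1]; simp [hfun]
    | k+1, 0 => rw [sumBad_v_zero]; simp [hfun]
    | k+1, v+1 =>
      rw [sumBad_succ, hfun]
      have h1 := ih k (v+1)
      have h2 := ih (k+1) v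
      nlinarith

/-! ### Probabilistic part -/

section Prob

variable {Ω : Type*} [MeasurableSpace Ω] {n : ℕ} (A W : Fin n → Ω → ℕ)

/-- number of weighted indices strictly above `j` -/
def cnt (j : Fin n) (ω : Ω) : ℕ :=
  (Finset.univ.filter fun k : Fin n => j < k ∧ W k ω = 1).card

/-- total number of weighted indices -/
def tot (ω : Ω) : ℕ := (Finset.univ.filter fun k : Fin n => W k ω = 1).card

/-- the event: the first `i` weighted positions from the top have `A`-values given by `b` -/
def PreE (i : ℕ) (b : ℕ → Bool) : Set Ω :=
  {ω | ∀ j : Fin n, W j ω = 1 → cnt W j ω < i → A j ω = (if b (cnt W j ω) then 1 else 0)}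

variable {W}

lemma cnt_lt_cnt {j k : Fin n} {ω : Ω} (hjk : j < k) (hk : W k ω = 1) :
    cnt W k ω < cnt W j ω := by
  classical
  apply Finset.card_lt_card
  have hsub : (Finset.univ.filter fun x : Fin n => k < x ∧ W x ω = 1)
      ⊆ (Finset.univ.filter fun x : Fin n => j < x ∧ W x ω = 1) := by
    intro x hx
    simp only [Finset.mem_filter, Finset.mem_univ, true_and] at hx ⊢
    exact ⟨lt_trans hjk hx.1, hx.2⟩
  rw [Finset.ssubset_iff_of_subset hsub]
  refine ⟨k, ?_, ?_⟩
  · simp [hjk, hk]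
  · simp

lemma cnt_inj {j k : Fin n} {ω : Ω} (hj : W j ω = 1) (hk : W k ω = 1)
    (h : cnt W j ω = cnt W k ω) : j = k := by
  rcases lt_trichotomy j k with hlt | heq | hgt
  · exact absurd h (by have := cnt_lt_cnt hlt hk; omega)
  · exact heq
  · exact absurd h (by have := cnt_lt_cnt hgt hj; omega)

lemma cnt_lt_tot {j : Fin n} {ω : Ω} (hj : W j ω = 1) : cnt W j ω < tot W ω := by
  classical
  apply Finset.card_lt_card
  have hsub : (Finset.univ.filter fun x : Fin n => j < x ∧ W x ω = 1)
      ⊆ (Finset.univ.filter fun x : Fin n => W x ω = 1) := by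
    intro x hx
    simp only [Finset.mem_filter, Finset.mem_univ, true_and] at hx ⊢
    exact hx.2
  rw [Finset.ssubset_iff_of_subset hsub]
  exact ⟨j, by simp [hj], by simp⟩

lemma cnt_surj {ω : Ω} {i : ℕ} (hi : i < tot W ω) :
    ∃ j : Fin n, W j ω = 1 ∧ cnt W j ω = i := by
  classical
  set s := Finset.univ.filter fun k : Fin n => W k ω = 1 with hs
  have hinj : Set.InjOn (fun j => cnt W j ω) s := by
    intro a ha b hb hab
    simp only [hs, Finset.coe_filter, Set.mem_setOf_eq] at ha hb
    exact cnt_inj ha.2 hb.2 hab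
  have himg : s.image (fun j => cnt W j ω) = Finset.range (tot W ω) := by
    apply Finset.eq_of_subset_of_card_le
    · intro x hx
      simp only [Finset.mem_image] at hx
      obtain ⟨j, hj, rfl⟩ := hx
      simp only [hs, Finset.mem_filter] at hj
      exact Finset.mem_range.2 (cnt_lt_tot hj.2)
    · rw [Finset.card_range, Finset.card_image_of_injOn hinj]
      rfl
  have : i ∈ s.image (fun j => cnt W j ω) := by
    rw [himg]
    exact Finset.mem_range.2 hi
  simp only [Finset.mem_image] at this
  obtain ⟨j, hj, hji⟩ := this
  simp only [hs, Finset.mem_filter] at hj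
  exact ⟨j, hj.2, hji⟩

lemma tot_eq_sum (hW01 : ∀ j ω, W j ω = 0 ∨ W j ω = 1) (ω : Ω) :
    ∑ j, W j ω = tot W ω := by
  classical
  rw [tot, Finset.card_filter]
  apply Finset.sum_congr rfl
  intro j _
  rcases hW01 j ω with h | h <;> simp [h]

lemma card_subtype_filter (j : Fin n) (P : Fin n → Prop) [DecidablePred P] :
    (Finset.univ.filter fun k : {k : Fin n // j < k} => P k.val).card
      = (Finset.univ.filter fun k : Fin n => j < k ∧ P k).card := by
  classical
  apply Finset.card_bij (fun x _ => x.val)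
  · intro a ha
    simp only [Finset.mem_filter, Finset.mem_univ, true_and] at ha ⊢
    exact ⟨a.prop, ha⟩
  · intro a _ b _ h
    exact Subtype.ext h
  · intro x hx
    simp only [Finset.mem_filter, Finset.mem_univ, true_and] at hx
    exact ⟨⟨x, hx.1⟩, by simp [hx.2], rfl⟩

variable {A}

lemma preE_measure
    (μ : Measure Ω) [IsProbabilityMeasure μ] {m : ℕ} {p : ℝ}
    (hp0 : 0 < p) (hp1 : p < 1)
    (hAm : ∀ j, Measurable (A j)) (hWm : ∀ j, Measurable (W j))
    (hA01 : ∀ j ω, A j ω = 0 ∨ A j ω = 1)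
    (hW01 : ∀ j ω, W j ω = 0 ∨ W j ω = 1)
    (hWsum : ∀ᵐ ω ∂μ, ∑ j, W j ω = m)
    (hcond : ∀ j : Fin n, ∀ S : Set Ω,
      MeasurableSet[MeasurableSpace.comap
        (fun ω (k : {k : Fin n // j < k}) => (A k.val ω, W k.val ω)) inferInstance] S →
      μ ({ω | A j ω = 1} ∩ {ω | W j ω = 1} ∩ S)
        = ENNReal.ofReal p * μ ({ω | W j ω = 1} ∩ S)) :
    ∀ i, i ≤ m → ∀ b : ℕ → Bool,
      μ (PreE A W i b) = ENNReal.ofReal (∏ l ∈ Finset.range i, wtR p (b l)) := by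
  classical
  have hGnull : μ {ω | ¬ (∑ j, W j ω = m)} = 0 := ae_iff.1 hWsum
  have hsandwich : ∀ (Y U : Set Ω), U ⊆ Y →
      (Y ∩ {ω | ∑ j, W j ω = m} ⊆ U) → μ Y = μ U := by
    intro Y U h1 h2
    refine le_antisymm ?_ (measure_mono h1)
    calc μ Y = μ ((Y ∩ {ω | ∑ j, W j ω = m}) ∪ (Y ∩ {ω | ∑ j, W j ω = m}ᶜ)) := by
          rw [Set.inter_union_compl]
      _ ≤ μ (Y ∩ {ω | ∑ j, W j ω = m}) + μ (Y ∩ {ω | ∑ j, W j ω = m}ᶜ) :=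
          measure_union_le _ _
      _ ≤ μ U + 0 := by
          refine add_le_add (measure_mono h2) ?_
          have hc : μ ({ω | ∑ j, W j ω = m}ᶜ) = 0 := by
            rw [Set.compl_setOf]; exact hGnull
          exact le_trans (measure_mono Set.inter_subset_right) (le_of_eq hc)
      _ = μ U := add_zero _
  have hcntm : ∀ j : Fin n, Measurable (fun ω => cnt W j ω) := by
    intro j
    have hrw : (fun ω => cnt W j ω)
        = fun ω => ∑ k : Fin n, (if j < k ∧ W k ω = 1 then 1 else 0) := by
      funext ω; rw [cnt, Finset.card_filter]
    rw [hrw]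
    apply Finset.measurable_sum
    intro k _
    by_cases hjk : j < k
    · have hset : {ω : Ω | j < k ∧ W k ω = 1} = (W k) ⁻¹' {1} := by
        ext ω; simp [hjk]
      apply Measurable.ite _ measurable_const measurable_const
      rw [hset]
      exact (hWm k) (measurableSet_singleton 1)
    · have hset : {ω : Ω | j < k ∧ W k ω = 1} = ∅ := by
        ext ω; simp [hjk]
      apply Measurable.ite _ measurable_const measurable_const
      rw [hset]
      exact MeasurableSet.empty
  intro i
  induction i with
  | zero =>
    intro _ b
    have hu : PreE A W 0 b = Set.univ := by
      ext ω; simp [PreE]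
    rw [hu]
    simp
  | succ i ih =>
    intro hi b
    have hIH := ih (by omega) b
    set z : ℕ := if b i then 1 else 0 with hz
    set Sj : Fin n → Set Ω := fun j =>
      {ω | cnt W j ω = i ∧ ∀ k : Fin n, j < k → W k ω = 1 →
        A k ω = (if b (cnt W k ω) then 1 else 0)} with hSjdef
    have hSmeas : ∀ j : Fin n, MeasurableSet[MeasurableSpace.comap
        (fun ω (k : {k : Fin n // j < k}) => (A k.val ω, W k.val ω)) inferInstance] (Sj j) := by
      intro j
      refine ⟨{f : {k : Fin n // j < k} → ℕ × ℕ |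
        (Finset.univ.filter fun k : {k : Fin n // j < k} => (f k).2 = 1).card = i ∧
        ∀ k : {k : Fin n // j < k}, (f k).2 = 1 →
          (f k).1 = (if b ((Finset.univ.filter fun k' : {k' : Fin n // j < k'} =>
            (k : Fin n) < k'.val ∧ (f k').2 = 1).card) then 1 else 0)},
        (Set.to_countable _).measurableSet, ?_⟩
      ext ω
      simp only [Set.mem_preimage, Set.mem_setOf_eq, hSjdef]
      have hb1 : (Finset.univ.filter fun k : {k : Fin n // j < k} => W k.val ω = 1).card
          = cnt W j ω := card_subtype_filter j (fun k => W k ω = 1)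
      have hb2 : ∀ k : {k : Fin n // j < k},
          (Finset.univ.filter fun k' : {k' : Fin n // j < k'} =>
            (k : Fin n) < k'.val ∧ W k'.val ω = 1).card = cnt W (k : Fin n) ω := by
        intro k
        rw [card_subtype_filter j (fun x => (k : Fin n) < x ∧ W x ω = 1), cnt]
        apply congrArg
        apply Finset.filter_congr
        intro x _
        constructor
        · rintro ⟨_, h⟩; exact h
        · rintro ⟨h1, h2⟩; exact ⟨lt_trans k.prop h1, h1, h2⟩
      rw [hb1]
      simp only [hb2]
      constructor
      · rintro ⟨h1, h2⟩
        exact ⟨h1, fun k hjk hWk => h2 ⟨k, hjk⟩ hWk⟩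
      · rintro ⟨h1, h2⟩
        exact ⟨h1, fun k hWk => h2 k.val k.prop hWk⟩
    have hφm : ∀ j : Fin n, Measurable
        (fun ω (k : {k : Fin n // j < k}) => (A k.val ω, W k.val ω)) :=
      fun j => measurable_pi_lambda _ (fun k => ((hAm k.val).prodMk (hWm k.val)))
    have hSmeas' : ∀ j, MeasurableSet (Sj j) := by
      intro j
      obtain ⟨T, hT, hTeq⟩ := hSmeas j
      rw [← hTeq]
      exact (hφm j) hT
    set X : Fin n → Set Ω := fun j => {ω | W j ω = 1} ∩ Sj j with hXdef
    set D : Fin n → Set Ω := fun j => {ω | W j ω = 1 ∧ cnt W j ω = i} with hDdef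
    have hE2 : ∀ j, X j = D j ∩ PreE A W i b := by
      intro j
      ext ω
      constructor
      · rintro ⟨hW, hcnt, hall⟩
        refine ⟨⟨hW, hcnt⟩, ?_⟩
        intro k hWk hck
        have hjk : j < k := by
          rcases lt_trichotomy j k with h | h | h
          · exact h
          · exfalso; rw [h] at hcnt; omega
          · exfalso; have := cnt_lt_cnt h hW; omega
        exact hall k hjk hWk
      · rintro ⟨⟨hW, hcnt⟩, hPre⟩
        refine ⟨hW, hcnt, ?_⟩
        intro k hjk hWk
        have hck : cnt W k ω < i := by have := cnt_lt_cnt hjk hWk; omega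
        exact hPre k hWk hck
    have hE3 : ∀ j, {ω | A j ω = z} ∩ X j = PreE A W (i+1) b ∩ D j := by
      intro j
      ext ω
      constructor
      · rintro ⟨hA, hW, hcnt, hall⟩
        refine ⟨?_, hW, hcnt⟩
        intro k hWk hck
        rcases Nat.lt_succ_iff_lt_or_eq.1 hck with h | h
        · have hjk : j < k := by
            rcases lt_trichotomy j k with h1 | h1 | h1
            · exact h1
            · exfalso; rw [h1] at hcnt; omega
            · exfalso; have := cnt_lt_cnt h1 hW; omega
          exact hall k hjk hWk
        · have hkj : k = j := cnt_inj hWk hW (by rw [h, hcnt])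
          subst hkj
          rw [h]
          exact hA
      · rintro ⟨hPre, hW, hcnt⟩
        have hA : A j ω = z := by
          have h := hPre j hW (by omega)
          rwa [hcnt] at h
        refine ⟨hA, hW, hcnt, ?_⟩
        intro k hjk hWk
        have hck : cnt W k ω < i + 1 := by have := cnt_lt_cnt hjk hWk; omega
        exact hPre k hWk hck
    have hdisj' : ∀ (F : Fin n → Set Ω), (∀ j, F j ⊆ D j) →
        Pairwise (Function.onFun Disjoint F) := by
      intro F hF j j' hjj'
      rw [Function.onFun]
      apply Set.disjoint_left.2
      intro ω h1 h2
      obtain ⟨hW, hc⟩ := hF j h1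
      obtain ⟨hW', hc'⟩ := hF j' h2
      exact hjj' (cnt_inj hW hW' (by rw [hc, hc']))
    have hXmeas : ∀ j, MeasurableSet (X j) :=
      fun j => MeasurableSet.inter ((hWm j) (measurableSet_singleton 1)) (hSmeas' j)
    have hFmeas : ∀ j, MeasurableSet ({ω | A j ω = z} ∩ X j) :=
      fun j => MeasurableSet.inter ((hAm j) (measurableSet_singleton z)) (hXmeas j)
    have hXD : ∀ j, X j ⊆ D j := fun j => by
      rw [hE2 j]; exact Set.inter_subset_left
    -- step 1 : reduce to the union over j
    have hstep1 : μ (PreE A W (i+1) b) = μ (⋃ j, ({ω | A j ω = z} ∩ X j)) := by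
      have h1 : μ (PreE A W (i+1) b) = μ (⋃ j, PreE A W (i+1) b ∩ D j) := by
        apply hsandwich
        · exact Set.iUnion_subset (fun j => Set.inter_subset_left)
        · rintro ω ⟨h1, h2⟩
          have htot : tot W ω = m := by rw [← tot_eq_sum hW01 ω]; exact h2
          obtain ⟨j, hWj, hcj⟩ := cnt_surj (W := W) (ω := ω) (i := i) (by omega)
          exact Set.mem_iUnion.2 ⟨j, h1, hWj, hcj⟩
      rw [h1]
      congr 1
      apply Set.iUnion_congr
      intro j
      exact (hE3 j).symm
    have hsum1 : μ (⋃ j, ({ω | A j ω = z} ∩ X j))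
        = ∑ j : Fin n, μ ({ω | A j ω = z} ∩ X j) := by
      rw [measure_iUnion (hdisj' _ (fun j => Set.Subset.trans Set.inter_subset_right (hXD j)))
        hFmeas, tsum_fintype]
    have hcondj : ∀ j, μ ({ω | A j ω = z} ∩ X j)
        = ENNReal.ofReal (wtR p (b i)) * μ (X j) := by
      intro j
      have hc := hcond j (Sj j) (hSmeas j)
      rw [Set.inter_assoc] at hc
      cases hbi : b i
      · have hz0 : z = 0 := by rw [hz, hbi]; simp
        have hofalse : {ω | A j ω = z} ∩ X j = X j \ ({ω | A j ω = 1} ∩ X j) := by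
          ext ω
          constructor
          · rintro ⟨hA0, hX⟩
            refine ⟨hX, ?_⟩
            rintro ⟨hA1, _⟩
            rw [Set.mem_setOf_eq] at hA0 hA1
            rw [hz0] at hA0
            omega
          · rintro ⟨hX, hn⟩
            rcases hA01 j ω with h | h
            · exact ⟨by rw [Set.mem_setOf_eq, h, hz0], hX⟩
            · exact absurd ⟨h, hX⟩ hn
        have hwt : wtR p (false : Bool) = 1 - p := rfl
        rw [hofalse, measure_diff Set.inter_subset_right
          (show NullMeasurableSet ({ω | A j ω = 1} ∩ X j) μ from
            (((hAm j) (measurableSet_singleton 1)).inter (hXmeas j)).nullMeasurableSet)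
          (measure_ne_top μ _), hc, hwt]
        have hkey : ENNReal.ofReal (1 - p) * μ (X j) + ENNReal.ofReal p * μ (X j) = μ (X j) := by
          rw [← add_mul, ← ENNReal.ofReal_add (by linarith) (by linarith)]
          norm_num
        exact ENNReal.sub_eq_of_eq_add
          (ENNReal.mul_ne_top ENNReal.ofReal_ne_top (measure_ne_top μ _)) hkey.symm
      · have hz1 : z = 1 := by rw [hz, hbi]; simp
        have hwt : wtR p (true : Bool) = p := rfl
        rw [hz1, hwt]
        exact hc
    have hsum2 : μ (⋃ j, X j) = ∑ j : Fin n, μ (X j) := by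
      rw [measure_iUnion (hdisj' _ hXD) hXmeas, tsum_fintype]
    have hU2 : μ (⋃ j, X j) = μ (PreE A W i b) := by
      refine (hsandwich (PreE A W i b) (⋃ j, X j) ?_ ?_).symm
      · exact Set.iUnion_subset (fun j => by rw [hE2 j]; exact Set.inter_subset_right)
      · rintro ω ⟨h1, h2⟩
        have htot : tot W ω = m := by rw [← tot_eq_sum hW01 ω]; exact h2
        obtain ⟨j, hWj, hcj⟩ := cnt_surj (W := W) (ω := ω) (i := i) (by omega)
        refine Set.mem_iUnion.2 ⟨j, ?_⟩
        rw [hE2 j]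
        exact ⟨⟨hWj, hcj⟩, h1⟩
    calc μ (PreE A W (i+1) b)
        = ∑ j : Fin n, μ ({ω | A j ω = z} ∩ X j) := by rw [hstep1, hsum1]
      _ = ∑ j : Fin n, ENNReal.ofReal (wtR p (b i)) * μ (X j) :=
          Finset.sum_congr rfl (fun j _ => hcondj j)
      _ = ENNReal.ofReal (wtR p (b i)) * ∑ j : Fin n, μ (X j) := by
          rw [Finset.mul_sum]
      _ = ENNReal.ofReal (wtR p (b i)) * μ (PreE A W i b) := by rw [← hsum2, hU2]
      _ = ENNReal.ofReal (wtR p (b i)) * ENNReal.ofReal (∏ l ∈ Finset.range i, wtR p (b l)) := by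
          rw [hIH]
      _ = ENNReal.ofReal (∏ l ∈ Finset.range (i+1), wtR p (b l)) := by
          rw [← ENNReal.ofReal_mul (wtR_nonneg hp0 hp1 (b i))]
          congr 1
          rw [Finset.prod_range_succ]
          ring

lemma sum_WA (hA01 : ∀ j ω, A j ω = 0 ∨ A j ω = 1) (hW01 : ∀ j ω, W j ω = 0 ∨ W j ω = 1)
    (ω : Ω) (s : ℕ) :
    ∑ j ∈ Finset.univ.filter (fun j : Fin n => j.val < s), W j ω * A j ω
      = (Finset.univ.filter fun j : Fin n => j.val < s ∧ W j ω = 1 ∧ A j ω = 1).card := by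
  classical
  rw [Finset.sum_filter, Finset.card_filter]
  apply Finset.sum_congr rfl
  intro j _
  rcases hA01 j ω with h1 | h1 <;> rcases hW01 j ω with h2 | h2 <;>
    by_cases h3 : j.val < s <;> simp [h1, h2, h3]

lemma sum_WnA (hA01 : ∀ j ω, A j ω = 0 ∨ A j ω = 1) (hW01 : ∀ j ω, W j ω = 0 ∨ W j ω = 1)
    (ω : Ω) (s : ℕ) :
    ∑ j ∈ Finset.univ.filter (fun j : Fin n => j.val < s), W j ω * (1 - A j ω)
      = (Finset.univ.filter fun j : Fin n => j.val < s ∧ W j ω = 1 ∧ A j ω = 0).card := by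
  classical
  rw [Finset.sum_filter, Finset.card_filter]
  apply Finset.sum_congr rfl
  intro j _
  rcases hA01 j ω with h1 | h1 <;> rcases hW01 j ω with h2 | h2 <;>
    by_cases h3 : j.val < s <;> simp [h1, h2, h3]

/-- the extension of a finite pattern to `ℕ → Bool` -/
def extb (m : ℕ) (c : Fin m → Bool) : ℕ → Bool :=
  fun l => if h : l < m then c ⟨l, h⟩ else false

end Prob

end NBAux

open NBAux in
/-- Weighted version. Let `(A_j, W_j)` be binary with `Σ_j W_j = m` a.s.,
and for each `j`, conditionally on `σ({A_k, W_k}_{k>j})` and `{W_j = 1}`, let `A_j`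
be Bernoulli(p*). With `M^w_t = Σ_{j=1}^{n-t} W_j A_j` and the stopping time
`τ^w = min{t : Σ_{j=1}^{n-t} W_j(1-A_j) < v or t = n-1}`, the stopped sum
`M^w_{τ^w}` is stochastically dominated by `NB(v, p*)`. -/
theorem weighted_stopped_sum_negBinomial_dominated
    {Ω : Type*} [MeasurableSpace Ω] (μ : Measure Ω) [IsProbabilityMeasure μ]
    (n v m : ℕ) (hn : 1 ≤ n) (hv : 1 ≤ v) (hm : m ≤ n)
    (pstar : ℝ) (hp : pstar ∈ Set.Ioo (0:ℝ) 1)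
    (A W : Fin n → Ω → ℕ) (hAm : ∀ j, Measurable (A j)) (hWm : ∀ j, Measurable (W j))
    (hA01 : ∀ j ω, A j ω = 0 ∨ A j ω = 1)
    (hW01 : ∀ j ω, W j ω = 0 ∨ W j ω = 1)
    (hWsum : ∀ᵐ ω ∂μ, ∑ j, W j ω = m)
    (hcond : ∀ j : Fin n, ∀ S : Set Ω,
      MeasurableSet[MeasurableSpace.comap
        (fun ω (k : {k : Fin n // j < k}) => (A k.val ω, W k.val ω)) inferInstance] S →
      μ ({ω | A j ω = 1} ∩ {ω | W j ω = 1} ∩ S)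
        = ENNReal.ofReal pstar * μ ({ω | W j ω = 1} ∩ S))
    (M : ℕ → Ω → ℕ)
    (hM : ∀ t ω, M t ω =
      ∑ j ∈ Finset.univ.filter (fun j : Fin n => j.val < n - t), W j ω * A j ω)
    (τ : Ω → ℕ)
    (hτ : ∀ ω, τ ω = sInf {t : ℕ | t ≤ n - 1 ∧
      ((∑ j ∈ Finset.univ.filter (fun j : Fin n => j.val < n - t),
          W j ω * (1 - A j ω)) < v ∨ t = n - 1)}) :
    ∀ k : ℕ, μ {ω | k ≤ M (τ ω) ω}
      ≤ ENNReal.ofReal (∑' i : ℕ,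
          ((v + (k + i) - 1).choose (k + i) : ℝ) * pstar ^ (k + i) * (1 - pstar) ^ v) := by
  classical
  obtain ⟨hp0, hp1⟩ := hp
  obtain ⟨v', rfl⟩ : ∃ v', v = v' + 1 := ⟨v - 1, by omega⟩
  intro k
  have hRHS : ∀ k : ℕ, ∑' i : ℕ,
      ((v'+1 + (k + i) - 1).choose (k + i) : ℝ) * pstar ^ (k + i) * (1 - pstar) ^ (v'+1)
      = (∑' i : ℕ, ((v' + (k + i)).choose (k + i) : ℝ) * pstar ^ (k + i))
        * (1 - pstar)^(v'+1) := by
    intro k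
    rw [← tsum_mul_right]
    apply tsum_congr
    intro i
    rw [show v'+1 + (k + i) - 1 = v' + (k+i) by omega]
  rcases Nat.eq_zero_or_pos k with rfl | hkpos
  · -- k = 0 : the tail sum is 1
    have h1 : (∑' i : ℕ, ((v' + (0 + i)).choose (0 + i) : ℝ) * pstar ^ (0 + i))
        = Sv pstar v' := by
      apply tsum_congr
      intro i
      rw [Nat.zero_add]
    calc μ {ω | 0 ≤ M (τ ω) ω} ≤ 1 := prob_le_one
      _ = ENNReal.ofReal (∑' i : ℕ,
          ((v'+1 + (0 + i) - 1).choose (0 + i) : ℝ) * pstar ^ (0 + i)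
            * (1 - pstar) ^ (v'+1)) := by
          rw [hRHS 0, h1, Sv_eq hp0 hp1 v', ENNReal.ofReal_one]
  obtain ⟨k', rfl⟩ : ∃ k', k = k' + 1 := ⟨k - 1, by omega⟩
  -- identify the RHS with hfun
  have hid : ENNReal.ofReal (∑' i : ℕ,
      ((v'+1 + (k'+1 + i) - 1).choose (k'+1 + i) : ℝ) * pstar ^ (k'+1 + i)
        * (1 - pstar) ^ (v'+1)) = ENNReal.ofReal (hfun pstar (k'+1) (v'+1)) := by
    congr 1
    rw [hRHS (k'+1)]
    have hGkeq : (∑' i : ℕ, ((v' + (k'+1 + i)).choose (k'+1 + i) : ℝ) * pstar ^ (k'+1+i))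
        = Gk pstar k' v' := by
      apply tsum_congr
      intro i
      rw [show v' + (k'+1+i) = v' + (k'+1) + i by omega]
    rw [hGkeq, hfun_closed hp0 hp1 k' v', ← Gk_eq hp0 hp1 k' v']
  rw [hid]
  -- the main estimate
  set T : Set Ω := {ω | k'+1 ≤ M (τ ω) ω} with hT
  set G : Set Ω := {ω | ∑ j, W j ω = m} with hG
  have hGnull : μ Gᶜ = 0 := by
    rw [hG, Set.compl_setOf]
    exact ae_iff.1 hWsum
  -- the pointwise inclusion
  have hincl : T ∩ G ⊆ ⋃ c : Fin m → Bool,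
      (if Pm m (k'+1) (v'+1) c then PreE A W m (extb m c) else ∅) := by
    rintro ω ⟨hTm, hGm⟩
    have htot : tot W ω = m := by rw [← tot_eq_sum hW01 ω]; exact hGm
    -- stopping time facts
    have hτmem : τ ω ≤ n - 1 ∧
        ((∑ j ∈ Finset.univ.filter (fun j : Fin n => j.val < n - τ ω),
          W j ω * (1 - A j ω)) < v'+1 ∨ τ ω = n - 1) := by
      have : τ ω ∈ {t : ℕ | t ≤ n - 1 ∧
          ((∑ j ∈ Finset.univ.filter (fun j : Fin n => j.val < n - t),
            W j ω * (1 - A j ω)) < v'+1 ∨ t = n - 1)} := by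
        rw [hτ ω]
        exact Nat.sInf_mem ⟨n-1, le_rfl, Or.inr rfl⟩
      exact this
    obtain ⟨ht1, ht2⟩ := hτmem
    set s : ℕ := n - τ ω with hs
    have hs1 : 1 ≤ s := by omega
    have hMk : k'+1 ≤ ∑ j ∈ Finset.univ.filter (fun j : Fin n => j.val < s),
        W j ω * A j ω := by
      have := hTm
      rw [hT, Set.mem_setOf_eq, hM (τ ω) ω] at this
      exact this
    have hFs : (∑ j ∈ Finset.univ.filter (fun j : Fin n => j.val < s),
        W j ω * (1 - A j ω)) < v'+1 := by
      rcases ht2 with h | h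
      · exact h
      · by_contra hge
        push_neg at hge
        have hseq : s = 1 := by omega
        have hfil : (Finset.univ.filter fun j : Fin n => j.val < 1) = {⟨0, hn⟩} := by
          ext j
          have h0 : ((⟨0, hn⟩ : Fin n)).val = 0 := rfl
          simp only [Finset.mem_filter, Finset.mem_univ, true_and, Finset.mem_singleton,
            Fin.ext_iff, h0]
          omega
        rw [hseq, hfil, Finset.sum_singleton] at hge hMk
        rcases hA01 ⟨0,hn⟩ ω with h0 | h0 <;> rcases hW01 ⟨0,hn⟩ ω with h1 | h1 <;>
          rw [h0, h1] at hge hMk <;> omega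
    -- counting setup
    set r : ℕ := ((Finset.univ.filter fun j : Fin n => W j ω = 1).filter
      fun j => j.val < s).card with hr
    have hsplitr : r + ((Finset.univ.filter fun j : Fin n => W j ω = 1).filter
        fun j => ¬ j.val < s).card = m := by
      rw [hr, Finset.card_filter_add_card_filter_not, ← htot]
      rfl
    have hrm : r ≤ m := by omega
    have hK4 : ∀ j : Fin n, W j ω = 1 → (j.val < s ↔ m - r ≤ cnt W j ω) := by
      intro j hWj
      constructor
      · intro hjs
        have hsub : ((Finset.univ.filter fun x : Fin n => W x ω = 1).filter
            fun x => ¬ x.val < s)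
            ⊆ (Finset.univ.filter fun x : Fin n => j < x ∧ W x ω = 1) := by
          intro x hx
          simp only [Finset.mem_filter, Finset.mem_univ, true_and] at hx ⊢
          refine ⟨?_, hx.1⟩
          rw [Fin.lt_def]
          omega
        have hcard := Finset.card_le_card hsub
        rw [show (Finset.univ.filter fun x : Fin n => j < x ∧ W x ω = 1).card
          = cnt W j ω from rfl] at hcard
        omega
      · intro hge
        by_contra hns
        have hj_mem : j ∈ ((Finset.univ.filter fun x : Fin n => W x ω = 1).filter
            fun x => ¬ x.val < s) := by
          simp only [Finset.mem_filter, Finset.mem_univ, true_and]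
          exact ⟨hWj, hns⟩
        have hsub : (Finset.univ.filter fun x : Fin n => j < x ∧ W x ω = 1)
            ⊆ (((Finset.univ.filter fun x : Fin n => W x ω = 1).filter
              fun x => ¬ x.val < s).erase j) := by
          intro x hx
          simp only [Finset.mem_filter, Finset.mem_univ, true_and,
            Finset.mem_erase] at hx ⊢
          have hxv : j.val < x.val := hx.1
          refine ⟨?_, hx.2, ?_⟩
          · intro hxj; rw [hxj] at hxv; omega
          · omega
        have hcard := Finset.card_le_card hsub
        rw [Finset.card_erase_of_mem hj_mem] at hcard
        have hpos : 1 ≤ ((Finset.univ.filter fun x : Fin n => W x ω = 1).filter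
            fun x => ¬ x.val < s).card := Finset.card_pos.2 ⟨j, hj_mem⟩
        rw [show (Finset.univ.filter fun x : Fin n => j < x ∧ W x ω = 1).card
          = cnt W j ω from rfl] at hcard
        omega
    -- the pattern
    set c : Fin m → Bool := fun l =>
      decide (∃ j : Fin n, W j ω = 1 ∧ cnt W j ω = l.val ∧ A j ω = 1) with hcdef
    refine Set.mem_iUnion.2 ⟨c, ?_⟩
    have hPm : Pm m (k'+1) (v'+1) c := by
      refine ⟨r, hrm, ?_, ?_⟩
      · -- true count
        have hbij : (Finset.univ.filter fun j : Fin n =>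
              j.val < s ∧ W j ω = 1 ∧ A j ω = 1).card
            = (Finset.univ.filter fun l : Fin m => m - r ≤ l.val ∧ c l = true).card := by
          apply Finset.card_bij (fun j hj => (⟨cnt W j ω, by
            have hj' := Finset.mem_filter.1 hj
            have := cnt_lt_tot hj'.2.2.1
            omega⟩ : Fin m))
          · intro j hj
            have hj' := (Finset.mem_filter.1 hj).2
            simp only [Finset.mem_filter, Finset.mem_univ, true_and]
            refine ⟨(hK4 j hj'.2.1).1 hj'.1, ?_⟩
            rw [hcdef]
            simp only [decide_eq_true_eq]
            exact ⟨j, hj'.2.1, rfl, hj'.2.2⟩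
          · intro a ha b hb hab
            have ha' := (Finset.mem_filter.1 ha).2
            have hb' := (Finset.mem_filter.1 hb).2
            have : cnt W a ω = cnt W b ω := by
              have := congrArg Fin.val hab
              simpa using this
            exact cnt_inj ha'.2.1 hb'.2.1 this
          · intro l hl
            have hl' := (Finset.mem_filter.1 hl).2
            obtain ⟨hge, hct⟩ := hl'
            rw [hcdef] at hct
            simp only [decide_eq_true_eq] at hct
            obtain ⟨j, hWj, hcj, hAj⟩ := hct
            refine ⟨j, ?_, ?_⟩
            · simp only [Finset.mem_filter, Finset.mem_univ, true_and]
              exact ⟨(hK4 j hWj).2 (by omega), hWj, hAj⟩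
            · exact Fin.ext (by simpa using hcj)
        rw [sum_WA hA01 hW01 ω s] at hMk
        omega
      · -- false count
        have hbij : (Finset.univ.filter fun j : Fin n =>
              j.val < s ∧ W j ω = 1 ∧ A j ω = 0).card
            = (Finset.univ.filter fun l : Fin m => m - r ≤ l.val ∧ c l = false).card := by
          apply Finset.card_bij (fun j hj => (⟨cnt W j ω, by
            have hj' := Finset.mem_filter.1 hj
            have := cnt_lt_tot hj'.2.2.1
            omega⟩ : Fin m))
          · intro j hj
            have hj' := (Finset.mem_filter.1 hj).2
            simp only [Finset.mem_filter, Finset.mem_univ, true_and]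
            refine ⟨(hK4 j hj'.2.1).1 hj'.1, ?_⟩
            rw [hcdef]
            simp only [decide_eq_false_iff_not]
            rintro ⟨j2, hW2, hc2, hA2⟩
            have : j2 = j := cnt_inj hW2 hj'.2.1 (by simpa using hc2)
            rw [this] at hA2
            omega
          · intro a ha b hb hab
            have ha' := (Finset.mem_filter.1 ha).2
            have hb' := (Finset.mem_filter.1 hb).2
            have : cnt W a ω = cnt W b ω := by
              have := congrArg Fin.val hab
              simpa using this
            exact cnt_inj ha'.2.1 hb'.2.1 this
          · intro l hl
            have hl' := (Finset.mem_filter.1 hl).2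
            obtain ⟨hge, hct⟩ := hl'
            obtain ⟨j, hWj, hcj⟩ := cnt_surj (W := W) (ω := ω) (i := l.val)
              (by rw [htot]; exact l.isLt)
            have hA0 : A j ω = 0 := by
              rcases hA01 j ω with h | h
              · exact h
              · exfalso
                have : c l = true := by
                  rw [hcdef]
                  simp only [decide_eq_true_eq]
                  exact ⟨j, hWj, hcj, h⟩
                rw [this] at hct
                exact Bool.noConfusion hct
            refine ⟨j, ?_, ?_⟩
            · simp only [Finset.mem_filter, Finset.mem_univ, true_and]
              exact ⟨(hK4 j hWj).2 (by omega), hWj, hA0⟩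
            · exact Fin.ext (by simpa using hcj)
        rw [sum_WnA hA01 hW01 ω s] at hFs
        omega
    rw [if_pos hPm]
    -- membership in PreE
    intro j hWj hcj
    have hlt : cnt W j ω < m := hcj
    have hext : extb m c (cnt W j ω) = c ⟨cnt W j ω, hlt⟩ := by
      rw [extb, dif_pos hlt]
    rw [hext]
    rcases hA01 j ω with h0 | h1
    · have hcf : c ⟨cnt W j ω, hlt⟩ = false := by
        rw [hcdef]
        simp only [decide_eq_false_iff_not]
        rintro ⟨j2, hW2, hc2, hA2⟩
        have : j2 = j := cnt_inj hW2 hWj (by simpa using hc2)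
        rw [this] at hA2
        omega
      rw [hcf, h0]
      rfl
    · have hct : c ⟨cnt W j ω, hlt⟩ = true := by
        rw [hcdef]
        simp only [decide_eq_true_eq]
        exact ⟨j, hWj, rfl, h1⟩
      rw [hct, h1]
      rfl
  -- measure computation
  have hchain : μ T ≤ μ (⋃ c : Fin m → Bool,
      (if Pm m (k'+1) (v'+1) c then PreE A W m (extb m c) else ∅)) := by
    calc μ T = μ ((T ∩ G) ∪ (T ∩ Gᶜ)) := by rw [Set.inter_union_compl]
      _ ≤ μ (T ∩ G) + μ (T ∩ Gᶜ) := measure_union_le _ _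
      _ ≤ μ (⋃ c : Fin m → Bool,
            (if Pm m (k'+1) (v'+1) c then PreE A W m (extb m c) else ∅)) + 0 :=
          add_le_add (measure_mono hincl)
            (le_trans (measure_mono Set.inter_subset_right) (le_of_eq hGnull))
      _ = _ := add_zero _
  refine le_trans hchain ?_
  calc μ (⋃ c : Fin m → Bool, (if Pm m (k'+1) (v'+1) c then PreE A W m (extb m c) else ∅))
      ≤ ∑' c : Fin m → Bool, μ (if Pm m (k'+1) (v'+1) c then PreE A W m (extb m c) else ∅) :=
        measure_iUnion_le _
    _ = ∑ c : Fin m → Bool, μ (if Pm m (k'+1) (v'+1) c then PreE A W m (extb m c) else ∅) :=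
        tsum_fintype _
    _ = ∑ c : Fin m → Bool, ENNReal.ofReal
          (if Pm m (k'+1) (v'+1) c then ∏ l : Fin m, wtR pstar (c l) else 0) := by
        apply Finset.sum_congr rfl
        intro c _
        by_cases hPc : Pm m (k'+1) (v'+1) c
        · rw [if_pos hPc, if_pos hPc]
          rw [preE_measure μ hp0 hp1 hAm hWm hA01 hW01 hWsum hcond m le_rfl (extb m c)]
          congr 1
          rw [← Fin.prod_univ_eq_prod_range (fun l => wtR pstar (extb m c l)) m]
          apply Finset.prod_congr rfl
          intro l _
          congr 1
          rw [extb, dif_pos l.isLt]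
        · rw [if_neg hPc, if_neg hPc, measure_empty, ENNReal.ofReal_zero]
    _ = ENNReal.ofReal (sumBad pstar m (k'+1) (v'+1)) := by
        rw [sumBad, ENNReal.ofReal_sum_of_nonneg]
        intro c _
        by_cases hPc : Pm m (k'+1) (v'+1) c
        · rw [if_pos hPc]
          exact Finset.prod_nonneg (fun l _ => wtR_nonneg hp0 hp1 _)
        · rw [if_neg hPc]
    _ ≤ ENNReal.ofReal (hfun pstar (k'+1) (v'+1)) :=
        ENNReal.ofReal_le_ofReal (sumBad_le_hfun hp0 hp1 m (k'+1) (v'+1))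
end

section
/- Let p* ∈ (0,1) and let (A_j, W_j)_{j=1}^n be {0,1}-valued random variables such that Σ_{j=1}^n W_j = m almost surely for a fixed m ≤ n, and for every j, conditionally on σ({A_k, W_k}_{k=j+1}^n) and the event {W_j = 1}, A_j is Bernoulli(p*). Then the weighted sum Σ_{j=1}^n W_j A_j has the same distribution as Σ_{l=1}^m B_l, where B_1, ..., B_m are i.i.d. Bernoulli(p*); in particular Σ_{j=1}^n W_j A_j follows a Binomial(m, p*) distribution. -/
open MeasureTheory ProbabilityTheory Set


open MeasureTheory ProbabilityTheory Set

namespace WSB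

variable {Ω : Type*}

def prefW (n : ℕ) (W : Fin n → Ω → ℕ) (j : ℕ) (ω : Ω) : ℕ :=
  ∑ k ∈ Finset.univ.filter (fun k : Fin n => (k : ℕ) < j), W k ω

def sufW (n : ℕ) (W : Fin n → Ω → ℕ) (j : ℕ) (ω : Ω) : ℕ :=
  ∑ k ∈ Finset.univ.filter (fun k : Fin n => j ≤ (k : ℕ)), W k ω

def sufWA (n : ℕ) (A W : Fin n → Ω → ℕ) (j : ℕ) (ω : Ω) : ℕ :=
  ∑ k ∈ Finset.univ.filter (fun k : Fin n => j ≤ (k : ℕ)), W k ω * A k ω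

lemma prefW_zero (n : ℕ) (W : Fin n → Ω → ℕ) (ω : Ω) : prefW n W 0 ω = 0 := by
  simp [prefW]

lemma sufWA_zero (n : ℕ) (A W : Fin n → Ω → ℕ) (ω : Ω) :
    sufWA n A W 0 ω = ∑ k, W k ω * A k ω := by
  simp [sufWA]

lemma sufWA_top (n : ℕ) (A W : Fin n → Ω → ℕ) (ω : Ω) : sufWA n A W n ω = 0 := by
  unfold sufWA
  rw [Finset.sum_eq_zero_iff.mpr]
  intro k hk
  simp at hk
  omega

lemma total_split (n : ℕ) (W : Fin n → Ω → ℕ) (j : ℕ) (ω : Ω) :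
    ∑ k, W k ω = prefW n W j ω + sufW n W j ω := by
  unfold prefW sufW
  rw [← Finset.sum_filter_add_sum_filter_not Finset.univ (fun k : Fin n => (k : ℕ) < j)]
  congr 2
  ext k
  simp only [Finset.mem_filter, Finset.mem_univ, true_and, not_lt]

lemma filter_succ_insert (n j : ℕ) (hj : j < n) :
    Finset.univ.filter (fun k : Fin n => (k : ℕ) < j + 1)
      = insert ⟨j, hj⟩ (Finset.univ.filter (fun k : Fin n => (k : ℕ) < j)) := by
  ext k
  simp [Fin.ext_iff]
  omega

lemma filter_ge_insert (n j : ℕ) (hj : j < n) :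
    Finset.univ.filter (fun k : Fin n => j ≤ (k : ℕ))
      = insert ⟨j, hj⟩ (Finset.univ.filter (fun k : Fin n => j + 1 ≤ (k : ℕ))) := by
  ext k
  simp [Fin.ext_iff]
  omega

lemma prefW_succ (n : ℕ) (W : Fin n → Ω → ℕ) (j : ℕ) (hj : j < n) (ω : Ω) :
    prefW n W (j + 1) ω = prefW n W j ω + W ⟨j, hj⟩ ω := by
  unfold prefW
  rw [filter_succ_insert n j hj, Finset.sum_insert (by simp)]
  ring

lemma sufW_succ (n : ℕ) (W : Fin n → Ω → ℕ) (j : ℕ) (hj : j < n) (ω : Ω) :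
    sufW n W j ω = W ⟨j, hj⟩ ω + sufW n W (j + 1) ω := by
  unfold sufW
  rw [filter_ge_insert n j hj, Finset.sum_insert (by simp)]

lemma sufWA_succ (n : ℕ) (A W : Fin n → Ω → ℕ) (j : ℕ) (hj : j < n) (ω : Ω) :
    sufWA n A W j ω = W ⟨j, hj⟩ ω * A ⟨j, hj⟩ ω + sufWA n A W (j + 1) ω := by
  unfold sufWA
  rw [filter_ge_insert n j hj, Finset.sum_insert (by simp)]

section Meas
variable [MeasurableSpace Ω]

lemma meas_prefW (n : ℕ) (W : Fin n → Ω → ℕ) (hW : ∀ j, Measurable (W j)) (j : ℕ) :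
    Measurable (prefW n W j) :=
  Finset.measurable_sum _ (fun k _ => hW k)

lemma meas_sufW (n : ℕ) (W : Fin n → Ω → ℕ) (hW : ∀ j, Measurable (W j)) (j : ℕ) :
    Measurable (sufW n W j) :=
  Finset.measurable_sum _ (fun k _ => hW k)

lemma meas_sufWA (n : ℕ) (A W : Fin n → Ω → ℕ) (hA : ∀ j, Measurable (A j))
    (hW : ∀ j, Measurable (W j)) (j : ℕ) :
    Measurable (sufWA n A W j) :=
  Finset.measurable_sum _ (fun k _ => (hW k).mul (hA k))

lemma measurableSet_eq_nat {f : Ω → ℕ} (hf : Measurable f) (c : ℕ) :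
    MeasurableSet {ω | f ω = c} :=
  hf (measurableSet_singleton c)

lemma comap_meas (n : ℕ) (A W : Fin n → Ω → ℕ) (j : Fin n) (a b c d : ℕ) :
    MeasurableSet[MeasurableSpace.comap
      (fun ω (k : {k : Fin n // j < k}) => (A k.val ω, W k.val ω)) inferInstance]
      {ω | a + sufW n W ((j : ℕ) + 1) ω = b ∧ c + sufWA n A W ((j : ℕ) + 1) ω = d} := by
  refine ⟨{f : {k : Fin n // j < k} → ℕ × ℕ |
      a + ∑ k, (f k).2 = b ∧ c + ∑ k, (f k).2 * (f k).1 = d}, ?_, ?_⟩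
  · apply MeasurableSet.inter
    · exact measurableSet_eq_nat (by
        exact (measurable_const.add (Finset.measurable_sum _
          (fun k _ => (measurable_pi_apply k).snd)))) b
    · exact measurableSet_eq_nat (by
        exact (measurable_const.add (Finset.measurable_sum _
          (fun k _ => ((measurable_pi_apply k).snd.mul (measurable_pi_apply k).fst))))) d
  · ext ω
    have h1 : (∑ k : {k : Fin n // j < k}, W k.val ω) = sufW n W ((j : ℕ) + 1) ω := by
      unfold sufW
      rw [Finset.sum_subtype (Finset.univ.filter (fun k : Fin n => (j : ℕ) + 1 ≤ (k : ℕ)))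
        (p := fun k : Fin n => j < k) (by intro k; simp only [Finset.mem_filter, Finset.mem_univ, true_and, Fin.lt_def]; omega)]
    have h2 : (∑ k : {k : Fin n // j < k}, W k.val ω * A k.val ω)
        = sufWA n A W ((j : ℕ) + 1) ω := by
      unfold sufWA
      rw [Finset.sum_subtype (Finset.univ.filter (fun k : Fin n => (j : ℕ) + 1 ≤ (k : ℕ)))
        (p := fun k : Fin n => j < k) (by intro k; simp only [Finset.mem_filter, Finset.mem_univ, true_and, Fin.lt_def]; omega)]
    simp only [Set.mem_preimage, Set.mem_setOf_eq, h1, h2]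

end Meas

/-- the binomial coefficient weight, as `ℝ≥0∞`. -/
noncomputable def Coef (p : ℝ) (s y : ℕ) : ENNReal :=
  ENNReal.ofReal ((s.choose y : ℝ) * p ^ y * (1 - p) ^ (s - y))

lemma Coef_zero_pos (p : ℝ) (y : ℕ) (hy : 0 < y) : Coef p 0 y = 0 := by
  unfold Coef
  rw [Nat.choose_eq_zero_of_lt hy]
  simp

lemma Coef_zero_zero (p : ℝ) : Coef p 0 0 = 1 := by
  simp [Coef]

lemma Coef_gt (p : ℝ) (s y : ℕ) (h : s < y) : Coef p s y = 0 := by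
  unfold Coef
  rw [Nat.choose_eq_zero_of_lt h]
  simp

lemma Coef_succ_zero (p : ℝ) (hp1 : p ≤ 1) (s : ℕ) :
    Coef p (s + 1) 0 = ENNReal.ofReal (1 - p) * Coef p s 0 := by
  unfold Coef
  rw [← ENNReal.ofReal_mul (by linarith)]
  congr 1
  simp [pow_succ]
  ring

lemma Coef_succ_succ (p : ℝ) (hp0 : 0 ≤ p) (hp1 : p ≤ 1) (s y : ℕ) :
    Coef p (s + 1) (y + 1)
      = ENNReal.ofReal (1 - p) * Coef p s (y + 1) + ENNReal.ofReal p * Coef p s y := by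
  unfold Coef
  rw [← ENNReal.ofReal_mul (by linarith), ← ENNReal.ofReal_mul hp0,
    ← ENNReal.ofReal_add]
  · congr 1
    have hch : (s + 1).choose (y + 1) = s.choose y + s.choose (y + 1) :=
      Nat.choose_succ_succ s y
    rcases lt_or_ge y s with h | h
    · have e1 : s + 1 - (y + 1) = s - y := by omega
      have e2 : s - y = (s - (y + 1)) + 1 := by omega
      rw [hch, e1, e2]
      push_cast
      ring
    · -- y ≥ s : s.choose (y+1) = 0
      have h0 : s.choose (y + 1) = 0 := Nat.choose_eq_zero_of_lt (by omega)
      have e1 : s + 1 - (y + 1) = s - y := by omega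
      rw [hch, h0, e1]
      push_cast
      ring
  · exact mul_nonneg (by linarith) (mul_nonneg (mul_nonneg (Nat.cast_nonneg _)
      (pow_nonneg hp0 _)) (pow_nonneg (by linarith) _))
  · exact mul_nonneg hp0 (mul_nonneg (mul_nonneg (Nat.cast_nonneg _)
      (pow_nonneg hp0 _)) (pow_nonneg (by linarith) _))


lemma prefW_top (n : ℕ) {Ω : Type*} (W : Fin n → Ω → ℕ) (ω : Ω) :
    prefW n W n ω = ∑ k, W k ω := by
  unfold prefW
  congr 1
  ext k
  simp [k.isLt]

lemma sum_identity (p : ℝ) (hp0 : 0 ≤ p) (hp1 : p ≤ 1) (n : ℕ)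
    (G : ℕ → ℕ → ENNReal)
    (hG0 : ∀ y, G 0 y = 0) (hGtop : ∀ y, G (n + 1) y = 0) :
    ∑ s ∈ Finset.range (n + 1), ∑ y ∈ Finset.range (n + 1),
      Coef p s y * (ENNReal.ofReal (1 - p) * G (s + 1) y
        + ENNReal.ofReal p * G (s + 1) (y + 1))
    = ∑ s ∈ Finset.range (n + 1), ∑ y ∈ Finset.range (n + 1), Coef p s y * G s y := by
  symm
  have hy_ext : ∀ s ∈ Finset.range (n + 1),
      (∑ y ∈ Finset.range (n + 1), Coef p s y * G s y)
        = ∑ y ∈ Finset.range (n + 2), Coef p s y * G s y := by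
    intro s hs
    rw [Finset.sum_range_succ (n := n + 1)]
    have hc : Coef p s (n + 1) = 0 := Coef_gt p s (n + 1) (by
      simp only [Finset.mem_range] at hs; omega)
    rw [hc, zero_mul, add_zero]
  rw [Finset.sum_congr rfl hy_ext]
  rw [Finset.sum_range_succ']
  have hF0 : (∑ y ∈ Finset.range (n + 2), Coef p 0 y * G 0 y) = 0 :=
    Finset.sum_eq_zero (fun y _ => by rw [hG0, mul_zero])
  rw [hF0, add_zero]
  have hlast : (∑ y ∈ Finset.range (n + 2), Coef p (n + 1) y * G (n + 1) y) = 0 :=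
    Finset.sum_eq_zero (fun y _ => by rw [hGtop, mul_zero])
  have hext : (∑ s ∈ Finset.range n, ∑ y ∈ Finset.range (n + 2),
        Coef p (s + 1) y * G (s + 1) y)
      = ∑ s ∈ Finset.range (n + 1), ∑ y ∈ Finset.range (n + 2),
        Coef p (s + 1) y * G (s + 1) y := by
    rw [Finset.sum_range_succ, hlast, add_zero]
  rw [hext]
  apply Finset.sum_congr rfl
  intro s hs
  have hsn : s ≤ n := by simp only [Finset.mem_range] at hs; omega
  rw [Finset.sum_range_succ' _ (n + 1)]
  have hpas : ∀ y, Coef p (s + 1) (y + 1) * G (s + 1) (y + 1)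
      = ENNReal.ofReal (1 - p) * (Coef p s (y + 1) * G (s + 1) (y + 1))
        + ENNReal.ofReal p * (Coef p s y * G (s + 1) (y + 1)) := by
    intro y
    rw [Coef_succ_succ p hp0 hp1, add_mul, mul_assoc, mul_assoc]
  rw [Finset.sum_congr rfl (fun y _ => hpas y), Finset.sum_add_distrib,
    Coef_succ_zero p hp1, ← Finset.mul_sum, ← Finset.mul_sum, mul_assoc]
  have hsum1 : (∑ y ∈ Finset.range (n + 1), Coef p s (y + 1) * G (s + 1) (y + 1))
        + Coef p s 0 * G (s + 1) 0
      = ∑ y ∈ Finset.range (n + 1), Coef p s y * G (s + 1) y := by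
    rw [← Finset.sum_range_succ' (fun y => Coef p s y * G (s + 1) y) (n + 1),
      Finset.sum_range_succ]
    rw [Coef_gt p s (n + 1) (by omega), zero_mul, add_zero]
  calc ENNReal.ofReal (1 - p) * (∑ y ∈ Finset.range (n + 1),
          Coef p s (y + 1) * G (s + 1) (y + 1))
        + ENNReal.ofReal p * (∑ y ∈ Finset.range (n + 1), Coef p s y * G (s + 1) (y + 1))
        + ENNReal.ofReal (1 - p) * (Coef p s 0 * G (s + 1) 0)
      = ENNReal.ofReal (1 - p) * ((∑ y ∈ Finset.range (n + 1),
          Coef p s (y + 1) * G (s + 1) (y + 1)) + Coef p s 0 * G (s + 1) 0)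
        + ENNReal.ofReal p * (∑ y ∈ Finset.range (n + 1), Coef p s y * G (s + 1) (y + 1)) := by
        ring
    _ = ENNReal.ofReal (1 - p) * (∑ y ∈ Finset.range (n + 1), Coef p s y * G (s + 1) y)
        + ENNReal.ofReal p * (∑ y ∈ Finset.range (n + 1), Coef p s y * G (s + 1) (y + 1)) := by
        rw [hsum1]
    _ = ∑ y ∈ Finset.range (n + 1), Coef p s y * (ENNReal.ofReal (1 - p) * G (s + 1) y
          + ENNReal.ofReal p * G (s + 1) (y + 1)) := by
        rw [Finset.mul_sum, Finset.mul_sum, ← Finset.sum_add_distrib]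
        apply Finset.sum_congr rfl
        intro y _
        ring


end WSB


open WSB in
/-- Let `(A_j, W_j)` be binary with `Σ_j W_j = m` a.s., and for each `j`,
conditionally on `σ({A_k, W_k}_{k>j})` and `{W_j = 1}`, let `A_j` be Bernoulli(p*).
Then `Σ_j W_j A_j` has the same distribution as a sum of `m` i.i.d. Bernoulli(p*)
variables, i.e. it is Binomial(m, p*):
`ℙ(Σ_j W_j A_j = x) = C(m, x)·p*^x·(1-p*)^{m-x}` for every `x`. -/
theorem weighted_sum_binomial
    {Ω : Type*} [MeasurableSpace Ω] (μ : Measure Ω) [IsProbabilityMeasure μ]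
    (n m : ℕ) (hm : m ≤ n)
    (pstar : ℝ) (hp : pstar ∈ Set.Ioo (0:ℝ) 1)
    (A W : Fin n → Ω → ℕ) (hAm : ∀ j, Measurable (A j)) (hWm : ∀ j, Measurable (W j))
    (hA01 : ∀ j ω, A j ω = 0 ∨ A j ω = 1)
    (hW01 : ∀ j ω, W j ω = 0 ∨ W j ω = 1)
    (hWsum : ∀ᵐ ω ∂μ, ∑ j, W j ω = m)
    (hcond : ∀ j : Fin n, ∀ S : Set Ω,
      MeasurableSet[MeasurableSpace.comap
        (fun ω (k : {k : Fin n // j < k}) => (A k.val ω, W k.val ω)) inferInstance] S →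
      μ ({ω | A j ω = 1} ∩ {ω | W j ω = 1} ∩ S)
        = ENNReal.ofReal pstar * μ ({ω | W j ω = 1} ∩ S)) :
    ∀ x : ℕ, μ {ω | ∑ j, W j ω * A j ω = x}
      = ENNReal.ofReal ((m.choose x : ℝ) * pstar ^ x * (1 - pstar) ^ (m - x)) := by
  obtain ⟨hp0, hp1⟩ := hp
  have hnull : μ {ω | ¬ (∑ k, W k ω = m)} = 0 := ae_iff.mp hWsum
  have key : ∀ j : ℕ, j ≤ n → ∀ x : ℕ,
      μ {ω | ∑ k, W k ω * A k ω = x}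
        = ∑ s ∈ Finset.range (n + 1), ∑ y ∈ Finset.range (n + 1),
            WSB.Coef pstar s y * μ {ω | WSB.prefW n W (j) ω = s ∧ y + WSB.sufWA n A W (j) ω = x} := by
    intro j
    induction j with
    | zero =>
      intro _ x
      rw [Finset.sum_eq_single_of_mem 0 (by simp) ?_]
      · rw [Finset.sum_eq_single_of_mem 0 (by simp) ?_]
        · rw [Coef_zero_zero, one_mul]
          congr 1
          ext ω
          simp [WSB.prefW_zero, WSB.sufWA_zero]
        · intro y _ hy
          rw [Coef_zero_pos pstar y (Nat.pos_of_ne_zero hy), zero_mul]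
      · intro s _ hs
        apply Finset.sum_eq_zero
        intro y _
        have he : {ω | WSB.prefW n W (0) ω = s ∧ y + WSB.sufWA n A W (0) ω = x} = (∅ : Set Ω) := by
          ext ω
          simp [WSB.prefW_zero]
          omega
        rw [he, measure_empty, mul_zero]
    | succ j ih =>
      intro hj1 x
      have hjn : j < n := hj1
      rw [ih (Nat.le_of_lt hjn) x]
      -- measurability facts
      have hWm1 : MeasurableSet {ω | W (⟨j, hjn⟩ : Fin n) ω = 1} := WSB.measurableSet_eq_nat (hWm (⟨j, hjn⟩ : Fin n)) 1
      have hWm0 : MeasurableSet {ω | W (⟨j, hjn⟩ : Fin n) ω = 0} := WSB.measurableSet_eq_nat (hWm (⟨j, hjn⟩ : Fin n)) 0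
      have hAm1 : MeasurableSet {ω | A (⟨j, hjn⟩ : Fin n) ω = 1} := WSB.measurableSet_eq_nat (hAm (⟨j, hjn⟩ : Fin n)) 1
      have hAm0 : MeasurableSet {ω | A (⟨j, hjn⟩ : Fin n) ω = 0} := WSB.measurableSet_eq_nat (hAm (⟨j, hjn⟩ : Fin n)) 0
      have hSfm : ∀ a c : ℕ, MeasurableSet {ω | a + WSB.sufW n W (j + 1) ω = m ∧ c + WSB.sufWA n A W (j + 1) ω = x} := by
        intro a c
        have hrw : {ω | a + WSB.sufW n W (j + 1) ω = m ∧ c + WSB.sufWA n A W (j + 1) ω = x}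
            = {ω | a + WSB.sufW n W (j + 1) ω = m} ∩ {ω | c + WSB.sufWA n A W (j + 1) ω = x} :=
          Set.setOf_and
        rw [hrw]
        exact (WSB.measurableSet_eq_nat (measurable_const.add (WSB.meas_sufW n W hWm (j + 1))) m).inter
          (WSB.measurableSet_eq_nat (measurable_const.add (WSB.meas_sufWA n A W hAm hWm (j + 1))) x)
      have hmeasE : ∀ s y : ℕ, MeasurableSet {ω | WSB.prefW n W (j) ω = s ∧ y + WSB.sufWA n A W (j) ω = x} := by
        intro s y
        have hrw : {ω | WSB.prefW n W (j) ω = s ∧ y + WSB.sufWA n A W (j) ω = x}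
            = {ω | WSB.prefW n W j ω = s} ∩ {ω | y + WSB.sufWA n A W j ω = x} :=
          Set.setOf_and
        rw [hrw]
        exact (WSB.measurableSet_eq_nat (WSB.meas_prefW n W hWm j) s).inter
          (WSB.measurableSet_eq_nat (measurable_const.add (WSB.meas_sufWA n A W hAm hWm j)) x)
      -- conditional Bernoulli facts
      have hA1c : ∀ a c : ℕ, μ ({ω | A (⟨j, hjn⟩ : Fin n) ω = 1} ∩ {ω | W (⟨j, hjn⟩ : Fin n) ω = 1} ∩ {ω | a + WSB.sufW n W (j + 1) ω = m ∧ c + WSB.sufWA n A W (j + 1) ω = x})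
          = ENNReal.ofReal pstar * μ ({ω | W (⟨j, hjn⟩ : Fin n) ω = 1} ∩ {ω | a + WSB.sufW n W (j + 1) ω = m ∧ c + WSB.sufWA n A W (j + 1) ω = x}) := by
        intro a c
        exact hcond (⟨j, hjn⟩ : Fin n) _ (WSB.comap_meas n A W (⟨j, hjn⟩ : Fin n) a m c x)
      have hA0c : ∀ a c : ℕ, μ ({ω | A (⟨j, hjn⟩ : Fin n) ω = 0} ∩ {ω | W (⟨j, hjn⟩ : Fin n) ω = 1} ∩ {ω | a + WSB.sufW n W (j + 1) ω = m ∧ c + WSB.sufWA n A W (j + 1) ω = x})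
          = ENNReal.ofReal (1 - pstar) * μ ({ω | W (⟨j, hjn⟩ : Fin n) ω = 1} ∩ {ω | a + WSB.sufW n W (j + 1) ω = m ∧ c + WSB.sufWA n A W (j + 1) ω = x}) := by
        intro a c
        have hsp : {ω | W (⟨j, hjn⟩ : Fin n) ω = 1} ∩ {ω | a + WSB.sufW n W (j + 1) ω = m ∧ c + WSB.sufWA n A W (j + 1) ω = x}
            = ({ω | A (⟨j, hjn⟩ : Fin n) ω = 1} ∩ {ω | W (⟨j, hjn⟩ : Fin n) ω = 1} ∩ {ω | a + WSB.sufW n W (j + 1) ω = m ∧ c + WSB.sufWA n A W (j + 1) ω = x}) ∪ ({ω | A (⟨j, hjn⟩ : Fin n) ω = 0} ∩ {ω | W (⟨j, hjn⟩ : Fin n) ω = 1} ∩ {ω | a + WSB.sufW n W (j + 1) ω = m ∧ c + WSB.sufWA n A W (j + 1) ω = x}) := by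
          ext ω
          simp only [Set.mem_inter_iff, Set.mem_union, Set.mem_setOf_eq]
          rcases hA01 (⟨j, hjn⟩ : Fin n) ω with h | h <;> simp [h] <;> tauto
        have hdisj : Disjoint ({ω | A (⟨j, hjn⟩ : Fin n) ω = 1} ∩ {ω | W (⟨j, hjn⟩ : Fin n) ω = 1} ∩ {ω | a + WSB.sufW n W (j + 1) ω = m ∧ c + WSB.sufWA n A W (j + 1) ω = x}) ({ω | A (⟨j, hjn⟩ : Fin n) ω = 0} ∩ {ω | W (⟨j, hjn⟩ : Fin n) ω = 1} ∩ {ω | a + WSB.sufW n W (j + 1) ω = m ∧ c + WSB.sufWA n A W (j + 1) ω = x}) := by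
          rw [Set.disjoint_left]
          rintro ω ⟨⟨h1, _⟩, _⟩ ⟨⟨h0, _⟩, _⟩
          simp only [Set.mem_setOf_eq] at h1 h0
          omega
        have heq0 : μ ({ω | W (⟨j, hjn⟩ : Fin n) ω = 1} ∩ {ω | a + WSB.sufW n W (j + 1) ω = m ∧ c + WSB.sufWA n A W (j + 1) ω = x})
            = μ ({ω | A (⟨j, hjn⟩ : Fin n) ω = 1} ∩ {ω | W (⟨j, hjn⟩ : Fin n) ω = 1} ∩ {ω | a + WSB.sufW n W (j + 1) ω = m ∧ c + WSB.sufWA n A W (j + 1) ω = x})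
              + μ ({ω | A (⟨j, hjn⟩ : Fin n) ω = 0} ∩ {ω | W (⟨j, hjn⟩ : Fin n) ω = 1} ∩ {ω | a + WSB.sufW n W (j + 1) ω = m ∧ c + WSB.sufWA n A W (j + 1) ω = x}) := by
          rw [hsp]
          exact measure_union hdisj ((hAm0.inter hWm1).inter (hSfm a c))
        have heq : μ ({ω | W (⟨j, hjn⟩ : Fin n) ω = 1} ∩ {ω | a + WSB.sufW n W (j + 1) ω = m ∧ c + WSB.sufWA n A W (j + 1) ω = x})
            = ENNReal.ofReal pstar * μ ({ω | W (⟨j, hjn⟩ : Fin n) ω = 1} ∩ {ω | a + WSB.sufW n W (j + 1) ω = m ∧ c + WSB.sufWA n A W (j + 1) ω = x})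
              + μ ({ω | A (⟨j, hjn⟩ : Fin n) ω = 0} ∩ {ω | W (⟨j, hjn⟩ : Fin n) ω = 1} ∩ {ω | a + WSB.sufW n W (j + 1) ω = m ∧ c + WSB.sufWA n A W (j + 1) ω = x}) := heq0.trans (by rw [hA1c a c])
        have hq : ENNReal.ofReal pstar * μ ({ω | W (⟨j, hjn⟩ : Fin n) ω = 1} ∩ {ω | a + WSB.sufW n W (j + 1) ω = m ∧ c + WSB.sufWA n A W (j + 1) ω = x})
            + ENNReal.ofReal (1 - pstar) * μ ({ω | W (⟨j, hjn⟩ : Fin n) ω = 1} ∩ {ω | a + WSB.sufW n W (j + 1) ω = m ∧ c + WSB.sufWA n A W (j + 1) ω = x})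
            = μ ({ω | W (⟨j, hjn⟩ : Fin n) ω = 1} ∩ {ω | a + WSB.sufW n W (j + 1) ω = m ∧ c + WSB.sufWA n A W (j + 1) ω = x}) := by
          rw [← add_mul, ← ENNReal.ofReal_add (le_of_lt hp0) (by linarith)]
          norm_num
        exact (ENNReal.add_right_inj
          (ENNReal.mul_ne_top ENNReal.ofReal_ne_top (measure_ne_top μ _))).mp
          (heq.symm.trans hq.symm)
      -- pointwise arithmetic facts
      have htot : ∀ ω, ∑ k, W k ω = WSB.prefW n W j ω + (W (⟨j, hjn⟩ : Fin n) ω + WSB.sufW n W (j + 1) ω) := by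
        intro ω
        rw [← WSB.sufW_succ n W j hjn ω]
        exact WSB.total_split n W j ω
      have hsa : ∀ ω, WSB.sufWA n A W j ω
          = W (⟨j, hjn⟩ : Fin n) ω * A (⟨j, hjn⟩ : Fin n) ω + WSB.sufWA n A W (j + 1) ω :=
        fun ω => WSB.sufWA_succ n A W j hjn ω
      have hpw : ∀ ω, WSB.prefW n W (j + 1) ω = WSB.prefW n W j ω + W (⟨j, hjn⟩ : Fin n) ω :=
        fun ω => WSB.prefW_succ n W j hjn ω
      -- a.e. congruences
      have hc0 : ∀ s y : ℕ, μ ({ω | WSB.prefW n W (j) ω = s ∧ y + WSB.sufWA n A W (j) ω = x} ∩ {ω | W (⟨j, hjn⟩ : Fin n) ω = 0}) = μ ({ω | W (⟨j, hjn⟩ : Fin n) ω = 0} ∩ {ω | s + WSB.sufW n W (j + 1) ω = m ∧ y + WSB.sufWA n A W (j + 1) ω = x}) := by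
        intro s y
        apply measure_congr
        rw [Filter.eventuallyEq_set]
        filter_upwards [hWsum] with ω hω
        simp only [Set.mem_inter_iff, Set.mem_setOf_eq]
        have h1 := htot ω
        rw [hω] at h1
        have h2 := hsa ω
        constructor
        · rintro ⟨⟨hps, hxs⟩, hw⟩
          rw [hw, zero_mul, zero_add] at h2
          exact ⟨hw, by omega, by omega⟩
        · rintro ⟨hw, hsw, hsx⟩
          rw [hw, zero_mul, zero_add] at h2
          rw [hw] at h1
          exact ⟨⟨by omega, by omega⟩, hw⟩
      have hc10 : ∀ s y : ℕ, μ ({ω | WSB.prefW n W (j) ω = s ∧ y + WSB.sufWA n A W (j) ω = x} ∩ {ω | W (⟨j, hjn⟩ : Fin n) ω = 1} ∩ {ω | A (⟨j, hjn⟩ : Fin n) ω = 0})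
          = μ ({ω | A (⟨j, hjn⟩ : Fin n) ω = 0} ∩ {ω | W (⟨j, hjn⟩ : Fin n) ω = 1} ∩ {ω | s + 1 + WSB.sufW n W (j + 1) ω = m ∧ y + WSB.sufWA n A W (j + 1) ω = x}) := by
        intro s y
        apply measure_congr
        rw [Filter.eventuallyEq_set]
        filter_upwards [hWsum] with ω hω
        simp only [Set.mem_inter_iff, Set.mem_setOf_eq]
        have h1 := htot ω
        rw [hω] at h1
        have h2 := hsa ω
        constructor
        · rintro ⟨⟨⟨hps, hxs⟩, hw⟩, ha⟩
          rw [hw, ha, mul_zero, zero_add] at h2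
          rw [hw] at h1
          exact ⟨⟨ha, hw⟩, by omega, by omega⟩
        · rintro ⟨⟨ha, hw⟩, hsw, hsx⟩
          rw [hw, ha, mul_zero, zero_add] at h2
          rw [hw] at h1
          exact ⟨⟨⟨by omega, by omega⟩, hw⟩, ha⟩
      have hc11 : ∀ s y : ℕ, μ ({ω | WSB.prefW n W (j) ω = s ∧ y + WSB.sufWA n A W (j) ω = x} ∩ {ω | W (⟨j, hjn⟩ : Fin n) ω = 1} ∩ {ω | A (⟨j, hjn⟩ : Fin n) ω = 1})
          = μ ({ω | A (⟨j, hjn⟩ : Fin n) ω = 1} ∩ {ω | W (⟨j, hjn⟩ : Fin n) ω = 1} ∩ {ω | s + 1 + WSB.sufW n W (j + 1) ω = m ∧ y + 1 + WSB.sufWA n A W (j + 1) ω = x}) := by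
        intro s y
        apply measure_congr
        rw [Filter.eventuallyEq_set]
        filter_upwards [hWsum] with ω hω
        simp only [Set.mem_inter_iff, Set.mem_setOf_eq]
        have h1 := htot ω
        rw [hω] at h1
        have h2 := hsa ω
        constructor
        · rintro ⟨⟨⟨hps, hxs⟩, hw⟩, ha⟩
          rw [hw, ha] at h2
          norm_num at h2
          rw [hw] at h1
          exact ⟨⟨ha, hw⟩, by omega, by omega⟩
        · rintro ⟨⟨ha, hw⟩, hsw, hsx⟩
          rw [hw, ha] at h2
          norm_num at h2
          rw [hw] at h1
          exact ⟨⟨⟨by omega, by omega⟩, hw⟩, ha⟩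
      have hc0' : ∀ s y : ℕ, μ ({ω | WSB.prefW n W (j + 1) ω = s ∧ y + WSB.sufWA n A W (j + 1) ω = x} ∩ {ω | W (⟨j, hjn⟩ : Fin n) ω = 0}) = μ ({ω | W (⟨j, hjn⟩ : Fin n) ω = 0} ∩ {ω | s + WSB.sufW n W (j + 1) ω = m ∧ y + WSB.sufWA n A W (j + 1) ω = x}) := by
        intro s y
        apply measure_congr
        rw [Filter.eventuallyEq_set]
        filter_upwards [hWsum] with ω hω
        simp only [Set.mem_inter_iff, Set.mem_setOf_eq]
        have h1 := htot ω
        rw [hω] at h1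
        have h2 := hsa ω
        have h3 := hpw ω
        constructor
        · rintro ⟨⟨hps, hxs⟩, hw⟩
          rw [hw, zero_mul, zero_add] at h2
          rw [hw] at h1 h3
          exact ⟨hw, by omega, by omega⟩
        · rintro ⟨hw, hsw, hsx⟩
          rw [hw, zero_mul, zero_add] at h2
          rw [hw] at h1 h3
          exact ⟨⟨by omega, by omega⟩, hw⟩
      have hc1' : ∀ s y : ℕ, μ ({ω | WSB.prefW n W (j + 1) ω = s ∧ y + WSB.sufWA n A W (j + 1) ω = x} ∩ {ω | W (⟨j, hjn⟩ : Fin n) ω = 1}) = μ ({ω | W (⟨j, hjn⟩ : Fin n) ω = 1} ∩ {ω | s + WSB.sufW n W (j + 1) ω = m ∧ y + WSB.sufWA n A W (j + 1) ω = x}) := by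
        intro s y
        apply measure_congr
        rw [Filter.eventuallyEq_set]
        filter_upwards [hWsum] with ω hω
        simp only [Set.mem_inter_iff, Set.mem_setOf_eq]
        have h1 := htot ω
        rw [hω] at h1
        have h2 := hsa ω
        have h3 := hpw ω
        constructor
        · rintro ⟨⟨hps, hxs⟩, hw⟩
          rw [hw] at h1 h3
          rcases hA01 (⟨j, hjn⟩ : Fin n) ω with ha | ha <;> rw [hw, ha] at h2 <;>
            simp only [mul_zero, mul_one, zero_add, one_mul] at h2 <;>
            exact ⟨hw, by omega, by omega⟩
        · rintro ⟨hw, hsw, hsx⟩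
          rw [hw] at h1 h3
          rcases hA01 (⟨j, hjn⟩ : Fin n) ω with ha | ha <;> rw [hw, ha] at h2 <;>
            simp only [mul_zero, mul_one, zero_add, one_mul] at h2 <;>
            exact ⟨⟨by omega, by omega⟩, hw⟩
      -- decompose level-j events
      have hE : ∀ s y : ℕ, μ {ω | WSB.prefW n W (j) ω = s ∧ y + WSB.sufWA n A W (j) ω = x}
          = μ ({ω | W (⟨j, hjn⟩ : Fin n) ω = 0} ∩ {ω | s + WSB.sufW n W (j + 1) ω = m ∧ y + WSB.sufWA n A W (j + 1) ω = x})
            + (ENNReal.ofReal (1 - pstar) * μ ({ω | W (⟨j, hjn⟩ : Fin n) ω = 1} ∩ {ω | s + 1 + WSB.sufW n W (j + 1) ω = m ∧ y + WSB.sufWA n A W (j + 1) ω = x})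
              + ENNReal.ofReal pstar * μ ({ω | W (⟨j, hjn⟩ : Fin n) ω = 1} ∩ {ω | s + 1 + WSB.sufW n W (j + 1) ω = m ∧ y + 1 + WSB.sufWA n A W (j + 1) ω = x})) := by
        intro s y
        have hdec : {ω | WSB.prefW n W (j) ω = s ∧ y + WSB.sufWA n A W (j) ω = x}
            = ({ω | WSB.prefW n W (j) ω = s ∧ y + WSB.sufWA n A W (j) ω = x} ∩ {ω | W (⟨j, hjn⟩ : Fin n) ω = 0})
              ∪ (({ω | WSB.prefW n W (j) ω = s ∧ y + WSB.sufWA n A W (j) ω = x} ∩ {ω | W (⟨j, hjn⟩ : Fin n) ω = 1} ∩ {ω | A (⟨j, hjn⟩ : Fin n) ω = 0}) ∪ ({ω | WSB.prefW n W (j) ω = s ∧ y + WSB.sufWA n A W (j) ω = x} ∩ {ω | W (⟨j, hjn⟩ : Fin n) ω = 1} ∩ {ω | A (⟨j, hjn⟩ : Fin n) ω = 1})) := by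
          ext ω
          simp only [Set.mem_union, Set.mem_inter_iff, Set.mem_setOf_eq]
          rcases hW01 (⟨j, hjn⟩ : Fin n) ω with hw | hw <;> rcases hA01 (⟨j, hjn⟩ : Fin n) ω with ha | ha <;>
            simp [hw, ha] <;> tauto
        have hd1 : Disjoint ({ω | WSB.prefW n W (j) ω = s ∧ y + WSB.sufWA n A W (j) ω = x} ∩ {ω | W (⟨j, hjn⟩ : Fin n) ω = 0})
            (({ω | WSB.prefW n W (j) ω = s ∧ y + WSB.sufWA n A W (j) ω = x} ∩ {ω | W (⟨j, hjn⟩ : Fin n) ω = 1} ∩ {ω | A (⟨j, hjn⟩ : Fin n) ω = 0}) ∪ ({ω | WSB.prefW n W (j) ω = s ∧ y + WSB.sufWA n A W (j) ω = x} ∩ {ω | W (⟨j, hjn⟩ : Fin n) ω = 1} ∩ {ω | A (⟨j, hjn⟩ : Fin n) ω = 1})) := by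
          rw [Set.disjoint_left]
          rintro ω ⟨_, hw0⟩ h
          simp only [Set.mem_union, Set.mem_inter_iff, Set.mem_setOf_eq] at h hw0
          rcases h with ⟨⟨_, hw1⟩, _⟩ | ⟨⟨_, hw1⟩, _⟩ <;> omega
        have hd2 : Disjoint ({ω | WSB.prefW n W (j) ω = s ∧ y + WSB.sufWA n A W (j) ω = x} ∩ {ω | W (⟨j, hjn⟩ : Fin n) ω = 1} ∩ {ω | A (⟨j, hjn⟩ : Fin n) ω = 0})
            ({ω | WSB.prefW n W (j) ω = s ∧ y + WSB.sufWA n A W (j) ω = x} ∩ {ω | W (⟨j, hjn⟩ : Fin n) ω = 1} ∩ {ω | A (⟨j, hjn⟩ : Fin n) ω = 1}) := by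
          rw [Set.disjoint_left]
          rintro ω ⟨_, ha0⟩ ⟨_, ha1⟩
          simp only [Set.mem_setOf_eq] at ha0 ha1
          omega
        rw [hdec,
          measure_union hd1 (((((hmeasE s y).inter hWm1).inter hAm0)).union
            ((((hmeasE s y).inter hWm1).inter hAm1))),
          measure_union hd2 ((((hmeasE s y).inter hWm1).inter hAm1)),
          hc0 s y, hc10 s y, hc11 s y, hA0c (s + 1) y, hA1c (s + 1) (y + 1)]
      have hmeasE' : ∀ s y : ℕ, MeasurableSet {ω | WSB.prefW n W (j + 1) ω = s ∧ y + WSB.sufWA n A W (j + 1) ω = x} := by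
        intro s y
        have hrw : {ω | WSB.prefW n W (j + 1) ω = s ∧ y + WSB.sufWA n A W (j + 1) ω = x}
            = {ω | WSB.prefW n W (j + 1) ω = s} ∩ {ω | y + WSB.sufWA n A W (j + 1) ω = x} :=
          Set.setOf_and
        rw [hrw]
        exact (WSB.measurableSet_eq_nat (WSB.meas_prefW n W hWm (j + 1)) s).inter
          (WSB.measurableSet_eq_nat (measurable_const.add (WSB.meas_sufWA n A W hAm hWm (j + 1))) x)
      have hE' : ∀ s y : ℕ, μ {ω | WSB.prefW n W (j + 1) ω = s ∧ y + WSB.sufWA n A W (j + 1) ω = x}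
          = μ ({ω | W (⟨j, hjn⟩ : Fin n) ω = 0} ∩ {ω | s + WSB.sufW n W (j + 1) ω = m ∧ y + WSB.sufWA n A W (j + 1) ω = x}) + μ ({ω | W (⟨j, hjn⟩ : Fin n) ω = 1} ∩ {ω | s + WSB.sufW n W (j + 1) ω = m ∧ y + WSB.sufWA n A W (j + 1) ω = x}) := by
        intro s y
        have hdec : {ω | WSB.prefW n W (j + 1) ω = s ∧ y + WSB.sufWA n A W (j + 1) ω = x}
            = ({ω | WSB.prefW n W (j + 1) ω = s ∧ y + WSB.sufWA n A W (j + 1) ω = x} ∩ {ω | W (⟨j, hjn⟩ : Fin n) ω = 0}) ∪ ({ω | WSB.prefW n W (j + 1) ω = s ∧ y + WSB.sufWA n A W (j + 1) ω = x} ∩ {ω | W (⟨j, hjn⟩ : Fin n) ω = 1}) := by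
          ext ω
          simp only [Set.mem_union, Set.mem_inter_iff, Set.mem_setOf_eq]
          rcases hW01 (⟨j, hjn⟩ : Fin n) ω with hw | hw <;> simp [hw] <;> tauto
        have hd1 : Disjoint ({ω | WSB.prefW n W (j + 1) ω = s ∧ y + WSB.sufWA n A W (j + 1) ω = x} ∩ {ω | W (⟨j, hjn⟩ : Fin n) ω = 0}) ({ω | WSB.prefW n W (j + 1) ω = s ∧ y + WSB.sufWA n A W (j + 1) ω = x} ∩ {ω | W (⟨j, hjn⟩ : Fin n) ω = 1}) := by
          rw [Set.disjoint_left]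
          rintro ω ⟨_, hw0⟩ ⟨_, hw1⟩
          simp only [Set.mem_setOf_eq] at hw0 hw1
          omega
        rw [hdec, measure_union hd1 ((hmeasE' s y).inter hWm1), hc0' s y, hc1' s y]
      -- rewrite both sides and cancel
      have hL : (∑ s ∈ Finset.range (n + 1), ∑ y ∈ Finset.range (n + 1),
            WSB.Coef pstar s y * μ {ω | WSB.prefW n W (j) ω = s ∧ y + WSB.sufWA n A W (j) ω = x})
          = (∑ s ∈ Finset.range (n + 1), ∑ y ∈ Finset.range (n + 1),
              WSB.Coef pstar s y * μ ({ω | W (⟨j, hjn⟩ : Fin n) ω = 0} ∩ {ω | s + WSB.sufW n W (j + 1) ω = m ∧ y + WSB.sufWA n A W (j + 1) ω = x}))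
            + (∑ s ∈ Finset.range (n + 1), ∑ y ∈ Finset.range (n + 1),
              WSB.Coef pstar s y * (ENNReal.ofReal (1 - pstar) * μ ({ω | W (⟨j, hjn⟩ : Fin n) ω = 1} ∩ {ω | s + 1 + WSB.sufW n W (j + 1) ω = m ∧ y + WSB.sufWA n A W (j + 1) ω = x})
                + ENNReal.ofReal pstar * μ ({ω | W (⟨j, hjn⟩ : Fin n) ω = 1} ∩ {ω | s + 1 + WSB.sufW n W (j + 1) ω = m ∧ y + 1 + WSB.sufWA n A W (j + 1) ω = x}))) := by
        rw [← Finset.sum_add_distrib]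
        apply Finset.sum_congr rfl
        intro s _
        rw [← Finset.sum_add_distrib]
        apply Finset.sum_congr rfl
        intro y _
        rw [hE s y, mul_add]
      have hR : (∑ s ∈ Finset.range (n + 1), ∑ y ∈ Finset.range (n + 1),
            WSB.Coef pstar s y * μ {ω | WSB.prefW n W (j + 1) ω = s ∧ y + WSB.sufWA n A W (j + 1) ω = x})
          = (∑ s ∈ Finset.range (n + 1), ∑ y ∈ Finset.range (n + 1),
              WSB.Coef pstar s y * μ ({ω | W (⟨j, hjn⟩ : Fin n) ω = 0} ∩ {ω | s + WSB.sufW n W (j + 1) ω = m ∧ y + WSB.sufWA n A W (j + 1) ω = x}))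
            + (∑ s ∈ Finset.range (n + 1), ∑ y ∈ Finset.range (n + 1),
              WSB.Coef pstar s y * μ ({ω | W (⟨j, hjn⟩ : Fin n) ω = 1} ∩ {ω | s + WSB.sufW n W (j + 1) ω = m ∧ y + WSB.sufWA n A W (j + 1) ω = x})) := by
        rw [← Finset.sum_add_distrib]
        apply Finset.sum_congr rfl
        intro s _
        rw [← Finset.sum_add_distrib]
        apply Finset.sum_congr rfl
        intro y _
        rw [hE' s y, mul_add]
      rw [hL, hR]
      congr 1
      exact WSB.sum_identity pstar (le_of_lt hp0) (le_of_lt hp1) n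
        (fun a c => μ ({ω | W (⟨j, hjn⟩ : Fin n) ω = 1} ∩ {ω | a + WSB.sufW n W (j + 1) ω = m ∧ c + WSB.sufWA n A W (j + 1) ω = x}))
        (fun c => by
          show μ ({ω | W (⟨j, hjn⟩ : Fin n) ω = 1} ∩ {ω | 0 + WSB.sufW n W (j + 1) ω = m ∧ c + WSB.sufWA n A W (j + 1) ω = x}) = 0
          apply measure_mono_null _ hnull
          rintro ω ⟨hw, hsw, -⟩
          have hw' : W (⟨j, hjn⟩ : Fin n) ω = 1 := hw
          have hsw' : 0 + WSB.sufW n W (j + 1) ω = m := hsw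
          have h1 := htot ω
          simp only [Set.mem_setOf_eq]
          intro hm'
          rw [hm'] at h1
          omega)
        (fun c => by
          show μ ({ω | W (⟨j, hjn⟩ : Fin n) ω = 1} ∩ {ω | n + 1 + WSB.sufW n W (j + 1) ω = m ∧ c + WSB.sufWA n A W (j + 1) ω = x}) = 0
          have he : ({ω | W (⟨j, hjn⟩ : Fin n) ω = 1} ∩ {ω | n + 1 + WSB.sufW n W (j + 1) ω = m ∧ c + WSB.sufWA n A W (j + 1) ω = x}) = (∅ : Set Ω) := by
            ext ω
            simp only [Set.mem_inter_iff, Set.mem_setOf_eq, Set.mem_empty_iff_false, iff_false,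
              not_and]
            intro _ h
            omega
          rw [he, measure_empty])
  -- conclude
  intro x
  rcases le_or_gt x n with hx | hx
  · rw [key n le_rfl x]
    have hcol : ∀ s ∈ Finset.range (n + 1),
        (∑ y ∈ Finset.range (n + 1), WSB.Coef pstar s y * μ {ω | WSB.prefW n W (n) ω = s ∧ y + WSB.sufWA n A W (n) ω = x})
          = WSB.Coef pstar s x * μ {ω | WSB.prefW n W n ω = s} := by
      intro s _
      rw [Finset.sum_eq_single_of_mem x (by simp; omega) ?_]
      · have hset : {ω | WSB.prefW n W (n) ω = s ∧ x + WSB.sufWA n A W (n) ω = x}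
            = {ω | WSB.prefW n W n ω = s} := by
          ext ω
          simp [WSB.sufWA_top]
        rw [hset]
      · intro y _ hy
        have he : {ω | WSB.prefW n W (n) ω = s ∧ y + WSB.sufWA n A W (n) ω = x} = (∅ : Set Ω) := by
          ext ω
          simp [WSB.sufWA_top]
          omega
        rw [he, measure_empty, mul_zero]
    rw [Finset.sum_congr rfl hcol]
    rw [Finset.sum_eq_single_of_mem m (by simp; omega) ?_]
    · have hone : μ {ω | WSB.prefW n W n ω = m} = 1 := by
        have : μ {ω | WSB.prefW n W n ω = m} = μ Set.univ := by
          apply measure_congr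
          rw [Filter.eventuallyEq_set]
          filter_upwards [hWsum] with ω hω
          simp only [Set.mem_setOf_eq, Set.mem_univ, iff_true]
          rw [← WSB.prefW_top n W ω] at hω
          exact hω
        rw [this, measure_univ]
      rw [hone, mul_one]
      rfl
    · intro s _ hs
      have hz : μ {ω | WSB.prefW n W n ω = s} = 0 := by
        apply measure_mono_null _ hnull
        intro ω hω
        simp only [Set.mem_setOf_eq] at hω ⊢
        intro hm'
        rw [← WSB.prefW_top n W ω] at hm'
        omega
      rw [hz, mul_zero]
  · have h0 : μ {ω | ∑ k, W k ω * A k ω = x} = 0 := by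
      apply measure_mono_null _ hnull
      intro ω hω
      simp only [Set.mem_setOf_eq] at hω ⊢
      intro hm'
      have hle : (∑ k, W k ω * A k ω) ≤ ∑ k, W k ω := by
        apply Finset.sum_le_sum
        intro k _
        rcases hA01 k ω with ha | ha <;> simp [ha]
      omega
    rw [h0, Nat.choose_eq_zero_of_lt (lt_of_le_of_lt hm hx)]
    simp
end

section
/- Let p* ∈ (0,1) and let (A_j, W_j)_{j=1}^n be {0,1}-valued random variables such that Σ_{j=1}^n W_j = m almost surely for a fixed m ≤ n, and for every j, conditionally on σ({A_k, W_k}_{k=j+1}^n) and the event {W_j = 1}, A_j is Bernoulli with a (random, history-dependent) parameter p({A_k, W_k}_{k=j+1}^n) that is almost surely at most p*. Define M_t^w = Σ_{j=1}^{n-t} W_j A_j and, for an integer v ≥ 1, τ^w = min{ t ∈ {0,...,n-1} : Σ_{j=1}^{n-t} W_j (1 - A_j) < v or t = n - 1 }. Then M_{τ^w}^w is stochastically dominated by NB(v, p*): ℙ(M_{τ^w}^w ≥ k) ≤ ℙ(N ≥ k) for all integers k ≥ 0, where N ~ NB(v, p*). -/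
open MeasureTheory Set
set_option linter.unusedSectionVars false
set_option maxHeartbeats 1000000

namespace NBAux

/-- the "suffix event": some suffix of `w` has at least `k` trues and fewer than `v` falses. -/
def NBSuf (k v : ℕ) (w : List Bool) : Prop :=
  ∃ t, t <:+ w ∧ k ≤ t.count true ∧ t.count false < v

instance (k v : ℕ) (w : List Bool) : Decidable (NBSuf k v w) :=
  decidable_of_iff (∃ t ∈ w.tails, k ≤ t.count true ∧ t.count false < v)
    (by simp [NBSuf, List.mem_tails])

lemma nbsuf_k_zero {v : ℕ} (hv : 1 ≤ v) (w : List Bool) : NBSuf 0 v w :=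
  ⟨[], List.nil_suffix, by simp, by simpa using (show 0 < v by omega)⟩

lemma not_nbsuf_v_zero (k : ℕ) (w : List Bool) : ¬ NBSuf k 0 w := by
  rintro ⟨t, -, -, h⟩; omega

lemma suffix_append_singleton {t w : List Bool} {a : Bool} :
    t <:+ w ++ [a] ↔ t = [] ∨ ∃ s, s <:+ w ∧ t = s ++ [a] := by
  rw [List.suffix_concat_iff]
  constructor
  · rintro (rfl | ⟨s, rfl, hs⟩); exacts [Or.inl rfl, Or.inr ⟨s, hs, rfl⟩]
  · rintro (rfl | ⟨s, hs, rfl⟩); exacts [Or.inl rfl, Or.inr ⟨s, rfl, hs⟩]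

lemma suffix_append_iff {t x c : List Bool} :
    t <:+ x ++ c ↔ t <:+ c ∨ ∃ s, s <:+ x ∧ t = s ++ c := by
  constructor
  · intro h
    rcases List.suffix_or_suffix_of_suffix h (List.suffix_append x c) with h1 | h1
    · exact Or.inl h1
    · obtain ⟨s, rfl⟩ := h1
      obtain ⟨u, hu⟩ := h
      rw [← List.append_assoc] at hu
      exact Or.inr ⟨s, ⟨u, List.append_cancel_right hu⟩, rfl⟩
  · rintro (h | ⟨s, ⟨u, rfl⟩, rfl⟩)
    · exact h.trans ⟨x, rfl⟩
    · exact ⟨u, by simp⟩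

lemma nbsuf_append_true {k : ℕ} (hk : 1 ≤ k) (v : ℕ) (w : List Bool) :
    NBSuf k v (w ++ [true]) ↔ NBSuf (k - 1) v w := by
  constructor
  · rintro ⟨t, ht, h1, h2⟩
    rcases suffix_append_singleton.mp ht with rfl | ⟨s, hs, rfl⟩
    · simp at h1; omega
    · refine ⟨s, hs, ?_, ?_⟩ <;> simp [List.count_append] at h1 h2 ⊢ <;> omega
  · rintro ⟨t, ht, h1, h2⟩
    refine ⟨t ++ [true], suffix_append_singleton.mpr (Or.inr ⟨t, ht, rfl⟩), ?_, ?_⟩ <;>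
      simp [List.count_append] <;> omega

lemma nbsuf_append_false {k : ℕ} (hk : 1 ≤ k) (v : ℕ) (w : List Bool) :
    NBSuf k v (w ++ [false]) ↔ NBSuf k (v - 1) w := by
  constructor
  · rintro ⟨t, ht, h1, h2⟩
    rcases suffix_append_singleton.mp ht with rfl | ⟨s, hs, rfl⟩
    · simp at h1; omega
    · refine ⟨s, hs, ?_, ?_⟩ <;> simp [List.count_append] at h1 h2 ⊢ <;> omega
  · rintro ⟨t, ht, h1, h2⟩
    refine ⟨t ++ [false], suffix_append_singleton.mpr (Or.inr ⟨t, ht, rfl⟩), ?_, ?_⟩ <;>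
      simp [List.count_append] <;> omega

/-- flipping a `false` to a `true` preserves the suffix event. -/
lemma nbsuf_flip {k v : ℕ} {x c : List Bool} (h : NBSuf k v (x ++ [false] ++ c)) :
    NBSuf k v (x ++ [true] ++ c) := by
  obtain ⟨t, ht, h1, h2⟩ := h
  rw [List.append_assoc] at ht
  rcases suffix_append_iff.mp ht with hc | ⟨s, hs, rfl⟩
  · rcases List.suffix_cons_iff.mp hc with rfl | hc'
    · refine ⟨true :: c, ⟨x, by simp⟩, ?_, ?_⟩ <;> simp at h1 h2 ⊢ <;> omega
    · exact ⟨t, hc'.trans ⟨x ++ [true], by simp⟩, h1, h2⟩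
  · obtain ⟨u, rfl⟩ := hs
    refine ⟨s ++ ([true] ++ c), ⟨u, by simp⟩, ?_, ?_⟩ <;>
      simp [List.count_append] at h1 h2 ⊢ <;> omega


/-- value function: probability that the suffix event holds after appending `f` more
i.i.d. Bernoulli(p) outcomes to `w`. -/
def nbVal (p : ℝ) (k v : ℕ) (w : List Bool) : ℕ → ℝ
  | 0 => if NBSuf k v w then 1 else 0
  | (f + 1) => p * nbVal p k v (w ++ [true]) f + (1 - p) * nbVal p k v (w ++ [false]) f

section Val
variable {p : ℝ} (hp0 : 0 < p) (hp1 : p < 1)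
include hp0 hp1

lemma nbVal_nonneg (k v : ℕ) (w : List Bool) (f : ℕ) : 0 ≤ nbVal p k v w f := by
  induction f generalizing w with
  | zero => simp only [nbVal]; split <;> norm_num
  | succ f ih =>
    simp only [nbVal]
    nlinarith [ih (w ++ [true]), ih (w ++ [false])]

lemma nbVal_le_one (k v : ℕ) (w : List Bool) (f : ℕ) : nbVal p k v w f ≤ 1 := by
  induction f generalizing w with
  | zero => simp only [nbVal]; split <;> norm_num
  | succ f ih =>
    simp only [nbVal]
    nlinarith [ih (w ++ [true]), ih (w ++ [false]), nbVal_nonneg hp0 hp1 k v (w ++ [true]) f,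
      nbVal_nonneg hp0 hp1 k v (w ++ [false]) f]

omit hp0 hp1 in
lemma nbVal_k_zero {v : ℕ} (hv : 1 ≤ v) (w : List Bool) (f : ℕ) : nbVal p 0 v w f = 1 := by
  induction f generalizing w with
  | zero => simp only [nbVal, if_pos (nbsuf_k_zero hv w)]
  | succ f ih => simp only [nbVal, ih]; ring

omit hp0 hp1 in
lemma nbVal_v_zero (k : ℕ) (w : List Bool) (f : ℕ) : nbVal p k 0 w f = 0 := by
  induction f generalizing w with
  | zero => simp only [nbVal, if_neg (not_nbsuf_v_zero k w)]
  | succ f ih => simp only [nbVal, ih]; ring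

lemma nbVal_mono_of_rel {k v : ℕ} {x y : List Bool}
    (h : ∀ c, NBSuf k v (x ++ c) → NBSuf k v (y ++ c)) (f : ℕ) :
    nbVal p k v x f ≤ nbVal p k v y f := by
  induction f generalizing x y with
  | zero =>
    simp only [nbVal]
    have := h []
    simp only [List.append_nil] at this
    split
    · rw [if_pos (by tauto)]
    · split <;> norm_num
  | succ f ih =>
    simp only [nbVal]
    have h1 : nbVal p k v (x ++ [true]) f ≤ nbVal p k v (y ++ [true]) f :=
      ih fun c hc => by
        have := h ([true] ++ c) (by simpa [List.append_assoc] using hc)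
        simpa [List.append_assoc] using this
    have h2 : nbVal p k v (x ++ [false]) f ≤ nbVal p k v (y ++ [false]) f :=
      ih fun c hc => by
        have := h ([false] ++ c) (by simpa [List.append_assoc] using hc)
        simpa [List.append_assoc] using this
    nlinarith

lemma nbVal_false_le_true (k v : ℕ) (w : List Bool) (f : ℕ) :
    nbVal p k v (w ++ [false]) f ≤ nbVal p k v (w ++ [true]) f :=
  nbVal_mono_of_rel hp0 hp1
    (fun c hc => by
      have := nbsuf_flip (x := w) (c := c) (by simpa [List.append_assoc] using hc)
      simpa [List.append_assoc] using this) f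

omit hp0 hp1 in
/-- peeling the final (deepest) appended outcome instead of the first one. -/
lemma nbVal_peel {k v : ℕ} (hk : 1 ≤ k) (w : List Bool) (f : ℕ) :
    nbVal p k v w (f + 1)
      = p * nbVal p (k - 1) v w f + (1 - p) * nbVal p k (v - 1) w f := by
  induction f generalizing w with
  | zero =>
    simp only [nbVal, if_congr (nbsuf_append_true hk v w) rfl rfl,
      if_congr (nbsuf_append_false hk v w) rfl rfl]
  | succ f ih =>
    have e1 : nbVal p k v w (f + 1 + 1)
        = p * nbVal p k v (w ++ [true]) (f + 1) + (1 - p) * nbVal p k v (w ++ [false]) (f + 1) :=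
      rfl
    rw [e1, ih (w ++ [true]), ih (w ++ [false])]
    have e2 : nbVal p (k-1) v w (f + 1)
        = p * nbVal p (k-1) v (w ++ [true]) f + (1 - p) * nbVal p (k-1) v (w ++ [false]) f := rfl
    have e3 : nbVal p k (v-1) w (f + 1)
        = p * nbVal p k (v-1) (w ++ [true]) f + (1 - p) * nbVal p k (v-1) (w ++ [false]) f := rfl
    rw [e2, e3]; ring

end Val

/-- tail of the negative binomial distribution: `P(NB(v, p) ≥ k)`. -/
noncomputable def nbT (p : ℝ) (k v : ℕ) : ℝ :=
  ∑' i : ℕ, ((v + (k + i) - 1).choose (k + i) : ℝ) * p ^ (k + i) * (1 - p) ^ v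

section T
variable {p : ℝ} (hp0 : 0 < p) (hp1 : p < 1)
include hp0 hp1

lemma summable_nbT (k v : ℕ) :
    Summable (fun i : ℕ => ((v + (k + i) - 1).choose (k + i) : ℝ) * p ^ (k + i) * (1 - p) ^ v) := by
  have hpn : ‖p‖ < 1 := by rw [Real.norm_eq_abs, abs_of_pos hp0]; exact hp1
  rcases Nat.eq_zero_or_pos v with rfl | hv
  · rcases Nat.eq_zero_or_pos k with rfl | hk
    · apply summable_of_ne_finset_zero (s := {0})
      intro i hi
      have hi' : 1 ≤ i := by simpa [Nat.one_le_iff_ne_zero] using hi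
      have h1 : (0 + (0 + i) - 1).choose (0 + i) = 0 :=
        Nat.choose_eq_zero_of_lt (by omega)
      rw [h1]; simp
    · apply Summable.congr summable_zero
      intro i
      have h1 : (0 + (k + i) - 1).choose (k + i) = 0 := Nat.choose_eq_zero_of_lt (by omega)
      rw [eq_comm, h1]; simp
  · have h : Summable (fun N : ℕ => ((N + (v-1)).choose (v-1) : ℝ) * p ^ N) :=
      summable_choose_mul_geometric_of_norm_lt_one (v-1) hpn
    have h2 : Summable (fun i : ℕ => ((k + i + (v-1)).choose (v-1) : ℝ) * p ^ (k + i)) := by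
      have := (summable_nat_add_iff (f := fun N : ℕ => ((N + (v-1)).choose (v-1) : ℝ) * p ^ N) k).mpr h
      simpa [add_comm] using this
    apply (h2.mul_right ((1 - p) ^ v)).congr
    intro i
    have he : v + (k + i) - 1 = (k + i) + (v - 1) := by omega
    rw [he, Nat.choose_symm_add]

lemma nbT_nonneg (k v : ℕ) : 0 ≤ nbT p k v := by
  apply tsum_nonneg
  intro i
  have h1 : (0:ℝ) ≤ 1 - p := by linarith
  positivity

lemma nbT_v_zero {k : ℕ} (hk : 1 ≤ k) : nbT p k 0 = 0 := by
  unfold nbT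
  have he : ∀ i : ℕ, ((0 + (k + i) - 1).choose (k + i) : ℝ) * p ^ (k + i) * (1 - p) ^ 0
      = 0 := by
    intro i
    have h1 : (0 + (k + i) - 1).choose (k + i) = 0 := Nat.choose_eq_zero_of_lt (by omega)
    rw [h1]; simp
  rw [tsum_congr he, tsum_zero]

lemma nbT_k_zero {v : ℕ} (hv : 1 ≤ v) : nbT p 0 v = 1 := by
  have hpn : ‖p‖ < 1 := by rw [Real.norm_eq_abs, abs_of_pos hp0]; exact hp1
  have h1p : (1:ℝ) - p ≠ 0 := by linarith
  unfold nbT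
  have he : ∀ i : ℕ, ((v + (0 + i) - 1).choose (0 + i) : ℝ) * p ^ (0 + i) * (1 - p) ^ v
      = ((i + (v-1)).choose (v-1) : ℝ) * p ^ i * (1 - p) ^ v := by
    intro i
    have h2 : v + (0 + i) - 1 = i + (v - 1) := by omega
    rw [h2, Nat.zero_add, Nat.choose_symm_add, Nat.add_comm i (v-1), Nat.choose_symm_add]
  rw [tsum_congr he]
  have := tsum_choose_mul_geometric_of_norm_lt_one (𝕜 := ℝ) (v-1) hpn
  rw [tsum_mul_right, this]
  have hv' : v - 1 + 1 = v := by omega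
  rw [hv']
  field_simp

lemma nbT_v_one (k : ℕ) : nbT p k 1 = p ^ k := by
  have hpn : p < 1 := hp1
  have h1p : (1:ℝ) - p ≠ 0 := by linarith
  unfold nbT
  have he : ∀ i : ℕ, ((1 + (k + i) - 1).choose (k + i) : ℝ) * p ^ (k + i) * (1 - p) ^ 1
      = p ^ i * (p ^ k * (1 - p)) := by
    intro i
    have h2 : 1 + (k + i) - 1 = k + i := by omega
    rw [h2, Nat.choose_self]
    rw [pow_add]
    push_cast
    ring
  rw [tsum_congr he, tsum_mul_right, tsum_geometric_of_lt_one (le_of_lt hp0) hp1]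
  field_simp

lemma nbT_rec {k v : ℕ} (hk : 1 ≤ k) (hv : 1 ≤ v) :
    nbT p k v = p * nbT p (k - 1) v + (1 - p) * nbT p k (v - 1) := by
  rcases eq_or_lt_of_le hv with hv1 | hv2
  · -- v = 1
    rw [← hv1]
    rw [nbT_v_one hp0 hp1, nbT_v_one hp0 hp1]
    simp only [Nat.sub_self]
    rw [nbT_v_zero hp0 hp1 hk]
    rw [← pow_succ']
    have : k - 1 + 1 = k := by omega
    rw [this]; ring
  · -- v ≥ 2
    have hb : Summable (fun i : ℕ =>
        p * (((v + (k - 1 + i) - 1).choose (k - 1 + i) : ℝ) * p ^ (k - 1 + i) * (1 - p) ^ v)) :=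
      (summable_nbT hp0 hp1 (k-1) v).mul_left p
    have hc : Summable (fun i : ℕ =>
        (1 - p) * ((((v-1) + (k + i) - 1).choose (k + i) : ℝ) * p ^ (k + i) * (1 - p) ^ (v-1))) :=
      (summable_nbT hp0 hp1 k (v-1)).mul_left (1 - p)
    have he : ∀ i : ℕ, ((v + (k + i) - 1).choose (k + i) : ℝ) * p ^ (k + i) * (1 - p) ^ v
        = p * (((v + (k - 1 + i) - 1).choose (k - 1 + i) : ℝ) * p ^ (k - 1 + i) * (1 - p) ^ v)
          + (1 - p) * ((((v-1) + (k + i) - 1).choose (k + i) : ℝ) * p ^ (k + i) * (1 - p) ^ (v-1)) := by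
      intro i
      have e1 : v + (k + i) - 1 = ((k - 1 + i) + (v - 2)) + 1 + 1 := by omega
      have e2 : k + i = (k - 1 + i) + 1 := by omega
      have e3 : v + (k - 1 + i) - 1 = (k - 1 + i) + (v - 2) + 1 := by omega
      have e4 : (v - 1) + (k + i) - 1 = (k - 1 + i) + (v - 2) + 1 := by omega
      have pascal : ((k - 1 + i) + (v - 2) + 1 + 1).choose ((k - 1 + i) + 1)
          = ((k - 1 + i) + (v - 2) + 1).choose (k - 1 + i)
            + ((k - 1 + i) + (v - 2) + 1).choose ((k - 1 + i) + 1) :=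
        Nat.choose_succ_succ' _ _
      rw [e1, e3, e4, e2, pascal]
      have e6 : (1 - p) ^ v = (1 - p) ^ (v - 1) * (1 - p) := by
        rw [← pow_succ]
        congr 1
        omega
      push_cast
      rw [add_mul, add_mul, pow_succ p (k - 1 + i), e6]
      ring
    calc nbT p k v = ∑' i : ℕ,
        (p * (((v + (k - 1 + i) - 1).choose (k - 1 + i) : ℝ) * p ^ (k - 1 + i) * (1 - p) ^ v)
          + (1 - p) * ((((v-1) + (k + i) - 1).choose (k + i) : ℝ) * p ^ (k + i) * (1 - p) ^ (v-1))) := by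
          unfold nbT; exact tsum_congr he
      _ = p * nbT p (k - 1) v + (1 - p) * nbT p k (v - 1) := by
          rw [Summable.tsum_add hb hc]
          unfold nbT
          rw [tsum_mul_left, tsum_mul_left]

lemma nbVal_nil_le_nbT (m k v : ℕ) : nbVal p k v [] m ≤ nbT p k v := by
  induction m generalizing k v with
  | zero =>
    simp only [nbVal]
    split
    · rename_i h
      obtain ⟨t, ht, h1, h2⟩ := h
      rw [List.suffix_nil] at ht
      subst ht
      simp at h1 h2
      subst h1
      rw [nbT_k_zero hp0 hp1 h2]
    · exact nbT_nonneg hp0 hp1 k v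
  | succ m ih =>
    rcases Nat.eq_zero_or_pos k with rfl | hk
    · rcases Nat.eq_zero_or_pos v with rfl | hv
      · rw [nbVal_v_zero]; exact nbT_nonneg hp0 hp1 0 0
      · rw [nbVal_k_zero hv, nbT_k_zero hp0 hp1 hv]
    · rcases Nat.eq_zero_or_pos v with rfl | hv
      · rw [nbVal_v_zero, nbT_v_zero hp0 hp1 hk]
      · rw [nbVal_peel hk, nbT_rec hp0 hp1 hk hv]
        have i1 := ih (k-1) v
        have i2 := ih k (v-1)
        nlinarith

end T

variable {Ω : Type*} [MeasurableSpace Ω]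

/-- the outcome-record of a single index. -/
def pc {n : ℕ} (A W : Fin n → Ω → ℕ) (j : Fin n) (ω : Ω) : List Bool :=
  if W j ω = 1 then [decide (A j ω = 1)] else []

/-- the word of outcomes at weighted positions among the top `d` indices,
in decreasing order of index. -/
def wordD (n : ℕ) (A W : Fin n → Ω → ℕ) : ℕ → Ω → List Bool
  | 0, _ => []
  | (d+1), ω =>
    wordD n A W d ω ++ (if h : d < n then pc A W ⟨n - d - 1, by omega⟩ ω else [])

/-- the word of outcomes at weighted positions among the bottom `b` indices,
in decreasing order of index. -/
def wordR (n : ℕ) (A W : Fin n → Ω → ℕ) : ℕ → Ω → List Bool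
  | 0, _ => []
  | (b+1), ω =>
    (if h : b < n then pc A W ⟨b, h⟩ ω else []) ++ wordR n A W b ω

lemma wordD_succ {n : ℕ} (A W : Fin n → Ω → ℕ) {d : ℕ} (hd : d < n) (j : Fin n)
    (hj : (j : ℕ) = n - d - 1) (ω : Ω) :
    wordD n A W (d+1) ω = wordD n A W d ω ++ pc A W j ω := by
  have hjj : (⟨n - d - 1, by omega⟩ : Fin n) = j := by
    apply Fin.ext
    simp only [Fin.val_mk]
    omega
  simp only [wordD, dif_pos hd, hjj]

lemma pc_cases {n : ℕ} (A W : Fin n → Ω → ℕ)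
    (hA01 : ∀ j ω, A j ω = 0 ∨ A j ω = 1) (hW01 : ∀ j ω, W j ω = 0 ∨ W j ω = 1)
    (j : Fin n) (ω : Ω) :
    pc A W j ω = [] ∧ W j ω = 0
      ∨ pc A W j ω = [true] ∧ W j ω = 1 ∧ A j ω = 1
      ∨ pc A W j ω = [false] ∧ W j ω = 1 ∧ A j ω = 0 := by
  unfold pc
  rcases hW01 j ω with h0 | h1
  · left; rw [if_neg (by omega)]; exact ⟨rfl, h0⟩
  · rcases hA01 j ω with a0 | a1
    · right; right; rw [if_pos h1]; refine ⟨?_, h1, a0⟩; simp [a0]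
    · right; left; rw [if_pos h1]; refine ⟨?_, h1, a1⟩; simp [a1]

lemma pc_length {n : ℕ} (A W : Fin n → Ω → ℕ)
    (hW01 : ∀ j ω, W j ω = 0 ∨ W j ω = 1) (j : Fin n) (ω : Ω) :
    (pc A W j ω).length = W j ω := by
  unfold pc
  rcases hW01 j ω with h0 | h1
  · rw [if_neg (by omega), h0]; rfl
  · rw [if_pos h1, h1]; rfl

lemma wordD_length {n : ℕ} (A W : Fin n → Ω → ℕ)
    (hW01 : ∀ j ω, W j ω = 0 ∨ W j ω = 1) :
    ∀ d, d ≤ n → ∀ ω, (wordD n A W d ω).length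
      = ∑ l ∈ Finset.univ.filter (fun l : Fin n => n - d ≤ (l : ℕ)), W l ω := by
  intro d
  induction d with
  | zero =>
    intro _ ω
    have : Finset.univ.filter (fun l : Fin n => n - 0 ≤ (l : ℕ)) = ∅ := by
      apply Finset.filter_false_of_mem
      intro l _
      have := l.isLt
      omega
    simp only [wordD, List.length_nil]
    rw [this, Finset.sum_empty]
  | succ d ih =>
    intro hd ω
    have hdn : d < n := by omega
    set j : Fin n := ⟨n - d - 1, by omega⟩ with hjdef
    have hj : (j : ℕ) = n - d - 1 := rfl
    rw [wordD_succ A W hdn j hj ω, List.length_append, ih (by omega) ω,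
      pc_length A W hW01 j ω]
    have hins : Finset.univ.filter (fun l : Fin n => n - (d+1) ≤ (l : ℕ))
        = insert j (Finset.univ.filter (fun l : Fin n => n - d ≤ (l : ℕ))) := by
      ext l
      simp only [Finset.mem_filter, Finset.mem_insert, Finset.mem_univ, true_and]
      constructor
      · intro h
        rcases Nat.lt_or_ge (l : ℕ) (n - d) with h2 | h2
        · left; apply Fin.ext; omega
        · right; exact h2
      · rintro (rfl | h)
        · omega
        · omega
    rw [hins, Finset.sum_insert (by
      simp only [Finset.mem_filter, Finset.mem_univ, true_and, not_le, hjdef, Fin.val_mk]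
      omega)]
    ring

lemma wordR_count_true {n : ℕ} (A W : Fin n → Ω → ℕ)
    (hA01 : ∀ j ω, A j ω = 0 ∨ A j ω = 1) (hW01 : ∀ j ω, W j ω = 0 ∨ W j ω = 1) :
    ∀ b, b ≤ n → ∀ ω, (wordR n A W b ω).count true
      = ∑ l ∈ Finset.univ.filter (fun l : Fin n => (l : ℕ) < b), W l ω * A l ω := by
  intro b
  induction b with
  | zero => intro _ ω; simp [wordR]
  | succ b ih =>
    intro hb ω
    have hbn : b < n := by omega
    have hins : Finset.univ.filter (fun l : Fin n => (l : ℕ) < b + 1)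
        = insert (⟨b, hbn⟩ : Fin n) (Finset.univ.filter (fun l : Fin n => (l : ℕ) < b)) := by
      ext l
      simp only [Finset.mem_filter, Finset.mem_insert, Finset.mem_univ, true_and]
      constructor
      · intro h
        rcases Nat.lt_or_ge (l : ℕ) b with h2 | h2
        · right; exact h2
        · left; apply Fin.ext; simp; omega
      · rintro (rfl | h)
        · simp
        · omega
    rw [hins, Finset.sum_insert (by
      simp only [Finset.mem_filter, Finset.mem_univ, true_and, not_lt, Fin.val_mk]
      omega)]
    simp only [wordR, dif_pos hbn, List.count_append]
    rw [ih (by omega) ω]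
    rcases pc_cases A W hA01 hW01 ⟨b, hbn⟩ ω with ⟨hpc, hw⟩ | ⟨hpc, hw, ha⟩ | ⟨hpc, hw, ha⟩
    · rw [hpc, hw]; simp
    · rw [hpc, hw, ha]; simp
    · rw [hpc, hw, ha]; simp

lemma wordR_count_false {n : ℕ} (A W : Fin n → Ω → ℕ)
    (hA01 : ∀ j ω, A j ω = 0 ∨ A j ω = 1) (hW01 : ∀ j ω, W j ω = 0 ∨ W j ω = 1) :
    ∀ b, b ≤ n → ∀ ω, (wordR n A W b ω).count false
      = ∑ l ∈ Finset.univ.filter (fun l : Fin n => (l : ℕ) < b), W l ω * (1 - A l ω) := by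
  intro b
  induction b with
  | zero => intro _ ω; simp [wordR]
  | succ b ih =>
    intro hb ω
    have hbn : b < n := by omega
    have hins : Finset.univ.filter (fun l : Fin n => (l : ℕ) < b + 1)
        = insert (⟨b, hbn⟩ : Fin n) (Finset.univ.filter (fun l : Fin n => (l : ℕ) < b)) := by
      ext l
      simp only [Finset.mem_filter, Finset.mem_insert, Finset.mem_univ, true_and]
      constructor
      · intro h
        rcases Nat.lt_or_ge (l : ℕ) b with h2 | h2
        · right; exact h2
        · left; apply Fin.ext; simp; omega
      · rintro (rfl | h)
        · simp
        · omega
    rw [hins, Finset.sum_insert (by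
      simp only [Finset.mem_filter, Finset.mem_univ, true_and, not_lt, Fin.val_mk]
      omega)]
    simp only [wordR, dif_pos hbn, List.count_append]
    rw [ih (by omega) ω]
    rcases pc_cases A W hA01 hW01 ⟨b, hbn⟩ ω with ⟨hpc, hw⟩ | ⟨hpc, hw, ha⟩ | ⟨hpc, hw, ha⟩
    · rw [hpc, hw]; simp
    · rw [hpc, hw, ha]; simp
    · rw [hpc, hw, ha]; simp

/-- decomposition of the full word into top and bottom parts. -/
lemma wordD_split {n : ℕ} (A W : Fin n → Ω → ℕ) :
    ∀ b, b ≤ n → ∀ ω, wordD n A W n ω = wordD n A W (n - b) ω ++ wordR n A W b ω := by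
  intro b
  induction b with
  | zero => intro _ ω; simp [wordR]
  | succ b ih =>
    intro hb ω
    have hbn : b < n := by omega
    have h1 : n - b = (n - (b+1)) + 1 := by omega
    have h2 : wordD n A W (n - b) ω
        = wordD n A W (n - (b+1)) ω ++ pc A W ⟨b, hbn⟩ ω := by
      rw [h1]
      exact wordD_succ A W (by omega) ⟨b, hbn⟩ (by simp only [Fin.val_mk]; omega) ω
    rw [ih (by omega) ω, h2]
    simp only [wordR, dif_pos hbn, List.append_assoc]

lemma pc_nil_or_singleton {n : ℕ} (A W : Fin n → Ω → ℕ) (j : Fin n) (ω : Ω) :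
    pc A W j ω = [] ∨ ∃ x : Bool, pc A W j ω = [x] := by
  unfold pc
  split
  · exact Or.inr ⟨_, rfl⟩
  · exact Or.inl rfl

lemma measurableSet_pairSet {f g : Ω → ℕ} (hf : Measurable f) (hg : Measurable g)
    (s : Set (ℕ × ℕ)) : MeasurableSet {ω | (f ω, g ω) ∈ s} :=
  (hf.prodMk hg) (MeasurableSet.of_discrete)

lemma wordD_succ_preimage {n : ℕ} (A W : Fin n → Ω → ℕ) {d : ℕ} (hd : d < n) (j : Fin n)
    (hj : (j : ℕ) = n - d - 1) (w : List Bool) :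
    {ω | wordD n A W (d+1) ω = w}
      = ({ω | wordD n A W d ω = w} ∩ {ω | pc A W j ω = []})
        ∪ ⋃ (a : Bool), ⋃ (_ : w = w.dropLast ++ [a]),
            ({ω | wordD n A W d ω = w.dropLast} ∩ {ω | pc A W j ω = [a]}) := by
  ext ω
  simp only [Set.mem_setOf_eq, Set.mem_union, Set.mem_inter_iff, Set.mem_iUnion]
  rw [wordD_succ A W hd j hj ω]
  constructor
  · intro h
    rcases pc_nil_or_singleton A W j ω with hpc | ⟨x, hpc⟩
    · left
      rw [hpc, List.append_nil] at h
      exact ⟨h, hpc⟩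
    · right
      rw [hpc] at h
      refine ⟨x, ?_, ?_, hpc⟩
      · rw [← h, List.dropLast_concat]
      · rw [← h, List.dropLast_concat]
  · rintro (⟨h1, h2⟩ | ⟨a, hwa, h1, h2⟩)
    · rw [h1, h2, List.append_nil]
    · rw [h1, h2, ← hwa]

lemma wordD_measurableSet {n : ℕ} (A W : Fin n → Ω → ℕ)
    (hAm : ∀ j, Measurable (A j)) (hWm : ∀ j, Measurable (W j)) :
    ∀ d (w : List Bool), MeasurableSet {ω | wordD n A W d ω = w} := by
  intro d
  induction d with
  | zero =>
    intro w
    rcases eq_or_ne ([] : List Bool) w with h | h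
    · have : {ω : Ω | wordD n A W 0 ω = w} = Set.univ := by
        ext ω; simp [wordD, h]
      rw [this]; exact MeasurableSet.univ
    · have : {ω : Ω | wordD n A W 0 ω = w} = ∅ := by
        ext ω; simp [wordD]; exact h.symm
      rw [this]; exact MeasurableSet.empty
  | succ d ih =>
    intro w
    by_cases hd : d < n
    · rw [wordD_succ_preimage A W hd ⟨n - d - 1, by omega⟩ rfl w]
      have hpcmeas : ∀ x : List Bool,
          MeasurableSet {ω | pc A W (⟨n - d - 1, by omega⟩ : Fin n) ω = x} := by
        intro x
        exact measurableSet_pairSet (hAm _) (hWm _)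
          {q : ℕ × ℕ | (if q.2 = 1 then [decide (q.1 = 1)] else []) = x}
      exact ((ih w).inter (hpcmeas [])).union
        (MeasurableSet.iUnion fun a => MeasurableSet.iUnion fun _ =>
          (ih _).inter (hpcmeas [a]))
    · have : {ω : Ω | wordD n A W (d+1) ω = w} = {ω | wordD n A W d ω = w} := by
        ext ω
        simp only [Set.mem_setOf_eq, wordD, dif_neg hd, List.append_nil]
      rw [this]; exact ih w

lemma wordD_comap_measurableSet {n : ℕ} (A W : Fin n → Ω → ℕ) (j0 : Fin n) :
    ∀ d, (j0 : ℕ) < n - d → ∀ w : List Bool,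
      MeasurableSet[MeasurableSpace.comap
        (fun ω (k : {k : Fin n // j0 < k}) => (A k.val ω, W k.val ω)) inferInstance]
        {ω | wordD n A W d ω = w} := by
  intro d
  induction d with
  | zero =>
    intro _ w
    rcases eq_or_ne ([] : List Bool) w with h | h
    · have : {ω : Ω | wordD n A W 0 ω = w} = Set.univ := by
        ext ω; simp [wordD, h]
      rw [this]; exact ⟨Set.univ, MeasurableSet.univ, by simp⟩
    · have : {ω : Ω | wordD n A W 0 ω = w} = ∅ := by
        ext ω; simp [wordD]; exact h.symm
      rw [this]; exact ⟨∅, MeasurableSet.empty, by simp⟩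
  | succ d ih =>
    intro hj0 w
    have hd : d < n := by omega
    have hcomappc : ∀ x : List Bool,
        MeasurableSet[MeasurableSpace.comap
          (fun ω (k : {k : Fin n // j0 < k}) => (A k.val ω, W k.val ω)) inferInstance]
          {ω | pc A W (⟨n - d - 1, by omega⟩ : Fin n) ω = x} := by
      intro x
      have hl : j0 < (⟨n - d - 1, by omega⟩ : Fin n) := by
        rw [Fin.lt_def]
        simp only [Fin.val_mk]
        omega
      refine ⟨(fun g : {k : Fin n // j0 < k} → ℕ × ℕ => g ⟨⟨n - d - 1, by omega⟩, hl⟩) ⁻¹'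
          {q : ℕ × ℕ | (if q.2 = 1 then [decide (q.1 = 1)] else []) = x},
        (measurable_pi_apply _) MeasurableSet.of_discrete, rfl⟩
    rw [wordD_succ_preimage A W hd ⟨n - d - 1, by omega⟩ rfl w]
    exact ((ih (by omega) w).inter (hcomappc [])).union
      (MeasurableSet.iUnion fun a => MeasurableSet.iUnion fun _ =>
        (ih (by omega) _).inter (hcomappc [a]))


end NBAux

open MeasureTheory ProbabilityTheory Set

/-- As in the weighted setting, but where each `A_j`, conditionally on
`σ({A_k, W_k}_{k>j})` and `{W_j = 1}`, is Bernoulli with a (random, history-dependent)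
parameter that is a.s. at most `p*`; formalized as: for every future-measurable `S`,
`ℙ({A_j = 1} ∩ {W_j = 1} ∩ S) ≤ p* · ℙ({W_j = 1} ∩ S)`. Then the stopped sum
`M^w_{τ^w}` is still stochastically dominated by `NB(v, p*)`. -/
theorem weighted_stopped_sum_negBinomial_dominated_conservative
    {Ω : Type*} [MeasurableSpace Ω] (μ : Measure Ω) [IsProbabilityMeasure μ]
    (n v m : ℕ) (hn : 1 ≤ n) (hv : 1 ≤ v) (hm : m ≤ n)
    (pstar : ℝ) (hp : pstar ∈ Set.Ioo (0:ℝ) 1)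
    (A W : Fin n → Ω → ℕ) (hAm : ∀ j, Measurable (A j)) (hWm : ∀ j, Measurable (W j))
    (hA01 : ∀ j ω, A j ω = 0 ∨ A j ω = 1)
    (hW01 : ∀ j ω, W j ω = 0 ∨ W j ω = 1)
    (hWsum : ∀ᵐ ω ∂μ, ∑ j, W j ω = m)
    (hcond : ∀ j : Fin n, ∀ S : Set Ω,
      MeasurableSet[MeasurableSpace.comap
        (fun ω (k : {k : Fin n // j < k}) => (A k.val ω, W k.val ω)) inferInstance] S →
      μ ({ω | A j ω = 1} ∩ {ω | W j ω = 1} ∩ S)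
        ≤ ENNReal.ofReal pstar * μ ({ω | W j ω = 1} ∩ S))
    (M : ℕ → Ω → ℕ)
    (hM : ∀ t ω, M t ω =
      ∑ j ∈ Finset.univ.filter (fun j : Fin n => j.val < n - t), W j ω * A j ω)
    (τ : Ω → ℕ)
    (hτ : ∀ ω, τ ω = sInf {t : ℕ | t ≤ n - 1 ∧
      ((∑ j ∈ Finset.univ.filter (fun j : Fin n => j.val < n - t),
          W j ω * (1 - A j ω)) < v ∨ t = n - 1)}) :
    ∀ k : ℕ, μ {ω | k ≤ M (τ ω) ω}
      ≤ ENNReal.ofReal (∑' i : ℕ,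
          ((v + (k + i) - 1).choose (k + i) : ℝ) * pstar ^ (k + i) * (1 - pstar) ^ v) := by
  intro k
  obtain ⟨hp0, hp1⟩ := hp
  have hbad : μ {ω | ¬ (∑ j, W j ω = m)} = 0 := by
    have h := hWsum
    rw [MeasureTheory.ae_iff] at h
    exact h
  set cf : List Bool → ENNReal :=
    fun w => ENNReal.ofReal (NBAux.nbVal pstar k v w (m - w.length)) with hcf
  -- the main one-step inequality
  have key2 : ∀ d, d < n →
      (∑' w : List Bool, cf w * μ {ω | NBAux.wordD n A W (d+1) ω = w})
        ≤ ∑' w : List Bool, cf w * μ {ω | NBAux.wordD n A W d ω = w} := by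
    intro d hd
    set j : Fin n := ⟨n - d - 1, by omega⟩ with hjdef
    have hjval : (j : ℕ) = n - d - 1 := rfl
    have hSmeas : ∀ w, MeasurableSet {ω | NBAux.wordD n A W d ω = w} :=
      fun w => NBAux.wordD_measurableSet A W hAm hWm d w
    have hTmeas : ∀ w, MeasurableSet {ω | NBAux.wordD n A W (d+1) ω = w} :=
      fun w => NBAux.wordD_measurableSet A W hAm hWm (d+1) w
    have hsucc : ∀ ω, NBAux.wordD n A W (d+1) ω
        = NBAux.wordD n A W d ω ++ NBAux.pc A W j ω :=
      fun ω => NBAux.wordD_succ A W hd j hjval ω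
    have hpart : ∀ w' : List Bool, μ {ω | NBAux.wordD n A W (d+1) ω = w'}
        = ∑' w : List Bool, μ ({ω | NBAux.wordD n A W (d+1) ω = w'}
            ∩ {ω | NBAux.wordD n A W d ω = w}) := by
      intro w'
      have hU : {ω | NBAux.wordD n A W (d+1) ω = w'}
          = ⋃ w : List Bool, ({ω | NBAux.wordD n A W (d+1) ω = w'}
              ∩ {ω | NBAux.wordD n A W d ω = w}) := by
        ext ω
        simp only [Set.mem_iUnion, Set.mem_inter_iff, Set.mem_setOf_eq]
        exact ⟨fun h => ⟨NBAux.wordD n A W d ω, h, rfl⟩, fun ⟨w, h, _⟩ => h⟩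
      conv_lhs => rw [hU]
      refine measure_iUnion ?_ (fun w => (hTmeas w').inter (hSmeas w))
      intro w1 w2 hne
      rw [Function.onFun]
      refine Set.disjoint_left.mpr ?_
      rintro ω ⟨-, h1⟩ ⟨-, h2⟩
      exact hne (h1.symm.trans h2 : w1 = w2)
    have hinner : ∀ w : List Bool,
        (∑' w' : List Bool, cf w' * μ ({ω | NBAux.wordD n A W (d+1) ω = w'}
            ∩ {ω | NBAux.wordD n A W d ω = w}))
          ≤ cf w * μ {ω | NBAux.wordD n A W d ω = w} := by
      intro w
      have hzero : ∀ w' ∉ ({w, w ++ [true], w ++ [false]} : Finset (List Bool)),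
          cf w' * μ ({ω | NBAux.wordD n A W (d+1) ω = w'}
            ∩ {ω | NBAux.wordD n A W d ω = w}) = 0 := by
        intro w' hw'
        have hempty : {ω | NBAux.wordD n A W (d+1) ω = w'}
            ∩ {ω | NBAux.wordD n A W d ω = w} = ∅ := by
          ext ω
          simp only [Set.mem_inter_iff, Set.mem_setOf_eq, Set.mem_empty_iff_false, iff_false,
            not_and]
          intro h1 h2
          apply hw'
          rw [hsucc ω, h2] at h1
          simp only [Finset.mem_insert, Finset.mem_singleton]
          rcases NBAux.pc_cases A W hA01 hW01 j ω with ⟨hpc, -⟩ | ⟨hpc, -, -⟩ | ⟨hpc, -, -⟩ <;>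
            rw [hpc] at h1
          · left; rw [← h1, List.append_nil]
          · right; left; exact h1.symm
          · right; right; exact h1.symm
        rw [hempty, measure_empty, mul_zero]
      rw [tsum_eq_sum hzero]
      have hne0 : w ∉ ({w ++ [true], w ++ [false]} : Finset (List Bool)) := by
        simp only [Finset.mem_insert, Finset.mem_singleton]
        push_neg
        constructor <;> intro h <;> (have := congrArg List.length h; simp at this)
      have hne1 : (w ++ [true]) ∉ ({w ++ [false]} : Finset (List Bool)) := by
        simp only [Finset.mem_singleton]
        intro h
        have := List.append_cancel_left h
        simp at this
      rw [show ({w, w ++ [true], w ++ [false]} : Finset (List Bool))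
          = insert w (insert (w ++ [true]) {w ++ [false]}) from rfl,
        Finset.sum_insert hne0, Finset.sum_insert hne1, Finset.sum_singleton]
      -- identify the three intersections
      have eTw : {ω | NBAux.wordD n A W (d+1) ω = w} ∩ {ω | NBAux.wordD n A W d ω = w}
          = {ω | W j ω = 0} ∩ {ω | NBAux.wordD n A W d ω = w} := by
        ext ω
        simp only [Set.mem_inter_iff, Set.mem_setOf_eq]
        constructor
        · rintro ⟨h1, h2⟩
          rw [hsucc ω, h2] at h1
          refine ⟨?_, h2⟩
          rcases NBAux.pc_cases A W hA01 hW01 j ω with ⟨hpc, hw0⟩ | ⟨hpc, hw1, ha1⟩ | ⟨hpc, hw1, ha0⟩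
          · exact hw0
          · rw [hpc] at h1; exfalso; have := congrArg List.length h1; simp at this
          · rw [hpc] at h1; exfalso; have := congrArg List.length h1; simp at this
        · rintro ⟨h1, h2⟩
          refine ⟨?_, h2⟩
          rw [hsucc ω, h2]
          have : NBAux.pc A W j ω = [] := by
            unfold NBAux.pc
            rw [if_neg (by omega)]
          rw [this, List.append_nil]
      have eT1 : {ω | NBAux.wordD n A W (d+1) ω = w ++ [true]}
            ∩ {ω | NBAux.wordD n A W d ω = w}
          = {ω | A j ω = 1} ∩ {ω | W j ω = 1} ∩ {ω | NBAux.wordD n A W d ω = w} := by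
        ext ω
        simp only [Set.mem_inter_iff, Set.mem_setOf_eq]
        constructor
        · rintro ⟨h1, h2⟩
          rw [hsucc ω, h2] at h1
          rcases NBAux.pc_cases A W hA01 hW01 j ω with ⟨hpc, hw0⟩ | ⟨hpc, hw1, ha1⟩ | ⟨hpc, hw1, ha0⟩
          · rw [hpc] at h1; exfalso; have := congrArg List.length h1; simp at this
          · exact ⟨⟨ha1, hw1⟩, h2⟩
          · rw [hpc] at h1
            exfalso
            have := List.append_cancel_left h1
            simp at this
        · rintro ⟨⟨ha1, hw1⟩, h2⟩
          refine ⟨?_, h2⟩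
          rw [hsucc ω, h2]
          have : NBAux.pc A W j ω = [true] := by
            unfold NBAux.pc
            rw [if_pos hw1]
            simp [ha1]
          rw [this]
      have eT0 : {ω | NBAux.wordD n A W (d+1) ω = w ++ [false]}
            ∩ {ω | NBAux.wordD n A W d ω = w}
          = {ω | A j ω = 0} ∩ {ω | W j ω = 1} ∩ {ω | NBAux.wordD n A W d ω = w} := by
        ext ω
        simp only [Set.mem_inter_iff, Set.mem_setOf_eq]
        constructor
        · rintro ⟨h1, h2⟩
          rw [hsucc ω, h2] at h1
          rcases NBAux.pc_cases A W hA01 hW01 j ω with ⟨hpc, hw0⟩ | ⟨hpc, hw1, ha1⟩ | ⟨hpc, hw1, ha0⟩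
          · rw [hpc] at h1; exfalso; have := congrArg List.length h1; simp at this
          · rw [hpc] at h1
            exfalso
            have := List.append_cancel_left h1
            simp at this
          · exact ⟨⟨ha0, hw1⟩, h2⟩
        · rintro ⟨⟨ha0, hw1⟩, h2⟩
          refine ⟨?_, h2⟩
          rw [hsucc ω, h2]
          have : NBAux.pc A W j ω = [false] := by
            unfold NBAux.pc
            rw [if_pos hw1]
            simp [ha0]
          rw [this]
      rw [eTw, eT1, eT0]
      -- abbreviations for the pieces
      have mA1 : MeasurableSet {ω | A j ω = 1} := hAm j (measurableSet_singleton 1)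
      have mA0 : MeasurableSet {ω | A j ω = 0} := hAm j (measurableSet_singleton 0)
      have mW1 : MeasurableSet {ω | W j ω = 1} := hWm j (measurableSet_singleton 1)
      have mW0 : MeasurableSet {ω | W j ω = 0} := hWm j (measurableSet_singleton 0)
      have hμW : μ ({ω | W j ω = 1} ∩ {ω | NBAux.wordD n A W d ω = w})
          = μ ({ω | A j ω = 1} ∩ {ω | W j ω = 1} ∩ {ω | NBAux.wordD n A W d ω = w})
            + μ ({ω | A j ω = 0} ∩ {ω | W j ω = 1} ∩ {ω | NBAux.wordD n A W d ω = w}) := by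
        have hU : {ω | W j ω = 1} ∩ {ω | NBAux.wordD n A W d ω = w}
            = ({ω | A j ω = 1} ∩ {ω | W j ω = 1} ∩ {ω | NBAux.wordD n A W d ω = w})
              ∪ ({ω | A j ω = 0} ∩ {ω | W j ω = 1} ∩ {ω | NBAux.wordD n A W d ω = w}) := by
          ext ω
          simp only [Set.mem_inter_iff, Set.mem_setOf_eq, Set.mem_union]
          constructor
          · rintro ⟨hw1, h2⟩
            rcases hA01 j ω with h | h
            · exact Or.inr ⟨⟨h, hw1⟩, h2⟩
            · exact Or.inl ⟨⟨h, hw1⟩, h2⟩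
          · rintro (⟨⟨-, hw1⟩, h2⟩ | ⟨⟨-, hw1⟩, h2⟩) <;> exact ⟨hw1, h2⟩
        conv_lhs => rw [hU]
        refine measure_union ?_ ((mA0.inter mW1).inter (hSmeas w))
        refine Set.disjoint_left.mpr ?_
        rintro ω ⟨⟨ha1, -⟩, -⟩ ⟨⟨ha0, -⟩, -⟩
        simp only [Set.mem_setOf_eq] at ha1 ha0
        omega
      have hμS : μ {ω | NBAux.wordD n A W d ω = w}
          = μ ({ω | W j ω = 1} ∩ {ω | NBAux.wordD n A W d ω = w})
            + μ ({ω | W j ω = 0} ∩ {ω | NBAux.wordD n A W d ω = w}) := by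
        have hU : {ω | NBAux.wordD n A W d ω = w}
            = ({ω | W j ω = 1} ∩ {ω | NBAux.wordD n A W d ω = w})
              ∪ ({ω | W j ω = 0} ∩ {ω | NBAux.wordD n A W d ω = w}) := by
          ext ω
          simp only [Set.mem_inter_iff, Set.mem_setOf_eq, Set.mem_union]
          constructor
          · intro h2
            rcases hW01 j ω with h | h
            · exact Or.inr ⟨h, h2⟩
            · exact Or.inl ⟨h, h2⟩
          · rintro (⟨-, h2⟩ | ⟨-, h2⟩) <;> exact h2
        conv_lhs => rw [hU]
        refine measure_union ?_ (mW0.inter (hSmeas w))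
        refine Set.disjoint_left.mpr ?_
        rintro ω ⟨hw1, -⟩ ⟨hw0, -⟩
        simp only [Set.mem_setOf_eq] at hw1 hw0
        omega
      by_cases hlen : m ≤ w.length
      · -- too many weights revealed already: W j = 1 is impossible a.e.
        have hWnull : μ ({ω | W j ω = 1} ∩ {ω | NBAux.wordD n A W d ω = w}) = 0 := by
          refine measure_mono_null ?_ hbad
          rintro ω ⟨hw1, h2⟩
          simp only [Set.mem_setOf_eq]
          intro hsum
          have hLen := NBAux.wordD_length A W hW01 d (le_of_lt hd) ω
          rw [h2] at hLen
          have hjnot : j ∉ Finset.univ.filter (fun l : Fin n => n - d ≤ (l : ℕ)) := by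
            simp only [Finset.mem_filter, Finset.mem_univ, true_and, not_le, hjval]
            omega
          have hsub : insert j (Finset.univ.filter (fun l : Fin n => n - d ≤ (l : ℕ)))
              ⊆ Finset.univ := Finset.subset_univ _
          have hle := Finset.sum_le_sum_of_subset (f := fun l => W l ω) hsub
          rw [Finset.sum_insert hjnot, ← hLen, hw1, hsum] at hle
          omega
        have h1 : μ ({ω | A j ω = 1} ∩ {ω | W j ω = 1}
            ∩ {ω | NBAux.wordD n A W d ω = w}) = 0 := by
          refine measure_mono_null ?_ hWnull
          rintro ω ⟨⟨-, hw1⟩, hS⟩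
          exact ⟨hw1, hS⟩
        have h0 : μ ({ω | A j ω = 0} ∩ {ω | W j ω = 1}
            ∩ {ω | NBAux.wordD n A W d ω = w}) = 0 := by
          refine measure_mono_null ?_ hWnull
          rintro ω ⟨⟨-, hw1⟩, hS⟩
          exact ⟨hw1, hS⟩
        rw [h1, h0, mul_zero, mul_zero, add_zero, add_zero]
        exact mul_le_mul_right (measure_mono Set.inter_subset_right) _
      · -- the conditional Bernoulli bound
        push_neg at hlen
        have hcomap := NBAux.wordD_comap_measurableSet A W j d (by rw [hjval]; omega) w
        have hC := hcond j {ω | NBAux.wordD n A W d ω = w} hcomap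
        set a : ℝ := NBAux.nbVal pstar k v (w ++ [true]) (m - (w.length + 1)) with hadef
        set b : ℝ := NBAux.nbVal pstar k v (w ++ [false]) (m - (w.length + 1)) with hbdef
        have ha0 : 0 ≤ a := NBAux.nbVal_nonneg hp0 hp1 _ _ _ _
        have hb0 : 0 ≤ b := NBAux.nbVal_nonneg hp0 hp1 _ _ _ _
        have hba : b ≤ a := NBAux.nbVal_false_le_true hp0 hp1 k v w _
        have hfa : cf (w ++ [true]) = ENNReal.ofReal a := by
          simp only [hcf]
          have hl : (w ++ [true]).length = w.length + 1 := by simp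
          rw [hl]
        have hfb : cf (w ++ [false]) = ENNReal.ofReal b := by
          simp only [hcf]
          have hl : (w ++ [false]).length = w.length + 1 := by simp
          rw [hl]
        have hfw : cf w = ENNReal.ofReal (pstar * a + (1 - pstar) * b) := by
          simp only [hcf]
          have hfm : m - w.length = (m - (w.length + 1)) + 1 := by omega
          rw [hfm]
          rfl
        set x := μ ({ω | A j ω = 1} ∩ {ω | W j ω = 1} ∩ {ω | NBAux.wordD n A W d ω = w})
          with hxdef
        set y := μ ({ω | A j ω = 0} ∩ {ω | W j ω = 1} ∩ {ω | NBAux.wordD n A W d ω = w})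
          with hydef
        have hxt : x ≠ ⊤ := measure_ne_top μ _
        have hyt : y ≠ ⊤ := measure_ne_top μ _
        have hcR : x.toReal ≤ pstar * (x.toReal + y.toReal) := by
          rw [hμW] at hC
          have ht : ENNReal.ofReal pstar * (x + y) ≠ ⊤ :=
            ENNReal.mul_ne_top ENNReal.ofReal_ne_top (ENNReal.add_ne_top.mpr ⟨hxt, hyt⟩)
          have := ENNReal.toReal_mono ht hC
          rwa [ENNReal.toReal_mul, ENNReal.toReal_ofReal hp0.le,
            ENNReal.toReal_add hxt hyt] at this
        have hreal : a * x.toReal + b * y.toReal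
            ≤ (pstar * a + (1 - pstar) * b) * (x.toReal + y.toReal) := by
          nlinarith [mul_nonneg (sub_nonneg.mpr hba)
            (sub_nonneg.mpr hcR), ENNReal.toReal_nonneg (a := x), ENNReal.toReal_nonneg (a := y)]
        have core : cf (w ++ [true]) * x + cf (w ++ [false]) * y ≤ cf w * (x + y) := by
          rw [hfa, hfb, hfw]
          have hxR : x = ENNReal.ofReal x.toReal := (ENNReal.ofReal_toReal hxt).symm
          have hyR : y = ENNReal.ofReal y.toReal := (ENNReal.ofReal_toReal hyt).symm
          rw [hxR, hyR, ← ENNReal.ofReal_mul ha0, ← ENNReal.ofReal_mul hb0,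
            ← ENNReal.ofReal_add (mul_nonneg ha0 ENNReal.toReal_nonneg)
              (mul_nonneg hb0 ENNReal.toReal_nonneg),
            ← ENNReal.ofReal_add ENNReal.toReal_nonneg ENNReal.toReal_nonneg,
            ← ENNReal.ofReal_mul (by nlinarith)]
          exact ENNReal.ofReal_le_ofReal hreal
        calc cf w * μ ({ω | W j ω = 0} ∩ {ω | NBAux.wordD n A W d ω = w})
              + (cf (w ++ [true]) * x + cf (w ++ [false]) * y)
            ≤ cf w * μ ({ω | W j ω = 0} ∩ {ω | NBAux.wordD n A W d ω = w})
              + cf w * (x + y) := add_le_add_right core _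
          _ = cf w * μ {ω | NBAux.wordD n A W d ω = w} := by
              rw [hμS, hμW]
              ring
    calc (∑' w' : List Bool, cf w' * μ {ω | NBAux.wordD n A W (d+1) ω = w'})
        = ∑' w' : List Bool, ∑' w : List Bool,
            cf w' * μ ({ω | NBAux.wordD n A W (d+1) ω = w'}
              ∩ {ω | NBAux.wordD n A W d ω = w}) := by
          refine tsum_congr fun w' => ?_
          rw [hpart w', ENNReal.tsum_mul_left]
      _ = ∑' w : List Bool, ∑' w' : List Bool,
            cf w' * μ ({ω | NBAux.wordD n A W (d+1) ω = w'}
              ∩ {ω | NBAux.wordD n A W d ω = w}) := ENNReal.tsum_comm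
      _ ≤ ∑' w : List Bool, cf w * μ {ω | NBAux.wordD n A W d ω = w} :=
          ENNReal.tsum_le_tsum hinner
  
  -- iterating the one-step inequality
  have chain : ∀ d, d ≤ n →
      (∑' w : List Bool, cf w * μ {ω | NBAux.wordD n A W d ω = w})
        ≤ ∑' w : List Bool, cf w * μ {ω | NBAux.wordD n A W 0 ω = w} := by
    intro d
    induction d with
    | zero => intro _; exact le_rfl
    | succ d ih =>
      intro hd
      exact (key2 d (by omega)).trans (ih (by omega))
  -- the value of the potential at time 0
  have key3 : (∑' w : List Bool, cf w * μ {ω | NBAux.wordD n A W 0 ω = w})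
      = ENNReal.ofReal (NBAux.nbVal pstar k v ([] : List Bool) m) := by
    rw [tsum_eq_single ([] : List Bool) ?_]
    · have huniv : {ω : Ω | NBAux.wordD n A W 0 ω = ([] : List Bool)} = Set.univ := by
        ext ω
        simp only [Set.mem_setOf_eq, Set.mem_univ, iff_true]
        rfl
      rw [huniv, measure_univ, mul_one]
      simp [hcf]
    · intro w' hw'
      have hempty : {ω : Ω | NBAux.wordD n A W 0 ω = w'} = ∅ := by
        ext ω
        simp only [Set.mem_setOf_eq, Set.mem_empty_iff_false, iff_false]
        intro h
        exact hw' (h.symm ▸ rfl)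
      rw [hempty, measure_empty, mul_zero]
  -- bounding the stopped sum event by the potential at time n
  have key1 : μ {ω | k ≤ M (τ ω) ω}
      ≤ ∑' w : List Bool, cf w * μ {ω | NBAux.wordD n A W n ω = w} := by
    have hsub : {ω | k ≤ M (τ ω) ω}
        ⊆ ⋃ w : List Bool, ({ω | k ≤ M (τ ω) ω} ∩ {ω | NBAux.wordD n A W n ω = w}) := by
      intro ω h
      exact Set.mem_iUnion.mpr ⟨NBAux.wordD n A W n ω, h, rfl⟩
    refine (measure_mono hsub).trans ((measure_iUnion_le _).trans ?_)
    refine ENNReal.tsum_le_tsum fun w => ?_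
    by_cases hgood : NBAux.NBSuf k v w ∧ w.length = m
    · have hcw : cf w = 1 := by
        simp only [hcf]
        have h0 : m - w.length = 0 := by omega
        rw [h0]
        have : NBAux.nbVal pstar k v w 0 = 1 := by
          simp only [NBAux.nbVal, if_pos hgood.1]
        rw [this, ENNReal.ofReal_one]
      rw [hcw, one_mul]
      exact measure_mono Set.inter_subset_right
    · have hnull : μ ({ω | k ≤ M (τ ω) ω} ∩ {ω | NBAux.wordD n A W n ω = w}) = 0 := by
        refine measure_mono_null ?_ hbad
        rintro ω ⟨hE, hS⟩
        simp only [Set.mem_setOf_eq] at hE hS ⊢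
        intro hsum
        apply hgood
        -- first, the length of the full word is m
        have hfull : Finset.univ.filter (fun l : Fin n => n - n ≤ (l : ℕ)) = Finset.univ := by
          apply Finset.filter_true_of_mem
          intro l _
          omega
        have hLen := NBAux.wordD_length A W hW01 n le_rfl ω
        rw [hS, hfull, hsum] at hLen
        refine ⟨?_, hLen⟩
        -- now the suffix event
        have hmem : τ ω ∈ {t : ℕ | t ≤ n - 1 ∧
            ((∑ j ∈ Finset.univ.filter (fun j : Fin n => j.val < n - t),
                W j ω * (1 - A j ω)) < v ∨ t = n - 1)} := by
          rw [hτ ω]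
          exact Nat.sInf_mem ⟨n - 1, le_rfl, Or.inr rfl⟩
        obtain ⟨ht1, ht2⟩ := hmem
        by_cases hF : (∑ j ∈ Finset.univ.filter (fun j : Fin n => j.val < n - τ ω),
            W j ω * (1 - A j ω)) < v
        · -- stopped with fewer than v failures: the bottom segment is a witness
          have hbn : n - τ ω ≤ n := Nat.sub_le _ _
          refine ⟨NBAux.wordR n A W (n - τ ω) ω, ?_, ?_, ?_⟩
          · exact ⟨NBAux.wordD n A W (n - (n - τ ω)) ω,
              by rw [← NBAux.wordD_split A W (n - τ ω) hbn ω, hS]⟩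
          · rw [NBAux.wordR_count_true A W hA01 hW01 (n - τ ω) hbn ω]
            rw [hM (τ ω) ω] at hE
            exact hE
          · rw [NBAux.wordR_count_false A W hA01 hW01 (n - τ ω) hbn ω]
            exact hF
        · -- the boundary case: forced stop at t = n-1 with at least v failures forces k = 0
          have htn1 : τ ω = n - 1 := by tauto
          have hn1 : n - τ ω = 1 := by omega
          have hfil1 : Finset.univ.filter (fun l : Fin n => (l : ℕ) < 1)
              = {(⟨0, by omega⟩ : Fin n)} := by
            ext l
            simp only [Finset.mem_filter, Finset.mem_univ, true_and, Finset.mem_singleton]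
            constructor
            · intro h
              apply Fin.ext
              simp only [Fin.val_mk]
              omega
            · rintro rfl
              simp
          rw [hn1] at hF
          push_neg at hF
          rw [hfil1, Finset.sum_singleton] at hF
          have hA0 : A (⟨0, by omega⟩ : Fin n) ω = 0 ∧ W (⟨0, by omega⟩ : Fin n) ω = 1 := by
            rcases hA01 ⟨0, by omega⟩ ω with h | h <;>
              rcases hW01 ⟨0, by omega⟩ ω with h' | h' <;>
              rw [h, h'] at hF <;> simp at hF <;> first
                | exact ⟨h, h'⟩
                | omega
          have hMz : M (τ ω) ω = 0 := by
            rw [hM (τ ω) ω, hn1, hfil1, Finset.sum_singleton, hA0.1, Nat.mul_zero]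
          rw [hMz] at hE
          have hk0 : k = 0 := by omega
          rw [hk0]
          exact NBAux.nbsuf_k_zero hv w
      rw [hnull]
      exact zero_le
  -- putting everything together
  refine key1.trans ((chain n le_rfl).trans ?_)
  rw [key3]
  refine ENNReal.ofReal_le_ofReal ?_
  have := NBAux.nbVal_nil_le_nbT hp0 hp1 m k v
  simpa [NBAux.nbT] using this
end
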